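/- arXiv:1606.08749 — 8 statements merged into one kernel-verified Lean document; each statement's English description precedes it below -/
import Mathlib

section
/- Let X be a Banach space and let Ω₁, Ω₂ be nonempty closed subsets of X such that ℝ⁺(Ω₁ − Ω₂) = X. Then for any numbers α, β ≥ 0 the set K_{α,β} := {(x*₁, x*₂) ∈ X* × X* : σ_{Ω₁}(x*₁) + σ_{Ω₂}(x*₂) ≤ α and ‖x*₁ + x*₂‖ ≤ β} is compact in the weak* topology of X* × X*. -/
open Pointwise

/-- Support function of a set, as an extended-real-valued function on the weak* dual. -/
noncomputable def suppW {X : Type*} [NormedAddCommGroup X] [NormedSpace ℝ X]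
    (Ω : Set X) (p : WeakDual ℝ X) : EReal :=
  ⨆ x ∈ Ω, (p x : EReal)

/-- `ℝ⁺(Ω) = {t • v : t > 0, v ∈ Ω}`. -/
def posSpan {X : Type*} [SMul ℝ X] (Ω : Set X) : Set X :=
  {x | ∃ t : ℝ, 0 < t ∧ ∃ v ∈ Ω, x = t • v}

lemma suppW_add_le_iff {X : Type*} [NormedAddCommGroup X] [NormedSpace ℝ X]
    (Ω₁ Ω₂ : Set X) (h1 : Ω₁.Nonempty) (h2 : Ω₂.Nonempty)
    (p₁ p₂ : WeakDual ℝ X) (α : ℝ) :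
    suppW Ω₁ p₁ + suppW Ω₂ p₂ ≤ (α : EReal) ↔
      ∀ x ∈ Ω₁, ∀ y ∈ Ω₂, p₁ x + p₂ y ≤ α := by
  constructor
  · intro h x hx y hy
    have hx' : (p₁ x : EReal) ≤ suppW Ω₁ p₁ := le_iSup₂ (f := fun x (_ : x ∈ Ω₁) => (p₁ x : EReal)) x hx
    have hy' : (p₂ y : EReal) ≤ suppW Ω₂ p₂ := le_iSup₂ (f := fun y (_ : y ∈ Ω₂) => (p₂ y : EReal)) y hy
    have := le_trans (add_le_add hx' hy') h
    rw [← EReal.coe_add] at this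
    exact_mod_cast this
  · intro h
    obtain ⟨x₀, hx₀⟩ := h1
    obtain ⟨y₀, hy₀⟩ := h2
    have hb : suppW Ω₂ p₂ ≤ ((α - p₁ x₀ : ℝ) : EReal) := by
      refine iSup₂_le fun y hy => ?_
      exact_mod_cast (by linarith [h x₀ hx₀ y hy] : p₂ y ≤ α - p₁ x₀)
    have hbbot : suppW Ω₂ p₂ ≠ ⊥ := by
      refine ne_bot_of_le_ne_bot (EReal.coe_ne_bot (p₂ y₀)) ?_
      exact le_iSup₂ (f := fun y (_ : y ∈ Ω₂) => (p₂ y : EReal)) y₀ hy₀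
    have hbtop : suppW Ω₂ p₂ ≠ ⊤ := ne_top_of_le_ne_top (EReal.coe_ne_top _) hb
    set rb := (suppW Ω₂ p₂).toReal with hrb
    have hbeq : suppW Ω₂ p₂ = (rb : EReal) := (EReal.coe_toReal hbtop hbbot).symm
    have ha : suppW Ω₁ p₁ ≤ ((α - rb : ℝ) : EReal) := by
      refine iSup₂_le fun x hx => ?_
      have hb' : suppW Ω₂ p₂ ≤ ((α - p₁ x : ℝ) : EReal) := by
        refine iSup₂_le fun y hy => ?_
        exact_mod_cast (by linarith [h x hx y hy] : p₂ y ≤ α - p₁ x)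
      rw [hbeq] at hb'
      have : rb ≤ α - p₁ x := by exact_mod_cast hb'
      exact_mod_cast (by linarith : p₁ x ≤ α - rb)
    calc suppW Ω₁ p₁ + suppW Ω₂ p₂ ≤ ((α - rb : ℝ) : EReal) + (rb : EReal) :=
          add_le_add ha (by rw [hbeq])
      _ = (α : EReal) := by rw [← EReal.coe_add]; norm_num

/-- weak* compactness of the restricted level sets
`K_{α,β} = {(x₁*,x₂*) : σ_{Ω₁}(x₁*) + σ_{Ω₂}(x₂*) ≤ α, ‖x₁* + x₂*‖ ≤ β}` in a Banach
space `X` with nonempty closed `Ω₁, Ω₂` satisfying `ℝ⁺(Ω₁ - Ω₂) = X`. -/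
theorem weakStar_compact_support_level_sets
    {X : Type*} [NormedAddCommGroup X] [NormedSpace ℝ X] [CompleteSpace X]
    (Ω₁ Ω₂ : Set X) (h1 : Ω₁.Nonempty) (h2 : Ω₂.Nonempty)
    (hc1 : IsClosed Ω₁) (hc2 : IsClosed Ω₂)
    (hspan : posSpan (Ω₁ - Ω₂) = Set.univ)
    (α β : ℝ) (hα : 0 ≤ α) (hβ : 0 ≤ β) :
    IsCompact {p : WeakDual ℝ X × WeakDual ℝ X |
      suppW Ω₁ p.1 + suppW Ω₂ p.2 ≤ (α : EReal) ∧
      ‖WeakDual.toStrongDual p.1 + WeakDual.toStrongDual p.2‖ ≤ β} := by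
  set S := {p : WeakDual ℝ X × WeakDual ℝ X |
      suppW Ω₁ p.1 + suppW Ω₂ p.2 ≤ (α : EReal) ∧
      ‖WeakDual.toStrongDual p.1 + WeakDual.toStrongDual p.2‖ ≤ β} with hS
  -- S is closed in the weak* topology
  have hSclosed : IsClosed S := by
    have hSeq : S = (⋂ x ∈ Ω₁, ⋂ y ∈ Ω₂,
        {p : WeakDual ℝ X × WeakDual ℝ X | p.1 x + p.2 y ≤ α}) ∩
        ((fun p : WeakDual ℝ X × WeakDual ℝ X => p.1 + p.2) ⁻¹'
          (WeakDual.toStrongDual ⁻¹' Metric.closedBall 0 β)) := by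
      ext p
      simp only [hS, Set.mem_setOf_eq, Set.mem_inter_iff, Set.mem_iInter, Set.mem_preimage,
        mem_closedBall_zero_iff, suppW_add_le_iff Ω₁ Ω₂ h1 h2 p.1 p.2 α]
      rfl
    rw [hSeq]
    refine IsClosed.inter ?_ ?_
    · refine isClosed_biInter fun x hx => isClosed_biInter fun y hy => ?_
      exact isClosed_le (((WeakDual.eval_continuous x).comp continuous_fst).add
        ((WeakDual.eval_continuous y).comp continuous_snd)) continuous_const
    · exact (WeakDual.isClosed_closedBall 0 β).preimage
        ((continuous_fst.add continuous_snd))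
  -- pointwise bounds
  have hkey : ∀ p ∈ S, ∀ x ∈ Ω₁, ∀ y ∈ Ω₂, p.1 x + p.2 y ≤ α := by
    intro p hp
    exact (suppW_add_le_iff Ω₁ Ω₂ h1 h2 p.1 p.2 α).1 hp.1
  have hbnd : ∀ p ∈ S, ∀ t : ℝ, 0 < t → ∀ x ∈ Ω₁, ∀ y ∈ Ω₂,
      p.1 (t • (x - y)) ≤ t * (α + β * ‖y‖) := by
    intro p hp t ht x hx y hy
    have h1' : p.1 x + p.2 y ≤ α := hkey p hp x hx y hy
    have hnorm : ‖WeakDual.toStrongDual p.1 + WeakDual.toStrongDual p.2‖ ≤ β := hp.2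
    have habs : |p.1 y + p.2 y| ≤ β * ‖y‖ := by
      have := (WeakDual.toStrongDual p.1 + WeakDual.toStrongDual p.2).le_opNorm y
      have h2' : ‖(WeakDual.toStrongDual p.1 + WeakDual.toStrongDual p.2) y‖
          ≤ β * ‖y‖ := this.trans (mul_le_mul_of_nonneg_right hnorm (norm_nonneg y))
      simpa [Real.norm_eq_abs] using h2'
    have h3 : p.1 (x - y) ≤ α + β * ‖y‖ := by
      have := abs_le.1 habs
      have heq : p.1 (x - y) = p.1 x - p.1 y := map_sub p.1 x y
      linarith [this.1]
    calc p.1 (t • (x - y)) = t * p.1 (x - y) := by rw [map_smul]; rfl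
      _ ≤ t * (α + β * ‖y‖) := mul_le_mul_of_nonneg_left h3 ht.le
  -- uniform boundedness via Banach-Steinhaus
  have hpt : ∀ z : X, ∃ C : ℝ, ∀ i : S, ‖WeakDual.toStrongDual (i.val.1) z‖ ≤ C := by
    intro z
    have hz : z ∈ posSpan (Ω₁ - Ω₂) := hspan ▸ Set.mem_univ z
    have hz' : -z ∈ posSpan (Ω₁ - Ω₂) := hspan ▸ Set.mem_univ (-z)
    obtain ⟨t, ht, v, hv, rfl⟩ := hz
    obtain ⟨t', ht', v', hv', hzv'⟩ := hz'
    obtain ⟨x, hx, y, hy, rfl⟩ := hv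
    obtain ⟨x', hx', y', hy', rfl⟩ := hv'
    refine ⟨max (t * (α + β * ‖y‖)) (t' * (α + β * ‖y'‖)), fun i => ?_⟩
    have hub := hbnd i.val i.prop t ht x hx y hy
    have hlb := hbnd i.val i.prop t' ht' x' hx' y' hy'
    rw [← hzv'] at hlb
    have hlb' : -(i.val.1 (t • (x - y))) ≤ t' * (α + β * ‖y'‖) := by
      rw [← map_neg]; exact hlb
    have : |i.val.1 (t • (x - y))| ≤ max (t * (α + β * ‖y‖)) (t' * (α + β * ‖y'‖)) :=
      abs_le.2 ⟨by linarith [le_max_right (t * (α + β * ‖y‖)) (t' * (α + β * ‖y'‖))],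
        hub.trans (le_max_left _ _)⟩
    rw [Real.norm_eq_abs]; exact this
  obtain ⟨C, hC⟩ := banach_steinhaus (g := fun i : S => WeakDual.toStrongDual i.val.1) hpt
  have hCnn : ∀ p ∈ S, ‖WeakDual.toStrongDual p.1‖ ≤ C := fun p hp => hC ⟨p, hp⟩
  -- S sits inside a product of closed balls
  have hsub : S ⊆ (WeakDual.toStrongDual ⁻¹' Metric.closedBall 0 C) ×ˢ
      (WeakDual.toStrongDual ⁻¹' Metric.closedBall 0 (β + C)) := by
    intro p hp
    constructor
    · simpa [mem_closedBall_zero_iff] using hCnn p hp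
    · simp only [Set.mem_preimage, mem_closedBall_zero_iff]
      calc ‖WeakDual.toStrongDual p.2‖
          = ‖(WeakDual.toStrongDual p.1 + WeakDual.toStrongDual p.2)
              - WeakDual.toStrongDual p.1‖ := by rw [add_sub_cancel_left]
        _ ≤ ‖WeakDual.toStrongDual p.1 + WeakDual.toStrongDual p.2‖
              + ‖WeakDual.toStrongDual p.1‖ := norm_sub_le _ _
        _ ≤ β + C := add_le_add hp.2 (hCnn p hp)
  exact ((WeakDual.isCompact_closedBall (𝕜 := ℝ) (E := X) 0 C).prod
    (WeakDual.isCompact_closedBall (𝕜 := ℝ) (E := X) 0 (β + C))).of_isClosed_subset hSclosed hsub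
end

section
/- Let X be a separated locally convex topological vector space over the reals and let Ω₁, Ω₂ ⊂ X be nonempty convex sets. Then: (a) Ω₁ and Ω₂ form an extremal system in X if and only if 0 ∉ int(Ω₁ − Ω₂); (b) if Ω₁ and Ω₂ form an extremal system, then (int Ω₁) ∩ Ω₂ = ∅ and (int Ω₂) ∩ Ω₁ = ∅. -/
open Pointwise

/-- Two nonempty sets `Ω₁, Ω₂` form an extremal system: for every neighborhood `V` of the
origin there is `a ∈ V` with `(Ω₁ + a) ∩ Ω₂ = ∅`. -/
def ExtremalSystem {X : Type*} [AddCommGroup X] [TopologicalSpace X]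
    (Ω₁ Ω₂ : Set X) : Prop :=
  ∀ V ∈ nhds (0 : X), ∃ a ∈ V, ((fun w => w + a) '' Ω₁) ∩ Ω₂ = ∅

lemma extremal_aux {X : Type*} [AddCommGroup X] (Ω₁ Ω₂ : Set X) (a : X) :
    ((fun w => w + a) '' Ω₁) ∩ Ω₂ = ∅ ↔ a ∉ Ω₂ - Ω₁ := by
  rw [Set.eq_empty_iff_forall_notMem]
  constructor
  · rintro h ⟨y, hy, x, hx, rfl⟩
    exact h y ⟨⟨x, hx, show x + (y - x) = y by abel⟩, hy⟩
  · rintro h z ⟨⟨x, hx, rfl⟩, hz⟩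
    exact h ⟨x + a, hz, x, hx, show x + a - x = a by abel⟩

/-- in a separated LCTV space, for nonempty convex sets,
(a) `Ω₁, Ω₂` form an extremal system iff `0 ∉ int(Ω₁ - Ω₂)`;
(b) extremality implies `(int Ω₁) ∩ Ω₂ = ∅` and `(int Ω₂) ∩ Ω₁ = ∅`. -/
theorem extremalSystem_iff_and_interior_disjoint
    {X : Type*} [AddCommGroup X] [Module ℝ X] [TopologicalSpace X]
    [IsTopologicalAddGroup X] [ContinuousSMul ℝ X] [LocallyConvexSpace ℝ X] [T2Space X]
    (Ω₁ Ω₂ : Set X) (h1 : Ω₁.Nonempty) (h2 : Ω₂.Nonempty)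
    (hv1 : Convex ℝ Ω₁) (hv2 : Convex ℝ Ω₂) :
    (ExtremalSystem Ω₁ Ω₂ ↔ (0 : X) ∉ interior (Ω₁ - Ω₂)) ∧
    (ExtremalSystem Ω₁ Ω₂ → (interior Ω₁) ∩ Ω₂ = ∅ ∧ (interior Ω₂) ∩ Ω₁ = ∅) := by
  have key : ExtremalSystem Ω₁ Ω₂ ↔ Ω₂ - Ω₁ ∉ nhds (0 : X) := by
    constructor
    · intro h hmem
      obtain ⟨a, ha, hempty⟩ := h _ hmem
      exact (extremal_aux Ω₁ Ω₂ a).mp hempty ha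
    · intro h V hV
      by_contra hc
      push_neg at hc
      apply h
      apply Filter.mem_of_superset hV
      intro a ha
      by_contra hna
      exact (hc a ha).ne_empty ((extremal_aux Ω₁ Ω₂ a).mpr hna)
  have hneg : Ω₂ - Ω₁ = -(Ω₁ - Ω₂) := by
    ext x
    simp only [Set.mem_sub, Set.mem_neg]
    constructor
    · rintro ⟨y, hy, x', hx', rfl⟩
      exact ⟨x', hx', y, hy, by abel⟩
    · rintro ⟨x', hx', y, hy, h⟩
      exact ⟨y, hy, x', hx', by rw [← neg_eq_iff_eq_neg.mpr h]; abel⟩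
  have hiff : Ω₂ - Ω₁ ∈ nhds (0 : X) ↔ Ω₁ - Ω₂ ∈ nhds (0 : X) := by
    constructor
    · intro h
      have := neg_mem_nhds_zero X h
      rwa [hneg, neg_neg] at this
    · intro h
      rw [hneg]
      exact neg_mem_nhds_zero X h
  have key' : ExtremalSystem Ω₁ Ω₂ ↔ (0 : X) ∉ interior (Ω₁ - Ω₂) := by
    rw [key, mem_interior_iff_mem_nhds]
    exact not_congr hiff
  refine ⟨key', fun hE => ?_⟩
  have h0 : (0 : X) ∉ interior (Ω₁ - Ω₂) := key'.mp hE
  constructor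
  · rw [Set.eq_empty_iff_forall_notMem]
    rintro x ⟨hxi, hx2⟩
    apply h0
    have hopen : IsOpen ((fun w => w + (-x)) '' interior Ω₁) :=
      isOpenMap_add_right (-x) _ isOpen_interior
    apply interior_maximal ?_ hopen
    · exact ⟨x, hxi, by simp⟩
    · rintro z ⟨w, hw, rfl⟩
      exact ⟨w, interior_subset hw, x, hx2, by abel⟩
  · rw [Set.eq_empty_iff_forall_notMem]
    rintro x ⟨hxi, hx1⟩
    apply h0
    have hopen : IsOpen ((fun w => w + x) '' (Neg.neg '' interior Ω₂)) := by
      apply isOpenMap_add_right x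
      rw [Set.image_neg_eq_neg]
      exact isOpen_interior.neg
    apply interior_maximal ?_ hopen
    · exact ⟨-x, ⟨x, hxi, rfl⟩, by simp⟩
    · rintro z ⟨w, ⟨u, hu, rfl⟩, rfl⟩
      exact ⟨x, hx1, u, interior_subset hu, by abel⟩
end

section
/- Let X be a separated locally convex topological vector space over the reals and let Ω₁, Ω₂ ⊂ X be nonempty convex sets. If Ω₁ and Ω₂ form an extremal system in X and the set difference is solid, i.e., int(Ω₁ − Ω₂) ≠ ∅, then Ω₁ and Ω₂ are separated: there exists x* ∈ X*, x* ≠ 0, with sup{⟨x*,x⟩ : x ∈ Ω₁} ≤ inf{⟨x*,x⟩ : x ∈ Ω₂}. -/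
open Pointwise

/-- in a separated LCTV space, if nonempty convex sets `Ω₁, Ω₂` form an
extremal system and `int(Ω₁ - Ω₂) ≠ ∅`, then they can be separated by a nonzero continuous
linear functional: `sup_{Ω₁} x* ≤ inf_{Ω₂} x*`. -/
theorem extremalSystem_separation
    {X : Type*} [AddCommGroup X] [Module ℝ X] [TopologicalSpace X]
    [IsTopologicalAddGroup X] [ContinuousSMul ℝ X] [LocallyConvexSpace ℝ X] [T2Space X]
    (Ω₁ Ω₂ : Set X) (h1 : Ω₁.Nonempty) (h2 : Ω₂.Nonempty)
    (hv1 : Convex ℝ Ω₁) (hv2 : Convex ℝ Ω₂)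
    (hext : ExtremalSystem Ω₁ Ω₂)
    (hsolid : (interior (Ω₁ - Ω₂)).Nonempty) :
    ∃ f : X →L[ℝ] ℝ, f ≠ 0 ∧
      (⨆ x ∈ Ω₁, (f x : EReal)) ≤ ⨅ x ∈ Ω₂, (f x : EReal) := by
  set S := Ω₁ - Ω₂ with hS
  have hconv : Convex ℝ S := hv1.sub hv2
  -- 0 is not in the interior of S
  have h0 : (0 : X) ∉ interior S := by
    intro h0
    have hVopen : IsOpen (-(interior S)) := isOpen_interior.neg
    have hV : -(interior S) ∈ nhds (0 : X) := hVopen.mem_nhds (by simpa using h0)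
    obtain ⟨a, haV, hdisj⟩ := hext _ hV
    have : -a ∈ S := interior_subset (by simpa using haV)
    obtain ⟨x₁, hx₁, x₂, hx₂, hx⟩ := this
    have hx' : x₁ + a = x₂ := by
      have : x₁ - x₂ = -a := hx
      linear_combination (norm := abel) this
    have : x₂ ∈ ((fun w => w + a) '' Ω₁) ∩ Ω₂ :=
      ⟨⟨x₁, hx₁, hx'⟩, hx₂⟩
    rw [hdisj] at this
    exact this
  obtain ⟨f, hf⟩ := geometric_hahn_banach_open_point (hconv.interior) isOpen_interior h0
  obtain ⟨y, hy⟩ := hsolid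
  have hfy : f y < 0 := by simpa using hf y hy
  -- f ≤ 0 on S
  have hle : ∀ z ∈ S, f z ≤ 0 := by
    intro z hz
    have key : ∀ t : ℝ, t ∈ Set.Ioo (0:ℝ) 1 → f (t • y + (1 - t) • z) < 0 := by
      intro t ht
      have hmem : t • y + (1 - t) • z ∈ interior S := by
        apply hconv.openSegment_interior_self_subset_interior hy hz
        exact ⟨t, 1 - t, ht.1, by linarith [ht.2], by ring, rfl⟩
      simpa using hf _ hmem
    have hc : Continuous fun t : ℝ => f (t • y + (1 - t) • z) :=
      f.continuous.comp ((continuous_id.smul continuous_const).add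
        ((continuous_const.sub continuous_id).smul continuous_const))
    have hcont : Filter.Tendsto (fun t : ℝ => f (t • y + (1 - t) • z))
        (nhdsWithin 0 (Set.Ioi 0)) (nhds (f ((0:ℝ) • y + ((1:ℝ) - 0) • z))) :=
      (hc.tendsto 0).mono_left nhdsWithin_le_nhds
    have : f ((0:ℝ) • y + ((1:ℝ) - 0) • z) ≤ 0 := by
      refine le_of_tendsto hcont ?_
      filter_upwards [Ioo_mem_nhdsGT_of_mem (by norm_num : (0:ℝ) ∈ Set.Ico 0 1)] with t ht
      exact (key t ht).le
    simpa using this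
  refine ⟨f, fun h => by simp [h] at hfy, ?_⟩
  refine iSup₂_le fun x₁ hx₁ => le_iInf₂ fun x₂ hx₂ => ?_
  have : f (x₁ - x₂) ≤ 0 := hle _ ⟨x₁, hx₁, x₂, hx₂, rfl⟩
  rw [map_sub] at this
  exact_mod_cast (by linarith : f x₁ ≤ f x₂)
end

section
/- Let X be a separated locally convex topological vector space over the reals and let Ω₁, Ω₂ ⊂ X be nonempty convex sets. If there exists x* ∈ X*, x* ≠ 0, with sup{⟨x*,x⟩ : x ∈ Ω₁} ≤ inf{⟨x*,x⟩ : x ∈ Ω₂}, then Ω₁ and Ω₂ form an extremal system in X. -/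
open Pointwise

/-- in a separated LCTV space, if nonempty convex sets `Ω₁, Ω₂` are separated
by a nonzero continuous linear functional (`sup_{Ω₁} x* ≤ inf_{Ω₂} x*`), then they form an
extremal system. -/
theorem separation_implies_extremalSystem
    {X : Type*} [AddCommGroup X] [Module ℝ X] [TopologicalSpace X]
    [IsTopologicalAddGroup X] [ContinuousSMul ℝ X] [LocallyConvexSpace ℝ X] [T2Space X]
    (Ω₁ Ω₂ : Set X) (h1 : Ω₁.Nonempty) (h2 : Ω₂.Nonempty)
    (hv1 : Convex ℝ Ω₁) (hv2 : Convex ℝ Ω₂)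
    (hsep : ∃ f : X →L[ℝ] ℝ, f ≠ 0 ∧
      (⨆ x ∈ Ω₁, (f x : EReal)) ≤ ⨅ x ∈ Ω₂, (f x : EReal)) :
    ExtremalSystem Ω₁ Ω₂ := by
  obtain ⟨f, hf0, hsep⟩ := hsep
  -- key: for x ∈ Ω₁, y ∈ Ω₂, f x ≤ f y
  have key : ∀ x ∈ Ω₁, ∀ y ∈ Ω₂, f x ≤ f y := by
    intro x hx y hy
    have h1' : (f x : EReal) ≤ ⨆ x ∈ Ω₁, (f x : EReal) := le_biSup (fun x => ((f x : EReal))) hx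
    have h2' : (⨅ x ∈ Ω₂, (f x : EReal)) ≤ (f y : EReal) := biInf_le (fun x => ((f x : EReal))) hy
    exact_mod_cast h1'.trans (hsep.trans h2')
  -- find u with f u < 0
  obtain ⟨v, hv⟩ : ∃ v, f v ≠ 0 := by
    by_contra h
    push_neg at h
    exact hf0 (ContinuousLinearMap.ext fun x => by simp [h x])
  obtain ⟨u, hu⟩ : ∃ u, f u < 0 := by
    rcases lt_or_gt_of_ne hv with h | h
    · exact ⟨v, h⟩
    · exact ⟨-v, by simpa using neg_neg_iff_pos.mpr h⟩
  intro V hV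
  -- continuity of t ↦ t • u at 0
  have hcont : Continuous fun t : ℝ => t • u := by continuity
  have : (fun t : ℝ => t • u) ⁻¹' V ∈ nhds (0 : ℝ) := by
    apply hcont.continuousAt.preimage_mem_nhds
    simpa using hV
  obtain ⟨ε, hε, hball⟩ := Metric.mem_nhds_iff.mp this
  refine ⟨(ε / 2) • u, hball (by simp [abs_of_pos, hε, half_lt_self hε,
    Real.dist_eq, abs_of_nonneg (le_of_lt (half_pos hε))]), ?_⟩
  ext z
  simp only [Set.mem_inter_iff, Set.mem_image, Set.mem_empty_iff_false, iff_false]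
  rintro ⟨⟨x, hx, rfl⟩, hz2⟩
  have hle := key x hx _ hz2
  have : f (x + (ε / 2) • u) = f x + (ε / 2) * f u := by simp
  nlinarith [hu, half_pos hε]
end

section
/- Let X be a separated locally convex topological vector space over the reals and let f, g : X → (−∞,∞] be proper convex functions with dom f ∩ dom g ≠ ∅. Assume that (i) one of f, g is finite and continuous at some point of dom f ∩ dom g, or (ii) X is a Banach space, f and g are lower semicontinuous, and ℝ⁺(dom f − dom g) is a closed linear subspace of X. Then the conjugate of the maximum function (f ∨ g)(x) := max{f(x), g(x)} satisfies (f ∨ g)*(x*) = inf_{λ∈[0,1]} [λf + (1−λ)g]*(x*) for all x* ∈ X*, where 0·f := δ_{dom f} and 0·g := δ_{dom g}; moreover, if (f ∨ g)*(x*) ∈ ℝ then this infimum over λ ∈ [0,1] is attained. -/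
open Pointwise

/-- Convexity of an `(-∞,∞]`-valued function, expressed via convexity of its epigraph. -/
def ConvexE {X : Type*} [AddCommGroup X] [Module ℝ X] (f : X → EReal) : Prop :=
  Convex ℝ {p : X × ℝ | f p.1 ≤ (p.2 : EReal)}

/-- Effective domain of an `(-∞,∞]`-valued function. -/
def domE {X : Type*} (f : X → EReal) : Set X := {x | f x ≠ ⊤}

/-- Fenchel conjugate. -/
noncomputable def conjE {X : Type*} [AddCommGroup X] [Module ℝ X] [TopologicalSpace X]
    (f : X → EReal) (p : X →L[ℝ] ℝ) : EReal :=
  ⨆ x : X, ((p x : EReal) - f x)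

open Classical in
/-- Indicator function of a set. -/
noncomputable def indicatorE {X : Type*} (Ω : Set X) (x : X) : EReal :=
  if x ∈ Ω then 0 else ⊤

open Classical in
/-- The combination `λ f + (1-λ) g` with the conventions `0·f := δ_{dom f}`,
`0·g := δ_{dom g}`. -/
noncomputable def lamComb {X : Type*} (f g : X → EReal) (l : ℝ) : X → EReal := fun x =>
  if l = 0 then indicatorE (domE f) x + g x
  else if l = 1 then f x + indicatorE (domE g) x
  else (l : EReal) * f x + ((1 - l : ℝ) : EReal) * g x

/-- The (given) topology of `X` is generated by a complete norm compatible with the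
linear structure, i.e. `X` is a Banach space. -/
def IsBanach (X : Type*) [AddCommGroup X] [Module ℝ X] [TopologicalSpace X] : Prop :=
  ∃ nm : X → ℝ,
    (∀ x, nm x = 0 ↔ x = 0) ∧
    (∀ x y, nm (x + y) ≤ nm x + nm y) ∧
    (∀ (c : ℝ) (x : X), nm (c • x) = |c| * nm x) ∧
    (∀ s : Set X, IsOpen s ↔ ∀ x ∈ s, ∃ ε > 0, ∀ y, nm (y - x) < ε → y ∈ s) ∧
    (∀ u : ℕ → X, (∀ ε : ℝ, 0 < ε → ∃ N, ∀ m ≥ N, ∀ n ≥ N, nm (u m - u n) < ε) →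
      ∃ x, Filter.Tendsto u Filter.atTop (nhds x))

-- auxiliary lemmas

lemma coe_mul_ne_bot (s : ℝ) (x : EReal) (h : 0 < s) (hx : x ≠ ⊥) : (s:EReal) * x ≠ ⊥ := by
  rcases eq_or_ne x ⊤ with rfl | hxt
  · rw [EReal.mul_top_of_pos (by exact_mod_cast h)]; simp
  · lift x to ℝ using ⟨hxt, hx⟩; rw [← EReal.coe_mul]; exact EReal.coe_ne_bot _

lemma conjE_anti {X : Type*} [AddCommGroup X] [Module ℝ X] [TopologicalSpace X]
    {h1 h2 : X → EReal} (h : ∀ x, h1 x ≤ h2 x) (p : X →L[ℝ] ℝ) :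
    conjE h2 p ≤ conjE h1 p :=
  iSup_mono fun x => EReal.sub_le_sub le_rfl (h x)

/-- Easy pointwise bound: `lamComb f g l ≤ max f g`. -/
lemma lamComb_le_max {X : Type*} (f g : X → EReal)
    (hfbot : ∀ x, f x ≠ ⊥) (hgbot : ∀ x, g x ≠ ⊥)
    {l : ℝ} (hl : l ∈ Set.Icc (0:ℝ) 1) (x : X) :
    lamComb f g l x ≤ max (f x) (g x) := by
  classical
  unfold lamComb
  rcases eq_or_ne (f x) ⊤ with hft | hft
  · have : max (f x) (g x) = ⊤ := by simp [hft]
    rw [this]; exact le_top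
  rcases eq_or_ne (g x) ⊤ with hgt | hgt
  · have : max (f x) (g x) = ⊤ := by simp [hgt]
    rw [this]; exact le_top
  have hxf : x ∈ domE f := hft
  have hxg : x ∈ domE g := hgt
  split_ifs with h0 h1
  · rw [indicatorE, if_pos hxf, zero_add]; exact le_max_right _ _
  · rw [indicatorE, if_pos hxg, add_zero]; exact le_max_left _ _
  · lift f x to ℝ using ⟨hft, hfbot x⟩ with a ha
    lift g x to ℝ using ⟨hgt, hgbot x⟩ with b hb
    have h0' : 0 < l := lt_of_le_of_ne hl.1 (Ne.symm h0)
    have h1' : l < 1 := lt_of_le_of_ne hl.2 h1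
    rw [← EReal.coe_mul, ← EReal.coe_mul, ← EReal.coe_add]
    have : max (a : EReal) (b : EReal) = ((max a b : ℝ) : EReal) := by
      exact_mod_cast rfl
    rw [this, EReal.coe_le_coe_iff]
    rcases max_cases a b with ⟨hm, hab⟩|⟨hm, hab⟩ <;> rw [hm] <;> nlinarith

/-- Key lemma: if `max (f x) (g x) ≥ p x - r` everywhere, there is `l ∈ [0,1]` with
`lamComb f g l ≥ p x - r` everywhere. Proof by Hahn-Banach separation in `ℝ × ℝ`. -/
lemma key_sep {X : Type*} [AddCommGroup X] [Module ℝ X] [TopologicalSpace X]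
    (f g : X → EReal)
    (hfbot : ∀ x, f x ≠ ⊥) (hgbot : ∀ x, g x ≠ ⊥)
    (hf : ConvexE f) (hg : ConvexE g)
    (hdom : (domE f ∩ domE g).Nonempty)
    (p : X →L[ℝ] ℝ) (r : ℝ)
    (hr : ∀ x, ((p x - r : ℝ) : EReal) ≤ max (f x) (g x)) :
    ∃ l ∈ Set.Icc (0:ℝ) 1, ∀ x, ((p x - r : ℝ) : EReal) ≤ lamComb f g l x := by
  classical
  -- The convex set C in ℝ²
  set C : Set (ℝ × ℝ) := {w | ∃ x : X,
      f x ≤ ((p x - r + w.1 : ℝ) : EReal) ∧ g x ≤ ((p x - r + w.2 : ℝ) : EReal)} with hC_def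
  set Q : Set (ℝ × ℝ) := {w | w.1 < 0 ∧ w.2 < 0} with hQ_def
  have hQopen : IsOpen Q := by
    have h1 : IsOpen {w : ℝ × ℝ | w.1 < 0} := isOpen_lt continuous_fst continuous_const
    have h2 : IsOpen {w : ℝ × ℝ | w.2 < 0} := isOpen_lt continuous_snd continuous_const
    exact (h1.inter h2)
  have hQconv : Convex ℝ Q := by
    intro a ha b hb s t hs ht hst
    constructor
    · show s * a.1 + t * b.1 < 0
      rcases eq_or_lt_of_le hs with rfl | hs'
      · simp only [zero_mul, zero_add]; have : t = 1 := by linarith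
        rw [this, one_mul]; exact hb.1
      · have := mul_neg_of_pos_of_neg hs' ha.1
        have := mul_nonpos_of_nonneg_of_nonpos ht hb.1.le
        linarith
    · show s * a.2 + t * b.2 < 0
      rcases eq_or_lt_of_le hs with rfl | hs'
      · simp only [zero_mul, zero_add]; have : t = 1 := by linarith
        rw [this, one_mul]; exact hb.2
      · have := mul_neg_of_pos_of_neg hs' ha.2
        have := mul_nonpos_of_nonneg_of_nonpos ht hb.2.le
        linarith
  have hCconv : Convex ℝ C := by
    rintro w1 ⟨x1, hx1f, hx1g⟩ w2 ⟨x2, hx2f, hx2g⟩ s t hs ht hst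
    refine ⟨s • x1 + t • x2, ?_, ?_⟩
    · have := hf (x := (x1, p x1 - r + w1.1)) hx1f (y := (x2, p x2 - r + w2.1)) hx2f hs ht hst
      simp only [Set.mem_setOf_eq, Prod.smul_mk, Prod.mk_add_mk, smul_eq_mul] at this
      have e1 : (s • w1 + t • w2).1 = s * w1.1 + t * w2.1 := rfl
      have heq : (p (s • x1 + t • x2) - r + (s • w1 + t • w2).1)
          = s * (p x1 - r + w1.1) + t * (p x2 - r + w2.1) := by
        simp only [map_add, map_smul, smul_eq_mul, e1]
        linear_combination (r:ℝ) * hst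
      rw [heq]; exact this
    · have := hg (x := (x1, p x1 - r + w1.2)) hx1g (y := (x2, p x2 - r + w2.2)) hx2g hs ht hst
      simp only [Set.mem_setOf_eq, Prod.smul_mk, Prod.mk_add_mk, smul_eq_mul] at this
      have e1 : (s • w1 + t • w2).2 = s * w1.2 + t * w2.2 := rfl
      have heq : (p (s • x1 + t • x2) - r + (s • w1 + t • w2).2)
          = s * (p x1 - r + w1.2) + t * (p x2 - r + w2.2) := by
        simp only [map_add, map_smul, smul_eq_mul, e1]
        linear_combination (r:ℝ) * hst
      rw [heq]; exact this
  have hdisj : Disjoint Q C := by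
    rw [Set.disjoint_left]
    rintro w ⟨hw1, hw2⟩ ⟨x, hxf, hxg⟩
    have h1 : f x < ((p x - r : ℝ) : EReal) :=
      lt_of_le_of_lt hxf (by exact_mod_cast (by linarith : p x - r + w.1 < p x - r))
    have h2 : g x < ((p x - r : ℝ) : EReal) :=
      lt_of_le_of_lt hxg (by exact_mod_cast (by linarith : p x - r + w.2 < p x - r))
    exact absurd (hr x) (not_le.mpr (max_lt h1 h2))
  obtain ⟨x0, hx0f, hx0g⟩ := hdom
  have hCne : C.Nonempty := by
    set a := (f x0).toReal with ha
    set b := (g x0).toReal with hb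
    refine ⟨(a - p x0 + r, b - p x0 + r), x0, ?_, ?_⟩
    · have : (p x0 - r + (a - p x0 + r) : ℝ) = a := by ring
      rw [this, ha, EReal.coe_toReal hx0f (hfbot x0)]
    · have : (p x0 - r + (b - p x0 + r) : ℝ) = b := by ring
      rw [this, hb, EReal.coe_toReal hx0g (hgbot x0)]
  obtain ⟨φ, c, hφQ, hφC⟩ := geometric_hahn_banach_open hQconv hQopen hCconv hdisj
  set α : ℝ := φ (1, 0) with hα_def
  set β : ℝ := φ (0, 1) with hβ_def
  have hφ : ∀ u v : ℝ, φ (u, v) = u * α + v * β := by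
    intro u v
    have huv : (u, v) = u • ((1:ℝ), (0:ℝ)) + v • ((0:ℝ), (1:ℝ)) := by
      simp [Prod.ext_iff]
    rw [huv, map_add, map_smul, map_smul, smul_eq_mul, smul_eq_mul, hα_def, hβ_def]
  -- α ≥ 0
  have hα : 0 ≤ α := by
    by_contra hc
    push_neg at hc
    set t : ℝ := max 1 ((c + β + 1) / (-α)) with ht_def
    have ht1 : (1:ℝ) ≤ t := le_max_left _ _
    have h1 := hφQ (-t, -1) ⟨by simp; linarith, by norm_num⟩
    rw [hφ] at h1
    have ht2 : (c + β + 1) / (-α) ≤ t := le_max_right _ _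
    have h3 : c + β + 1 ≤ t * (-α) := (div_le_iff₀ (by linarith)).mp ht2
    nlinarith
  have hβ : 0 ≤ β := by
    by_contra hc
    push_neg at hc
    set t : ℝ := max 1 ((c + α + 1) / (-β)) with ht_def
    have ht1 : (1:ℝ) ≤ t := le_max_left _ _
    have h1 := hφQ (-1, -t) ⟨by norm_num, by simp; linarith⟩
    rw [hφ] at h1
    have ht2 : (c + α + 1) / (-β) ≤ t := le_max_right _ _
    have h3 : c + α + 1 ≤ t * (-β) := (div_le_iff₀ (by linarith)).mp ht2
    nlinarith
  -- c ≥ 0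
  have hc0 : 0 ≤ c := by
    by_contra hc
    push_neg at hc
    set ε : ℝ := (-c) / (2 * (α + β + 1)) with hε_def
    have hεpos : 0 < ε := div_pos (by linarith) (by linarith)
    have h1 := hφQ (-ε, -ε) ⟨by simp [hεpos], by simp [hεpos]⟩
    rw [hφ] at h1
    have key : ε * (α + β + 1) = -c / 2 := by
      rw [hε_def]; field_simp
    nlinarith [mul_nonneg hεpos.le hα, mul_nonneg hεpos.le hβ]
  -- α + β > 0
  have hsum : 0 < α + β := by
    rcases lt_or_eq_of_le (by linarith : (0:ℝ) ≤ α + β) with h | h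
    · exact h
    · exfalso
      have hα0 : α = 0 := by linarith
      have hβ0 : β = 0 := by linarith
      obtain ⟨w0, hw0⟩ := hCne
      have h1 := hφC w0 hw0
      have h2 := hφQ (-1, -1) ⟨by norm_num, by norm_num⟩
      rw [show w0 = (w0.1, w0.2) from rfl, hφ, hα0, hβ0] at h1
      rw [hφ, hα0, hβ0] at h2
      simp at h1 h2
      linarith
  -- the multiplier
  set l : ℝ := α / (α + β) with hl_def
  have hl0 : 0 ≤ l := div_nonneg hα hsum.le
  have hl1 : l ≤ 1 := by
    rw [hl_def, div_le_one hsum]; linarith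
  have hl1m : 1 - l = β / (α + β) := by
    rw [hl_def]; field_simp; ring
  refine ⟨l, ⟨hl0, hl1⟩, ?_⟩
  -- key pointwise fact on the common domain
  have hkey : ∀ x : X, f x ≠ ⊤ → g x ≠ ⊤ →
      0 ≤ l * ((f x).toReal - p x + r) + (1 - l) * ((g x).toReal - p x + r) := by
    intro x hxf hxg
    set a := (f x).toReal with ha
    set b := (g x).toReal with hb
    have hmemC : ((a - p x + r, b - p x + r) : ℝ × ℝ) ∈ C := by
      refine ⟨x, ?_, ?_⟩
      · have : (p x - r + (a - p x + r) : ℝ) = a := by ring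
        rw [this, ha, EReal.coe_toReal hxf (hfbot x)]
      · have : (p x - r + (b - p x + r) : ℝ) = b := by ring
        rw [this, hb, EReal.coe_toReal hxg (hgbot x)]
    have h1 := hφC _ hmemC
    rw [hφ] at h1
    have h2 : 0 ≤ (a - p x + r) * α + (b - p x + r) * β := le_trans hc0 h1
    rw [hl_def, hl1m]
    have : α / (α + β) * (a - p x + r) + β / (α + β) * (b - p x + r)
        = ((a - p x + r) * α + (b - p x + r) * β) / (α + β) := by
      field_simp
    rw [this]
    exact div_nonneg h2 hsum.le
  -- conclude pointwise
  intro x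
  unfold lamComb
  split_ifs with h0 h1
  · -- l = 0
    by_cases hxf : x ∈ domE f
    · rw [indicatorE, if_pos hxf, zero_add]
      rcases eq_or_ne (g x) ⊤ with hgt | hgt
      · rw [hgt]; exact le_top
      · have := hkey x hxf hgt
        rw [h0] at this
        simp only [zero_mul, zero_add, sub_zero, one_mul] at this
        have hb : ((g x).toReal : EReal) = g x := EReal.coe_toReal hgt (hgbot x)
        rw [← hb, EReal.coe_le_coe_iff]
        linarith
    · rw [indicatorE, if_neg hxf, EReal.top_add_of_ne_bot (hgbot x)]; exact le_top
  · -- l = 1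
    by_cases hxg : x ∈ domE g
    · rw [indicatorE, if_pos hxg, add_zero]
      rcases eq_or_ne (f x) ⊤ with hft | hft
      · rw [hft]; exact le_top
      · have := hkey x hft hxg
        rw [h1] at this
        simp only [sub_self, zero_mul, add_zero, one_mul] at this
        have ha : ((f x).toReal : EReal) = f x := EReal.coe_toReal hft (hfbot x)
        rw [← ha, EReal.coe_le_coe_iff]
        linarith
    · rw [indicatorE, if_neg hxg, EReal.add_top_of_ne_bot (hfbot x)]; exact le_top
  · -- 0 < l < 1
    have hl0' : 0 < l := lt_of_le_of_ne hl0 (Ne.symm h0)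
    have hl1' : l < 1 := lt_of_le_of_ne hl1 h1
    rcases eq_or_ne (f x) ⊤ with hft | hft
    · rw [hft, EReal.mul_top_of_pos (by exact_mod_cast hl0'),
        EReal.top_add_of_ne_bot (coe_mul_ne_bot _ _ (by linarith) (hgbot x))]
      exact le_top
    rcases eq_or_ne (g x) ⊤ with hgt | hgt
    · rw [hgt, EReal.mul_top_of_pos (by exact_mod_cast (by linarith : (0:ℝ) < 1 - l)),
        EReal.add_top_of_ne_bot (coe_mul_ne_bot _ _ hl0' (hfbot x))]
      exact le_top
    · have := hkey x hft hgt
      lift f x to ℝ using ⟨hft, hfbot x⟩ with a ha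
      lift g x to ℝ using ⟨hgt, hgbot x⟩ with b hb
      rw [← EReal.coe_mul, ← EReal.coe_mul, ← EReal.coe_add, EReal.coe_le_coe_iff]
      simp only [EReal.toReal_coe] at this
      nlinarith

/-- conjugate of the maximum of two convex functions:
`(f ∨ g)*(x*) = inf_{λ ∈ [0,1]} [λ f + (1-λ) g]*(x*)`, the infimum being attained
whenever `(f ∨ g)*(x*)` is finite, under either (i) continuity of `f` or `g` at a
common domain point, or (ii) `X` Banach, `f, g` l.s.c. and `ℝ⁺(dom f - dom g)`
a closed linear subspace. -/
theorem conjugate_max_rule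
    {X : Type*} [AddCommGroup X] [Module ℝ X] [TopologicalSpace X]
    [IsTopologicalAddGroup X] [ContinuousSMul ℝ X] [LocallyConvexSpace ℝ X] [T2Space X]
    (f g : X → EReal)
    (hfbot : ∀ x, f x ≠ ⊥) (hgbot : ∀ x, g x ≠ ⊥)
    (hfdom : (domE f).Nonempty) (hgdom : (domE g).Nonempty)
    (hf : ConvexE f) (hg : ConvexE g)
    (hdom : (domE f ∩ domE g).Nonempty)
    (hcase :
      (∃ xb ∈ domE f ∩ domE g, ContinuousAt f xb ∨ ContinuousAt g xb) ∨
      (IsBanach X ∧ LowerSemicontinuous f ∧ LowerSemicontinuous g ∧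
        ∃ L : Submodule ℝ X, IsClosed (L : Set X) ∧
          posSpan (domE f - domE g) = (L : Set X))) :
    ∀ p : X →L[ℝ] ℝ,
      conjE (fun x => max (f x) (g x)) p
        = ⨅ l ∈ Set.Icc (0 : ℝ) 1, conjE (lamComb f g l) p ∧
      (conjE (fun x => max (f x) (g x)) p ≠ ⊤ →
       conjE (fun x => max (f x) (g x)) p ≠ ⊥ →
        ∃ l ∈ Set.Icc (0 : ℝ) 1,
          conjE (fun x => max (f x) (g x)) p = conjE (lamComb f g l) p) := by
  intro p
  set h : X → EReal := fun x => max (f x) (g x) with hh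
  have hhbot : ∀ x, h x ≠ ⊥ := by
    intro x hx
    have hfx : f x ≤ h x := le_max_left _ _
    rw [hx] at hfx
    exact hfbot x (le_bot_iff.mp hfx)
  -- easy direction (pointwise)
  have easy : ∀ l ∈ Set.Icc (0:ℝ) 1, conjE h p ≤ conjE (lamComb f g l) p := fun l hl =>
    conjE_anti (fun x => lamComb_le_max f g hfbot hgbot hl x) p
  have hle : conjE h p ≤ ⨅ l ∈ Set.Icc (0:ℝ) 1, conjE (lamComb f g l) p :=
    le_iInf₂ easy
  rcases eq_or_ne (conjE h p) ⊤ with htop | htop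
  · constructor
    · exact le_antisymm hle (htop ▸ le_top)
    · intro hne _; exact absurd htop hne
  · -- conjE h p is finite (it is never ⊥ since domE f ∩ domE g ≠ ∅)
    have hnbot : conjE h p ≠ ⊥ := by
      obtain ⟨x0, hx0f, hx0g⟩ := hdom
      intro hb
      have hle0 : ((p x0 : EReal) - h x0) ≤ conjE h p := by
        unfold conjE; exact le_iSup (fun y : X => (p y : EReal) - h y) x0
      rw [hb, le_bot_iff] at hle0
      have hht : h x0 ≠ ⊤ :=
        (max_lt (lt_top_iff_ne_top.mpr hx0f) (lt_top_iff_ne_top.mpr hx0g)).ne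
      lift h x0 to ℝ using ⟨hht, hhbot x0⟩ with m hm
      rw [← EReal.coe_sub] at hle0
      exact EReal.coe_ne_bot _ hle0
    set r : ℝ := (conjE h p).toReal with hr_def
    have hre : conjE h p = (r : EReal) := (EReal.coe_toReal htop hnbot).symm
    -- pointwise lower bound
    have hr : ∀ x, ((p x - r : ℝ) : EReal) ≤ h x := by
      intro x
      have h1 : ((p x : EReal) - h x) ≤ (r : EReal) := by
        rw [← hre]; unfold conjE; exact le_iSup (fun y : X => (p y : EReal) - h y) x
      rcases eq_or_ne (h x) ⊤ with hxt | hxt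
      · rw [hxt]; exact le_top
      · lift h x to ℝ using ⟨hxt, hhbot x⟩ with m hm
        rw [← EReal.coe_sub, EReal.coe_le_coe_iff] at h1
        rw [EReal.coe_le_coe_iff]; linarith
    obtain ⟨l, hl, hlam⟩ := key_sep f g hfbot hgbot hf hg hdom p r hr
    have hconj_l : conjE (lamComb f g l) p ≤ (r : EReal) := by
      unfold conjE
      refine iSup_le fun x => ?_
      calc (p x : EReal) - lamComb f g l x ≤ (p x : EReal) - ((p x - r : ℝ) : EReal) :=
            EReal.sub_le_sub le_rfl (hlam x)
        _ = ((p x - (p x - r) : ℝ) : EReal) := (EReal.coe_sub _ _).symm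
        _ = (r : EReal) := by norm_num
    constructor
    · refine le_antisymm hle ?_
      calc (⨅ l ∈ Set.Icc (0:ℝ) 1, conjE (lamComb f g l) p) ≤ conjE (lamComb f g l) p :=
            iInf₂_le l hl
        _ ≤ (r : EReal) := hconj_l
        _ = conjE h p := hre.symm
    · intro _ _
      exact ⟨l, hl, le_antisymm (easy l hl) (hre ▸ hconj_l)⟩
end

section
/- Let X and Y be separated locally convex topological vector spaces over the reals, let A : X → Y be a continuous linear mapping, and let g : Y → (−∞,∞] be a proper convex function. Assume that (i) g is finite and continuous at some point of AX, or (ii) X and Y are Banach spaces, g is lower semicontinuous, and ℝ⁺(AX − dom g) is a closed linear subspace of Y. Then ∂(g ∘ A)(x̄) = A*∂g(Ax̄) := {A*y* : y* ∈ ∂g(Ax̄)} for every x̄ ∈ dom(g ∘ A). -/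
open Pointwise

/-- Subdifferential of `f` at `xb`. -/
def subdiffE {X : Type*} [AddCommGroup X] [Module ℝ X] [TopologicalSpace X]
    (f : X → EReal) (xb : X) : Set (X →L[ℝ] ℝ) :=
  {p | ∀ x : X, ((p (x - xb) : ℝ) : EReal) ≤ f x - f xb}

namespace ChainAux

open Filter Topology

lemma coe_le_sub_iff {a : EReal} {r t : ℝ} :
    ((r : ℝ) : EReal) ≤ a - (t : ℝ) ↔ (((r + t : ℝ)) : EReal) ≤ a := by
  induction a using EReal.rec with
  | bot =>
      rw [EReal.bot_sub]
      simp
  | top =>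
      rw [EReal.top_sub_coe]
      simp
  | coe s =>
      rw [← EReal.coe_sub, EReal.coe_le_coe_iff, EReal.coe_le_coe_iff]
      constructor <;> intro <;> linarith

/-- affine pass-to-limit: if `a + c*r ≤ u` for all `r > s` then at `r = s`. -/
lemma affine_limit {a c s u : ℝ} (h : ∀ r : ℝ, s < r → a + c * r ≤ u) :
    a + c * s ≤ u := by
  rcases le_or_gt 0 c with hc | hc
  · have := h (s + 1) (by linarith)
    nlinarith
  · by_contra hcon
    push_neg at hcon
    have hpos : 0 < (a + c * s - u) / (-2 * c) := by
      apply div_pos (by linarith) (by linarith)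
    have h2 := h (s + (a + c * s - u) / (-2 * c)) (by linarith)
    have hne : (-2 * c) ≠ 0 := by linarith
    have h3 : c * ((a + c * s - u) / (-2 * c)) = (-(a + c * s - u))/2 := by
      rw [mul_div_assoc', div_eq_div_iff hne (two_ne_zero)]
      ring
    rw [mul_add, h3] at h2
    linarith

/-- From strict separation on the interior, weak separation on the whole convex set. -/
lemma le_on_of_lt_on_interior {E : Type*} [AddCommGroup E] [Module ℝ E] [TopologicalSpace E]
    [IsTopologicalAddGroup E] [ContinuousSMul ℝ E]
    {s : Set E} (hs : Convex ℝ s) {z₀ : E} (hz₀ : z₀ ∈ interior s)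
    (f : E →L[ℝ] ℝ) (u : ℝ) (h : ∀ z ∈ interior s, f z < u) :
    ∀ z ∈ s, f z ≤ u := by
  intro z hz
  by_contra hcon
  push_neg at hcon
  set d := f z - u with hd
  have hdpos : 0 < d := by simp [hd]; linarith
  set a := min 1 (d / (2 * (|f z₀ - f z| + 1))) with ha
  have hapos : 0 < a := by
    apply lt_min one_pos
    apply div_pos hdpos
    positivity
  have ha1 : a ≤ 1 := min_le_left _ _
  have hmem : a • z₀ + (1 - a) • z ∈ interior s :=
    hs.combo_interior_self_mem_interior hz₀ hz hapos (by linarith) (by ring)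
  have hlt := h _ hmem
  rw [map_add, map_smul, map_smul] at hlt
  simp only [smul_eq_mul] at hlt
  have h1 : a * (f z₀ - f z) ≥ -(a * |f z₀ - f z|) := by
    have := neg_abs_le (f z₀ - f z)
    nlinarith
  have h2 : a * |f z₀ - f z| ≤ d / 2 := by
    have h3 : a ≤ d / (2 * (|f z₀ - f z| + 1)) := min_le_right _ _
    have h4 : 0 ≤ |f z₀ - f z| := abs_nonneg _
    calc a * |f z₀ - f z| ≤ d / (2 * (|f z₀ - f z| + 1)) * |f z₀ - f z| := by
          apply mul_le_mul_of_nonneg_right h3 h4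
      _ ≤ d / 2 := by
          rw [div_mul_eq_mul_div, div_le_div_iff₀ (by positivity) (by norm_num)]
          nlinarith
  nlinarith

/-- A closed convex set is stable under convergent convex series. -/
lemma closed_convex_csClosed {E : Type*} [AddCommGroup E] [Module ℝ E] [TopologicalSpace E]
    [IsTopologicalAddGroup E] [ContinuousSMul ℝ E] [T2Space E]
    {s : Set E} (hconv : Convex ℝ s) (hcl : IsClosed s)
    (t : ℕ → ℝ) (z : ℕ → E) (Z : E)
    (ht0 : ∀ n, 0 ≤ t n) (ht1 : HasSum t 1) (hz : ∀ n, z n ∈ s)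
    (hZ : HasSum (fun n => t n • z n) Z) : Z ∈ s := by
  set S : ℕ → ℝ := fun N => ∑ n ∈ Finset.range N, t n with hS
  have hSle : ∀ N, S N ≤ 1 := fun N => sum_le_hasSum _ (fun i _ => ht0 i) ht1
  have hmem : ∀ N, (∑ n ∈ Finset.range N, t n • z n) + (1 - S N) • z 0 ∈ s := by
    intro N
    have h := hconv.sum_mem (t := Finset.range (N+1))
      (w := fun n => if n < N then t n else 1 - S N)
      (z := fun n => if n < N then z n else z 0) ?_ ?_ ?_
    · have e : ∑ i ∈ Finset.range (N+1),
          (if i < N then t i else 1 - S N) • (if i < N then z i else z 0)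
          = (∑ n ∈ Finset.range N, t n • z n) + (1 - S N) • z 0 := by
        rw [Finset.sum_range_succ]
        simp only [lt_irrefl N, if_false]
        congr 1
        apply Finset.sum_congr rfl
        intro i hi
        rw [Finset.mem_range] at hi
        simp only [if_pos hi]
      rwa [e] at h
    · intro i _
      by_cases hi : i < N
      · simpa [hi] using ht0 i
      · simp only [hi, if_false]
        linarith [hSle N]
    · rw [Finset.sum_range_succ]
      simp only [lt_irrefl N, if_false]
      have e2 : ∀ i ∈ Finset.range N, (if i < N then t i else 1 - S N) = t i := by
        intro i hi
        rw [Finset.mem_range] at hi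
        rw [if_pos hi]
      rw [Finset.sum_congr rfl e2, hS]
      ring
    · intro i _
      by_cases hi : i < N
      · simpa [hi] using hz i
      · simpa [hi] using hz 0
  have hlim : Tendsto (fun N => (∑ n ∈ Finset.range N, t n • z n) + (1 - S N) • z 0)
      atTop (nhds Z) := by
    have h1 : Tendsto (fun N => ∑ n ∈ Finset.range N, t n • z n) atTop (nhds Z) :=
      hZ.tendsto_sum_nat
    have h2 : Tendsto (fun N => (1 - S N) • z 0) atTop (nhds ((1 - 1 : ℝ) • z 0)) :=
      (tendsto_const_nhds.sub ht1.tendsto_sum_nat).smul_const _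
    simpa using h1.add h2
  exact hcl.mem_of_tendsto hlim (Filter.Eventually.of_forall hmem)

/-- lower semicontinuous functions have closed epigraph -/
lemma lsc_epi_closed {Y : Type*} [TopologicalSpace Y] {g : Y → EReal}
    (hlsc : LowerSemicontinuous g) : IsClosed {p : Y × ℝ | g p.1 ≤ (p.2 : EReal)} := by
  rw [← isOpen_compl_iff, isOpen_iff_mem_nhds]
  rintro ⟨y, r⟩ hyr
  simp only [Set.mem_compl_iff, Set.mem_setOf_eq, not_le] at hyr
  obtain ⟨r', hrr', hr'g⟩ := EReal.lt_iff_exists_real_btwn.1 hyr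
  have hrr : r < r' := by exact_mod_cast hrr'
  have h1 := hlsc y _ hr'g
  rw [eventually_nhds_iff] at h1
  obtain ⟨U, hU, hUopen, hyU⟩ := h1
  apply Filter.mem_of_superset (prod_mem_nhds (hUopen.mem_nhds hyU) (Iio_mem_nhds hrr))
  rintro ⟨y', s'⟩ ⟨hy', hs'⟩
  simp only [Set.mem_compl_iff, Set.mem_setOf_eq, not_le]
  calc ((s' : ℝ) : EReal) < ((r' : ℝ) : EReal) := by
        exact_mod_cast hs'
    _ < g y' := hU y' hy'


/-- strict epigraph is convex -/
lemma strict_epi_convex {Y : Type*} [AddCommGroup Y] [Module ℝ Y] {g : Y → EReal}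
    (hgbot : ∀ y, g y ≠ ⊥) (hg : ConvexE g) :
    Convex ℝ {q : Y × ℝ | g q.1 < (q.2 : EReal)} := by
  rintro ⟨y₁, r₁⟩ h₁ ⟨y₂, r₂⟩ h₂ a b ha hb hab
  simp only [Set.mem_setOf_eq] at h₁ h₂ ⊢
  have real₁ : ∃ s₁ : ℝ, g y₁ = (s₁ : EReal) ∧ s₁ < r₁ := by
    have hne : g y₁ ≠ ⊤ := ne_top_of_lt h₁
    refine ⟨(g y₁).toReal, (EReal.coe_toReal hne (hgbot y₁)).symm, ?_⟩
    rw [← EReal.coe_lt_coe_iff, EReal.coe_toReal hne (hgbot y₁)]; exact h₁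
  have real₂ : ∃ s₂ : ℝ, g y₂ = (s₂ : EReal) ∧ s₂ < r₂ := by
    have hne : g y₂ ≠ ⊤ := ne_top_of_lt h₂
    refine ⟨(g y₂).toReal, (EReal.coe_toReal hne (hgbot y₂)).symm, ?_⟩
    rw [← EReal.coe_lt_coe_iff, EReal.coe_toReal hne (hgbot y₂)]; exact h₂
  obtain ⟨s₁, hs₁, hs₁'⟩ := real₁
  obtain ⟨s₂, hs₂, hs₂'⟩ := real₂
  have hmem := hg (x := (y₁, s₁)) (by simpa [Set.mem_setOf_eq, hs₁] using le_refl _)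
    (y := (y₂, s₂)) (by simpa [Set.mem_setOf_eq, hs₂] using le_refl _) ha hb hab
  simp only [Set.mem_setOf_eq, Prod.smul_mk, Prod.mk_add_mk, smul_eq_mul] at hmem
  calc g (a • y₁ + b • y₂) ≤ ((a * s₁ + b * s₂ : ℝ) : EReal) := hmem
    _ < ((a * r₁ + b * r₂ : ℝ) : EReal) := by
        rw [EReal.coe_lt_coe_iff]
        rcases ha.lt_or_eq with ha' | ha'
        · rcases hb.lt_or_eq with hb' | hb'
          · nlinarith
          · rw [← hb']; simp only [zero_mul, add_zero]
            have : a = 1 := by linarith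
            rw [this]; simpa using hs₁'
        · rw [← ha']; simp only [zero_mul, zero_add]
          have : b = 1 := by linarith
          rw [this]; simpa using hs₂'
    _ = ((a • (y₁, r₁) + b • (y₂, r₂) : Y × ℝ).2 : EReal) := by
        simp [smul_eq_mul]

/-- Case (i): continuity point. Produces the preimage subgradient. -/
lemma case_i {X Y : Type*} [AddCommGroup X] [Module ℝ X] [TopologicalSpace X]
    [IsTopologicalAddGroup X] [ContinuousSMul ℝ X]
    [AddCommGroup Y] [Module ℝ Y] [TopologicalSpace Y]
    [IsTopologicalAddGroup Y] [ContinuousSMul ℝ Y]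
    (A : X →L[ℝ] Y) (g : Y → EReal)
    (hgbot : ∀ y, g y ≠ ⊥) (hg : ConvexE g)
    (x₀ : X) (hx₀ : g (A x₀) ≠ ⊤) (hcont : ContinuousAt g (A x₀))
    (xb : X) (hxb : g (A xb) ≠ ⊤) (p : X →L[ℝ] ℝ)
    (hp : p ∈ subdiffE (fun x => g (A x)) xb) :
    ∃ q ∈ subdiffE g (A xb), q.comp A = p := by
  set γ : ℝ := (g (A xb)).toReal with hγ
  have hgA : g (A xb) = (γ : EReal) := (EReal.coe_toReal hxb (hgbot _)).symm
  have hkey : ∀ x : X, (((p (x - xb) + γ : ℝ)) : EReal) ≤ g (A x) := by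
    intro x
    have h0 : ((p (x - xb) : ℝ) : EReal) ≤ g (A x) - g (A xb) := hp x
    rw [hgA] at h0
    exact coe_le_sub_iff.1 h0
  set y₀ : Y := A x₀ with hy₀
  set s₀ : ℝ := (g y₀).toReal with hs₀
  have hgy₀ : g y₀ = (s₀ : EReal) := (EReal.coe_toReal hx₀ (hgbot _)).symm
  -- the strict epigraph and its interior point
  set E₁ : Set (Y × ℝ) := {q : Y × ℝ | g q.1 < (q.2 : EReal)} with hE₁
  have hE₁conv : Convex ℝ E₁ := strict_epi_convex hgbot hg
  have hU : {y : Y | g y < ((s₀ + 1 : ℝ) : EReal)} ∈ nhds y₀ := by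
    have : Set.Iio ((s₀ + 1 : ℝ) : EReal) ∈ nhds (g y₀) := by
      apply Iio_mem_nhds
      rw [hgy₀, EReal.coe_lt_coe_iff]; linarith
    exact hcont this
  have hbox : (interior {y : Y | g y < ((s₀ + 1 : ℝ) : EReal)}) ×ˢ Set.Ioi (s₀ + 1) ⊆ E₁ := by
    rintro ⟨y, r⟩ ⟨hy, hr⟩
    have h1' := interior_subset hy
    have h1 : g y < ((s₀ + 1 : ℝ) : EReal) := h1'
    have h2 : ((s₀ + 1 : ℝ) : EReal) < (r : EReal) := by
      rw [EReal.coe_lt_coe_iff]; exact hr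
    exact h1.trans h2
  have hz₀ : ((y₀, s₀ + 2) : Y × ℝ) ∈ interior E₁ := by
    apply interior_maximal hbox (isOpen_interior.prod isOpen_Ioi)
    constructor
    · rw [mem_interior_iff_mem_nhds]; exact hU
    · simp only [Set.mem_Ioi]; linarith
  -- the affine set
  set E₂ : Set (Y × ℝ) := Set.range (fun x : X => ((A x, γ + p (x - xb)) : Y × ℝ)) with hE₂
  have hE₂conv : Convex ℝ E₂ := by
    rintro _ ⟨x₁, rfl⟩ _ ⟨x₂, rfl⟩ a b ha hb hab
    refine ⟨a • x₁ + b • x₂, ?_⟩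
    simp only [Prod.smul_mk, Prod.mk_add_mk, smul_eq_mul]
    refine Prod.ext_iff.mpr ⟨?_, ?_⟩
    · simp [map_add, map_smul]
    · simp only [map_sub, map_add, map_smul, smul_eq_mul]
      linear_combination (p xb - γ) * hab
  have hdisj : Disjoint (interior E₁) E₂ := by
    rw [Set.disjoint_left]
    rintro z hz ⟨x, rfl⟩
    have h1 : g (A x) < ((γ + p (x - xb) : ℝ) : EReal) := by
      have := interior_subset hz
      simpa [hE₁] using this
    have := hkey x
    rw [show p (x - xb) + γ = γ + p (x - xb) by ring] at this
    exact absurd h1 (not_lt.2 this)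
  obtain ⟨f, u, hfu₁, hfu₂⟩ :=
    geometric_hahn_banach_open (hE₁conv.interior) isOpen_interior hE₂conv hdisj
  have hfle : ∀ z ∈ E₁, f z ≤ u := le_on_of_lt_on_interior hE₁conv hz₀ f u hfu₁
  set ℓ : Y →L[ℝ] ℝ := f.comp (ContinuousLinearMap.inl ℝ Y ℝ) with hℓ
  set c : ℝ := f (0, 1) with hc
  have hfdec : ∀ (y : Y) (r : ℝ), f (y, r) = ℓ y + c * r := by
    intro y r
    have : ((y, r) : Y × ℝ) = (y, (0:ℝ)) + r • ((0:Y), (1:ℝ)) := by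
      simp [Prod.ext_iff]
    rw [this, map_add, map_smul]
    simp only [smul_eq_mul, hℓ, ContinuousLinearMap.comp_apply, ContinuousLinearMap.inl_apply]
    ring
  have hle : ∀ (y : Y) (r : ℝ), g y ≤ (r : EReal) → ℓ y + c * r ≤ u := by
    intro y r hgy
    apply affine_limit
    intro r' hr'
    have : ((y, r') : Y × ℝ) ∈ E₁ := by
      simp only [hE₁, Set.mem_setOf_eq]
      exact lt_of_le_of_lt hgy (by rw [EReal.coe_lt_coe_iff]; exact hr')
    have := hfle _ this
    rwa [hfdec] at this
  have hge : ∀ x : X, u ≤ ℓ (A x) + c * (γ + p (x - xb)) := by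
    intro x
    have := hfu₂ _ ⟨x, rfl⟩
    rwa [hfdec] at this
  -- c < 0
  have hm : γ + p (x₀ - xb) ≤ s₀ := by
    have := hkey x₀
    rw [← hy₀, hgy₀, EReal.coe_le_coe_iff] at this
    linarith
  have hclt : c < 0 := by
    have h1 : f (y₀, s₀ + 2) < u := hfu₁ _ hz₀
    rw [hfdec] at h1
    have h2 := hge x₀
    rw [← hy₀] at h2
    nlinarith
  have hcpos : (0:ℝ) < -c := by linarith
  have hcne : (-c) ≠ 0 := by linarith
  -- u value
  have huval : u = ℓ (A xb) + c * γ := by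
    have h1 : ℓ (A xb) + c * γ ≤ u := hle (A xb) γ (le_of_eq hgA)
    have h2 := hge xb
    simp only [sub_self, map_zero, add_zero] at h2
    linarith
  -- linearity
  have hlin : ∀ w : X, ℓ (A w) = -c * p w := by
    intro w
    have h1 := hge (xb + w)
    have h2 := hge (xb - w)
    simp only [map_add, map_sub, add_sub_cancel_left, sub_sub_cancel_left, map_neg] at h1 h2
    rw [huval] at h1 h2
    linarith
  refine ⟨(-c)⁻¹ • ℓ, ?_, ?_⟩
  · intro y
    rw [hgA, coe_le_sub_iff]
    by_cases hgy : g y = ⊤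
    · rw [hgy]; exact le_top
    · set s : ℝ := (g y).toReal with hs
      have hgys : g y = (s : EReal) := (EReal.coe_toReal hgy (hgbot _)).symm
      rw [hgys, EReal.coe_le_coe_iff]
      have h1 := hle y s (le_of_eq hgys)
      rw [huval] at h1
      have h2 : ((-c)⁻¹ • ℓ) (y - A xb) = (-c)⁻¹ * (ℓ y - ℓ (A xb)) := by
        simp [map_sub]
        ring
      rw [h2]
      have h3 : (-c)⁻¹ * (ℓ y - ℓ (A xb)) ≤ s - γ := by
        rw [inv_mul_le_iff₀ hcpos]
        nlinarith
      linarith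
  · apply ContinuousLinearMap.ext
    intro w
    simp only [ContinuousLinearMap.comp_apply, ContinuousLinearMap.smul_apply, smul_eq_mul]
    rw [hlin w]
    field_simp
    exact mul_div_cancel_left₀ _ (by linarith : c ≠ 0)


set_option maxHeartbeats 2000000 in
lemma case_ii {X Y : Type*} [NormedAddCommGroup X] [NormedSpace ℝ X] [CompleteSpace X]
    [NormedAddCommGroup Y] [NormedSpace ℝ Y] [CompleteSpace Y]
    (A : X →L[ℝ] Y) (g : Y → EReal)
    (hgbot : ∀ y, g y ≠ ⊥) (hg : ConvexE g) (hlsc : LowerSemicontinuous g)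
    (L : Submodule ℝ Y) (hLc : IsClosed (L : Set Y))
    (hL : posSpan (Set.range A - domE g) = (L : Set Y))
    (xb : X) (hxb : g (A xb) ≠ ⊤) (p : X →L[ℝ] ℝ)
    (hp : p ∈ subdiffE (fun x => g (A x)) xb) :
    ∃ q ∈ subdiffE g (A xb), q.comp A = p := by
  haveI : CompleteSpace ↥L := IsClosed.completeSpace_coe (hs := hLc)
  haveI : BaireSpace ↥L := BaireSpace.of_completelyPseudoMetrizable
  -- basic containments
  have hsub : ∀ (x : X) (y : Y), g y ≠ ⊤ → A x - y ∈ L := by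
    intro x y hy
    have h1 : A x - y ∈ Set.range A - domE g := Set.sub_mem_sub ⟨x, rfl⟩ hy
    have h2 : A x - y ∈ posSpan (Set.range A - domE g) :=
      ⟨1, one_pos, A x - y, h1, (one_smul ℝ _).symm⟩
    rw [hL] at h2
    exact h2
  have hAxbL : A xb ∈ L := by
    have h := hsub 0 (A xb) hxb
    rw [map_zero, zero_sub] at h
    simpa using L.neg_mem h
  have hAL : ∀ x : X, A x ∈ L := by
    intro x
    have h := hsub x (A xb) hxb
    have := L.add_mem h hAxbL
    simpa using this
  have hdomL : ∀ y : Y, g y ≠ ⊤ → y ∈ L := by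
    intro y hy
    have h := hsub xb y hy
    have := L.sub_mem hAxbL h
    simpa using this
  -- real value at A xb and key subgradient inequality
  set γ : ℝ := (g (A xb)).toReal with hγ
  have hgA : g (A xb) = (γ : EReal) := (EReal.coe_toReal hxb (hgbot _)).symm
  have hkey : ∀ x : X, (((γ + p x : ℝ)) : EReal) ≤ g (A xb + A x) := by
    intro x
    have h0 : ((p ((xb + x) - xb) : ℝ) : EReal) ≤ g (A (xb + x)) - g (A xb) := hp (xb + x)
    rw [hgA] at h0
    have h1 := coe_le_sub_iff.1 h0
    rw [add_sub_cancel_left] at h1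
    rw [map_add] at h1
    rw [show p x + γ = γ + p x by ring] at h1
    exact h1
  -- epigraph
  set epi : Set (Y × ℝ) := {q : Y × ℝ | g q.1 ≤ (q.2 : EReal)} with hepi
  have hepiconv : Convex ℝ epi := hg
  have hepicl : IsClosed epi := lsc_epi_closed hlsc
  have hepibase : ((A xb, γ) : Y × ℝ) ∈ epi := by
    simp only [hepi, Set.mem_setOf_eq]
    rw [hgA]
  -- the key convex set C
  set C : Set ↥L :=
    {v : ↥L | ∃ x : X, ‖x‖ ≤ 1 ∧ g (A xb + A x + ↑v) ≤ ((γ + p x + 1 : ℝ) : EReal)} with hC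
  have combo_eq : ∀ (a b : ℝ), a + b = 1 → ∀ (x₁ x₂ : X) (w₁ w₂ : Y),
      A xb + A (a • x₁ + b • x₂) + (a • w₁ + b • w₂)
        = a • (A xb + A x₁ + w₁) + b • (A xb + A x₂ + w₂) := by
    intro a b hab x₁ x₂ w₁ w₂
    rw [map_add, map_smul, map_smul]
    match_scalars <;> linarith
  have hCconv : Convex ℝ C := by
    rintro v₁ ⟨x₁, hx₁, h₁⟩ v₂ ⟨x₂, hx₂, h₂⟩ a b ha hb hab
    refine ⟨a • x₁ + b • x₂, ?_, ?_⟩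
    · calc ‖a • x₁ + b • x₂‖ ≤ ‖a • x₁‖ + ‖b • x₂‖ := norm_add_le _ _
        _ = a * ‖x₁‖ + b * ‖x₂‖ := by
            rw [norm_smul, norm_smul, Real.norm_eq_abs, Real.norm_eq_abs,
              abs_of_nonneg ha, abs_of_nonneg hb]
        _ ≤ a * 1 + b * 1 := by
            apply add_le_add <;> apply mul_le_mul_of_nonneg_left <;> assumption
        _ = 1 := by linarith
    · have hmem := hepiconv (x := (A xb + A x₁ + ↑v₁, γ + p x₁ + 1)) h₁
        (y := (A xb + A x₂ + ↑v₂, γ + p x₂ + 1)) h₂ ha hb hab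
      simp only [hepi, Set.mem_setOf_eq, Prod.smul_mk, Prod.mk_add_mk, smul_eq_mul] at hmem
      have e1 := combo_eq a b hab x₁ x₂ (↑v₁) (↑v₂)
      have e2 : a * (γ + p x₁ + 1) + b * (γ + p x₂ + 1) = γ + p (a • x₁ + b • x₂) + 1 := by
        simp only [map_add, map_smul, smul_eq_mul]
        linear_combination (γ + 1) * hab
      rw [e1.symm, e2] at hmem
      have ecoe : ((a • v₁ + b • v₂ : ↥L) : Y) = a • (↑v₁ : Y) + b • (↑v₂ : Y) := by
        simp
      rw [← ecoe] at hmem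
      exact hmem
  have h0C : (0 : ↥L) ∈ C := by
    refine ⟨0, by simp, ?_⟩
    simp only [map_zero, add_zero, Submodule.coe_zero, hgA]
    rw [EReal.coe_le_coe_iff]
    linarith
  have hstar : ∀ v ∈ C, ∀ t : ℝ, 0 ≤ t → t ≤ 1 → t • v ∈ C := by
    intro v hv t ht ht1
    have := hCconv hv h0C ht (by linarith : (0:ℝ) ≤ 1 - t) (by ring)
    simpa using this
  -- absorption
  have habs : ∀ w : ↥L, ∃ t : ℝ, 0 < t ∧ t • w ∈ C := by
    intro w
    have hmem : -(↑w : Y) ∈ posSpan (Set.range ⇑A - domE g) := by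
      rw [hL]; exact L.neg_mem w.2
    obtain ⟨t₀, ht₀, v, hv, hw⟩ := hmem
    obtain ⟨v₁, hv₁, y', hy', rfl⟩ := Set.mem_sub.1 hv
    obtain ⟨x', rfl⟩ := hv₁
    -- y' = A xb + A (x' - xb) + t₀⁻¹ • ↑w
    have ht₀' : t₀ ≠ 0 := ne_of_gt ht₀
    have he : A xb + A (x' - xb) + t₀⁻¹ • (↑w : Y) = y' := by
      have hw' : (↑w : Y) = -(t₀ • (A x' - y')) := by rw [← hw, neg_neg]
      have : t₀⁻¹ • (↑w : Y) = y' - A x' := by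
        rw [hw', smul_neg, smul_smul, inv_mul_cancel₀ ht₀', one_smul, neg_sub]
      rw [this, map_sub]
      abel
    set x₁ : X := x' - xb with hx₁
    set M : ℝ := (g y').toReal with hM
    have hgy' : g y' = (M : EReal) := (EReal.coe_toReal hy' (hgbot _)).symm
    set θ : ℝ := min 1 (1 / (1 + |M - γ - p x₁| + ‖x₁‖)) with hθ
    have hden : (0:ℝ) < 1 + |M - γ - p x₁| + ‖x₁‖ := by positivity
    have hθpos : 0 < θ := lt_min one_pos (by positivity)
    have hθ1 : θ ≤ 1 := min_le_left _ _
    have hθ2 : θ ≤ 1 / (1 + |M - γ - p x₁| + ‖x₁‖) := min_le_right _ _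
    refine ⟨θ * t₀⁻¹, by positivity, ?_⟩
    refine ⟨θ • x₁, ?_, ?_⟩
    · rw [norm_smul, Real.norm_eq_abs, abs_of_pos hθpos]
      calc θ * ‖x₁‖ ≤ (1 / (1 + |M - γ - p x₁| + ‖x₁‖)) * ‖x₁‖ := by
            apply mul_le_mul_of_nonneg_right hθ2 (norm_nonneg _)
        _ ≤ 1 := by
            rw [div_mul_eq_mul_div, div_le_one hden]
            have := abs_nonneg (M - γ - p x₁)
            linarith
    · -- epigraph combination of (y', M) and (A xb, γ) with weights θ, 1-θ
      have hy'epi : ((y', M) : Y × ℝ) ∈ epi := by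
        simp only [hepi, Set.mem_setOf_eq]
        rw [hgy']
      have hmem2 := hepiconv hy'epi hepibase (le_of_lt hθpos)
        (by linarith : (0:ℝ) ≤ 1 - θ) (by ring)
      simp only [hepi, Set.mem_setOf_eq, Prod.smul_mk, Prod.mk_add_mk, smul_eq_mul] at hmem2
      have e1 : θ • y' + (1 - θ) • A xb = A xb + A (θ • x₁) + ((θ * t₀⁻¹) • (↑w : Y)) := by
        rw [← he, map_smul]
        rw [show (θ * t₀⁻¹) • (↑w : Y) = θ • (t₀⁻¹ • (↑w:Y)) from smul_smul θ t₀⁻¹ _ |>.symm]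
        match_scalars <;> ring
      rw [e1] at hmem2
      have ecoe : (((θ * t₀⁻¹) • w : ↥L) : Y) = (θ * t₀⁻¹) • (↑w : Y) := by simp
      rw [← ecoe] at hmem2
      refine le_trans hmem2 ?_
      rw [EReal.coe_le_coe_iff]
      have habs' : M - γ - p x₁ ≤ |M - γ - p x₁| := le_abs_self _
      have hθ3 : θ * (M - γ - p x₁) ≤ 1 := by
        rcases le_or_gt (M - γ - p x₁) 0 with hneg | hposx
        · nlinarith
        · have hs1 : θ * (M - γ - p x₁) ≤ (1 / (1 + |M - γ - p x₁| + ‖x₁‖)) * (M - γ - p x₁) :=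
            mul_le_mul_of_nonneg_right hθ2 (le_of_lt hposx)
          have hs2 : (1 / (1 + |M - γ - p x₁| + ‖x₁‖)) * (M - γ - p x₁) ≤ 1 := by
            rw [div_mul_eq_mul_div, div_le_one hden]
            have := norm_nonneg x₁
            linarith
          linarith
      simp only [map_smul, smul_eq_mul]
      nlinarith [hθ3]
  -- convex-series closedness of C
  have hcs : ∀ (t : ℕ → ℝ) (v : ℕ → ↥L) (w : ↥L), (∀ n, 0 ≤ t n) → HasSum t 1 →
      (∀ n, v n ∈ C) → HasSum (fun n => t n • v n) w → w ∈ C := by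
    intro t v w ht0 ht1 hvC hw
    choose x hx1 hx2 using hvC
    have hsum : Summable (fun n => t n • x n) := by
      apply Summable.of_norm_bounded ht1.summable
      intro n
      rw [norm_smul, Real.norm_eq_abs, abs_of_nonneg (ht0 n)]
      nlinarith [hx1 n, ht0 n, norm_nonneg (x n)]
    obtain ⟨xs, hxs⟩ := hsum
    have hxsnorm : ‖xs‖ ≤ 1 := by
      have hn : Summable (fun n => ‖t n • x n‖) := by
        apply Summable.of_nonneg_of_le (fun n => norm_nonneg _) _ ht1.summable
        intro n
        rw [norm_smul, Real.norm_eq_abs, abs_of_nonneg (ht0 n)]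
        nlinarith [hx1 n, ht0 n, norm_nonneg (x n)]
      have h1 : ‖xs‖ = ‖∑' n, t n • x n‖ := by rw [hxs.tsum_eq]
      rw [h1]
      refine le_trans (norm_tsum_le_tsum_norm hn) ?_
      have h2 : ∑' n, ‖t n • x n‖ ≤ ∑' n, t n := by
        apply Summable.tsum_le_tsum _ hn ht1.summable
        intro n
        rw [norm_smul, Real.norm_eq_abs, abs_of_nonneg (ht0 n)]
        nlinarith [hx1 n, ht0 n, norm_nonneg (x n)]
      rw [ht1.tsum_eq] at h2
      exact h2
    -- the epigraph points
    set z : ℕ → Y × ℝ := fun n => (A xb + A (x n) + ↑(v n), γ + p (x n) + 1) with hz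
    have hzepi : ∀ n, z n ∈ epi := fun n => hx2 n
    -- HasSum of the first components
    have hfst : HasSum (fun n => t n • (A xb + A (x n) + ↑(v n) : Y))
        (A xb + A xs + ↑w) := by
      have h1 : HasSum (fun n => t n • A xb) ((1:ℝ) • A xb) := ht1.smul_const (A xb)
      have h2 : HasSum (fun n => A (t n • x n)) (A xs) := A.hasSum hxs
      have h3 : HasSum (fun n => (↑(t n • v n) : Y)) (↑w : Y) := by
        have h3' := L.subtypeL.hasSum hw
        simpa only [Submodule.subtypeL_apply] using h3'
      have h4 := (h1.add h2).add h3
      rw [one_smul] at h4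
      have he : (fun n => t n • (A xb + A (x n) + ↑(v n) : Y))
          = fun n => (t n • A xb + A (t n • x n)) + (↑(t n • v n) : Y) := by
        funext n
        rw [map_smul]
        push_cast
        rw [smul_add, smul_add]
      rw [he]
      exact h4
    have hsnd : HasSum (fun n => t n * (γ + p (x n) + 1)) (γ + p xs + 1) := by
      have h1 : HasSum (fun n => t n * γ) ((1:ℝ) * γ) := ht1.mul_right γ
      have h2 : HasSum (fun n => p (t n • x n)) (p xs) := p.hasSum hxs
      have h3 := (h1.add h2).add ht1
      rw [one_mul] at h3
      have he : (fun n => t n * (γ + p (x n) + 1))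
          = fun n => (t n * γ + p (t n • x n)) + t n := by
        funext n
        rw [map_smul]
        simp only [smul_eq_mul]
        ring
      rw [he]
      exact h3
    have hZ : HasSum (fun n => t n • z n) ((A xb + A xs + ↑w, γ + p xs + 1) : Y × ℝ) := by
      have := hfst.prodMk hsnd
      convert this using 1
      rfl
    have hZepi := closed_convex_csClosed hepiconv hepicl t z _ ht0 ht1 hzepi hZ
    exact ⟨xs, hxsnorm, hZepi⟩
  -- Baire category: closure of C has nonempty interior, and 0 is an interior point
  have hcover : (⋃ n : ℕ, closure ((((n : ℝ) + 1)) • C)) = Set.univ := by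
    apply Set.eq_univ_of_forall
    intro w
    obtain ⟨t, ht, htw⟩ := habs w
    obtain ⟨n, hn⟩ := exists_nat_ge t⁻¹
    have hn1 : t⁻¹ ≤ (n : ℝ) + 1 := by linarith
    have hnpos : (0:ℝ) < (n : ℝ) + 1 := by positivity
    have hθmem : (((n:ℝ)+1)⁻¹ * t⁻¹) • (t • w) ∈ C := by
      apply hstar _ htw
      · positivity
      · have h2 : ((n:ℝ)+1)⁻¹ * t⁻¹ = t⁻¹ / ((n:ℝ)+1) := by ring
        rw [h2, div_le_one hnpos]
        exact hn1
    refine Set.mem_iUnion.2 ⟨n, subset_closure ?_⟩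
    refine Set.mem_smul_set.2 ⟨_, hθmem, ?_⟩
    have hsc : ((n:ℝ)+1) * (((n:ℝ)+1)⁻¹ * t⁻¹) * t = 1 := by field_simp
    rw [smul_smul, smul_smul, hsc, one_smul]
  obtain ⟨n, hne⟩ := nonempty_interior_of_iUnion_of_closed
    (fun n : ℕ => isClosed_closure) hcover
  obtain ⟨z₁, hz₁⟩ := hne
  have hnne : ((n:ℝ)+1) ≠ 0 := by positivity
  rw [closure_smul₀' hnne, interior_smul₀ hnne] at hz₁
  obtain ⟨z₀, hz₀int, rfl⟩ := hz₁
  -- 0 is interior point of closure C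
  obtain ⟨t, ht, htm⟩ := habs (-z₀)
  have hcomb := (hCconv.closure).combo_interior_closure_mem_interior hz₀int
    (subset_closure (subset_closure htm)) (a := t/(1+t)) (b := 1/(1+t))
    (by positivity) (by positivity) (by field_simp; ring)
  have hcombeq : (t/(1+t)) • z₀ + (1/(1+t)) • (t • (-z₀)) = (0 : ↥L) := by
    rw [smul_smul, show (1/(1+t)) * t = t/(1+t) by ring, smul_neg, add_neg_cancel]
  rw [hcombeq] at hcomb
  -- a ball inside closure C
  obtain ⟨δ, hδpos, hball⟩ := Metric.mem_nhds_iff.1 (mem_interior_iff_mem_nhds.1 hcomb)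
  -- every small ball point is in C (cs-closedness upgrade)
  have hballC : ∀ w : ↥L, ‖w‖ < δ → w ∈ C := by
    intro w hw
    set r : ℝ := δ - ‖w‖ with hr
    have hrpos : 0 < r := by rw [hr]; linarith
    have hballw : ∀ z : ↥L, ‖z - w‖ < r → z ∈ closure C := by
      intro z hz
      apply hball
      rw [Metric.mem_ball, dist_zero_right]
      calc ‖z‖ = ‖(z - w) + w‖ := by rw [sub_add_cancel]
        _ ≤ ‖z - w‖ + ‖w‖ := norm_add_le _ _
        _ < r + ‖w‖ := by linarith
        _ = δ := by rw [hr]; ring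
    classical
    set sel : ↥L → ℕ → ↥L := fun z n =>
      if h : ∃ c ∈ C, ‖z - c‖ < r * (2⁻¹ : ℝ)^(n+2) then h.choose else 0 with hsel
    set u : ℕ → ↥L := fun n => Nat.rec w (fun n z => (2:ℝ) • z - sel z n) n with hu
    have hu0 : u 0 = w := rfl
    have hustep : ∀ n, u (n+1) = (2:ℝ) • (u n) - sel (u n) n := fun n => rfl
    have hex : ∀ n, ‖u n - w‖ < r → ∃ c ∈ C, ‖u n - c‖ < r * (2⁻¹:ℝ)^(n+2) := by
      intro n hn
      have hcl : u n ∈ closure C := hballw _ hn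
      have hpos : 0 < r * (2⁻¹:ℝ)^(n+2) := by positivity
      obtain ⟨c, hcC, hc⟩ := Metric.mem_closure_iff.1 hcl _ hpos
      exact ⟨c, hcC, by rwa [← dist_eq_norm]⟩
    have hltr : ∀ n, ‖u n - w‖ ≤ r/2 - r * (2⁻¹:ℝ)^(n+1) → ‖u n - w‖ < r := by
      intro n h
      have h1 : (0:ℝ) < r * (2⁻¹:ℝ)^(n+1) := by positivity
      linarith
    have hinv : ∀ n, ‖u n - w‖ ≤ r/2 - r * (2⁻¹:ℝ)^(n+1) := by
      intro n
      induction n with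
      | zero =>
          rw [hu0, sub_self, norm_zero]
          rw [pow_one]
          linarith
      | succ n ih =>
          have hexn := hex n (hltr n ih)
          have hsc : sel (u n) n ∈ C ∧ ‖u n - sel (u n) n‖ < r * (2⁻¹:ℝ)^(n+2) := by
            rw [hsel]
            simp only
            rw [dif_pos hexn]
            obtain ⟨hc1, hc2⟩ := hexn.choose_spec
            exact ⟨hc1, hc2⟩
          have heq : u (n+1) - w = (u n - w) + (u n - sel (u n) n) := by
            rw [hustep n, two_smul]
            abel
          have hb := norm_add_le (u n - w) (u n - sel (u n) n)
          rw [← heq] at hb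
          have hpow : (2⁻¹:ℝ)^(n+2) = (2⁻¹:ℝ)^(n+1) * 2⁻¹ := pow_succ _ _
          have hb2 : ‖u (n+1) - w‖ ≤ (r/2 - r * (2⁻¹:ℝ)^(n+1)) + r * (2⁻¹:ℝ)^(n+2) := by
            have := hsc.2
            linarith
          rw [hpow] at hb2 ⊢
          linarith
    have hscall : ∀ n, sel (u n) n ∈ C ∧ ‖u n - sel (u n) n‖ < r * (2⁻¹:ℝ)^(n+2) := by
      intro n
      have hexn := hex n (hltr n (hinv n))
      rw [hsel]
      simp only
      rw [dif_pos hexn]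
      obtain ⟨hc1, hc2⟩ := hexn.choose_spec
      exact ⟨hc1, hc2⟩
    set c : ℕ → ↥L := fun n => sel (u n) n with hcdef
    have htel : ∀ n, ∑ k ∈ Finset.range n, ((2⁻¹:ℝ))^(k+1) • c k
        = w - ((2⁻¹:ℝ))^n • u n := by
      intro n
      induction n with
      | zero => simp [hu0]
      | succ n ih =>
          rw [Finset.sum_range_succ, ih, hcdef]
          have hun1 : ((2⁻¹:ℝ))^(n+1) • u (n+1)
              = ((2⁻¹:ℝ))^n • u n - ((2⁻¹:ℝ))^(n+1) • sel (u n) n := by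
            rw [hustep n, smul_sub, smul_smul]
            congr 2
            rw [pow_succ]
            ring
          rw [hun1]
          abel
    have hnorm_u : ∀ n, ‖u n‖ ≤ ‖w‖ + r := by
      intro n
      have h1 := hinv n
      have h2 : ‖u n‖ - ‖w‖ ≤ ‖u n - w‖ := by
        have := norm_sub_norm_le (u n) w
        linarith [this]
      have h3 : (0:ℝ) < r * (2⁻¹:ℝ)^(n+1) := by positivity
      linarith
    have hlim0 : Tendsto (fun n => ((2⁻¹:ℝ))^n • u n) atTop (nhds 0) := by
      have hb : ∀ n, ‖((2⁻¹:ℝ))^n • u n‖ ≤ (‖w‖+r) * (2⁻¹:ℝ)^n := by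
        intro n
        rw [norm_smul, Real.norm_eq_abs, abs_of_nonneg (by positivity), mul_comm]
        apply mul_le_mul_of_nonneg_right (hnorm_u n) (by positivity)
      have hg : Tendsto (fun n : ℕ => (‖w‖+r) * (2⁻¹:ℝ)^n) atTop (nhds 0) := by
        have h0 := tendsto_pow_atTop_nhds_zero_of_lt_one
          (by norm_num : (0:ℝ) ≤ 2⁻¹) (by norm_num : (2⁻¹:ℝ) < 1)
        have h1 := h0.const_mul (‖w‖+r)
        simpa using h1
      exact squeeze_zero_norm hb hg
    have hpartial : Tendsto (fun n => ∑ k ∈ Finset.range n, ((2⁻¹:ℝ))^(k+1) • c k)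
        atTop (nhds w) := by
      have heq : (fun n => ∑ k ∈ Finset.range n, ((2⁻¹:ℝ))^(k+1) • c k)
          = fun n => w - ((2⁻¹:ℝ))^n • u n := funext htel
      rw [heq]
      simpa using tendsto_const_nhds.sub hlim0
    have hsgeo : Summable (fun n : ℕ => ((2⁻¹:ℝ))^(n+1)) := by
      have h := (summable_geometric_of_lt_one (by norm_num : (0:ℝ) ≤ 2⁻¹)
        (by norm_num : (2⁻¹:ℝ) < 1)).mul_right (2⁻¹:ℝ)
      simpa [pow_succ] using h
    have hcsummable : Summable (fun n => ((2⁻¹:ℝ))^(n+1) • c n) := by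
      apply Summable.of_norm_bounded (g := fun n => (‖w‖ + 2*r) * ((2⁻¹:ℝ))^(n+1))
        (hsgeo.mul_left _)
      intro n
      rw [norm_smul, Real.norm_eq_abs, abs_of_nonneg (by positivity), mul_comm]
      apply mul_le_mul_of_nonneg_right _ (by positivity)
      have h1 : ‖c n‖ ≤ ‖c n - u n‖ + ‖u n - w‖ + ‖w‖ := by
        have heq : c n = (c n - u n) + (u n - w) + w := by abel
        calc ‖c n‖ = ‖(c n - u n) + (u n - w) + w‖ := by rw [← heq]
          _ ≤ ‖(c n - u n) + (u n - w)‖ + ‖w‖ := norm_add_le _ _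
          _ ≤ ‖c n - u n‖ + ‖u n - w‖ + ‖w‖ := by
              have := norm_add_le (c n - u n) (u n - w)
              linarith
      have h2 : ‖c n - u n‖ < r * (2⁻¹:ℝ)^(n+2) := by
        rw [norm_sub_rev]
        exact (hscall n).2
      have h3 : r * (2⁻¹:ℝ)^(n+2) ≤ r := by
        have hp2 : (2⁻¹:ℝ)^(n+2) ≤ 1 := by
          apply pow_le_one₀ (by norm_num) (by norm_num)
        nlinarith
      have h4 := hinv n
      have h5 : (0:ℝ) < r * (2⁻¹:ℝ)^(n+1) := by positivity
      linarith
    have htsum : HasSum (fun n => ((2⁻¹:ℝ))^(n+1) • c n) w := by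
      have h1 := hcsummable.hasSum
      have h2 := h1.tendsto_sum_nat
      have h3 := tendsto_nhds_unique h2 hpartial
      rwa [h3] at h1
    have hgeo1 : HasSum (fun n : ℕ => ((2⁻¹:ℝ))^(n+1)) 1 := by
      have h := hasSum_geometric_two' 1
      have he : (fun n : ℕ => (1:ℝ)/2/2^n) = fun n : ℕ => ((2⁻¹:ℝ))^(n+1) := by
        funext n
        rw [pow_succ, inv_pow]
        field_simp
      rwa [he] at h
    exact hcs _ c w (fun n => by positivity) hgeo1 (fun n => (hscall n).1) htsum
  -- real-value extraction helper
  have hreal : ∀ (y : Y) (cc : ℝ), g y < (cc : EReal) → ∃ s : ℝ, g y = (s : EReal) ∧ s < cc := by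
    intro y cc h
    have hne : g y ≠ ⊤ := ne_top_of_lt h
    refine ⟨(g y).toReal, (EReal.coe_toReal hne (hgbot y)).symm, ?_⟩
    rw [← EReal.coe_lt_coe_iff, EReal.coe_toReal hne (hgbot y)]
    exact h
  -- the separation set
  set E₁ : Set (↥L × ℝ) :=
    {z : ↥L × ℝ | ∃ x : X, g (A xb + A x + ↑z.1) < ((γ + p x + z.2 : ℝ) : EReal)} with hE₁
  have hE₁conv : Convex ℝ E₁ := by
    rintro ⟨v₁, r₁⟩ ⟨x₁, h₁⟩ ⟨v₂, r₂⟩ ⟨x₂, h₂⟩ a b ha hb hab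
    obtain ⟨s₁, hs₁val, hs₁lt⟩ := hreal _ _ h₁
    obtain ⟨s₂, hs₂val, hs₂lt⟩ := hreal _ _ h₂
    refine ⟨a • x₁ + b • x₂, ?_⟩
    have hmem := hepiconv (x := (A xb + A x₁ + ↑v₁, s₁))
      (by simp only [hepi, Set.mem_setOf_eq]; rw [hs₁val])
      (y := (A xb + A x₂ + ↑v₂, s₂))
      (by simp only [hepi, Set.mem_setOf_eq]; rw [hs₂val]) ha hb hab
    simp only [hepi, Set.mem_setOf_eq, Prod.smul_mk, Prod.mk_add_mk, smul_eq_mul] at hmem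
    have e1 := combo_eq a b hab x₁ x₂ (↑v₁) (↑v₂)
    have ecoe : ((a • v₁ + b • v₂ : ↥L) : Y) = a • (↑v₁ : Y) + b • (↑v₂ : Y) := by simp
    simp only [Prod.smul_mk, Prod.mk_add_mk, smul_eq_mul]
    rw [ecoe, e1]
    refine lt_of_le_of_lt hmem ?_
    rw [EReal.coe_lt_coe_iff]
    set m : ℝ := min (γ + p x₁ + r₁ - s₁) (γ + p x₂ + r₂ - s₂) with hm
    have hmpos : 0 < m := lt_min (by linarith) (by linarith)
    have hm1 : a * m ≤ a * (γ + p x₁ + r₁ - s₁) :=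
      mul_le_mul_of_nonneg_left (min_le_left _ _) ha
    have hm2 : b * m ≤ b * (γ + p x₂ + r₂ - s₂) :=
      mul_le_mul_of_nonneg_left (min_le_right _ _) hb
    have hsum : a * m + b * m = m := by
      rw [← add_mul, hab, one_mul]
    have e3 : a * γ + b * γ = γ := by rw [← add_mul, hab, one_mul]
    simp only [map_add, map_smul, smul_eq_mul]
    nlinarith [hm1, hm2, hsum, hmpos, e3]
  have hboxE : Metric.ball (0 : ↥L) δ ×ˢ Set.Ioi (1:ℝ) ⊆ E₁ := by
    rintro ⟨v, r⟩ ⟨hv, hr⟩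
    have hvC : v ∈ C := by
      apply hballC
      have := Metric.mem_ball.1 hv
      rwa [dist_zero_right] at this
    obtain ⟨x, -, hx2⟩ := hvC
    refine ⟨x, lt_of_le_of_lt hx2 ?_⟩
    rw [EReal.coe_lt_coe_iff]
    have : (1:ℝ) < r := hr
    linarith
  have hzstar : (((0:↥L), (2:ℝ)) : ↥L × ℝ) ∈ interior E₁ := by
    apply interior_maximal hboxE (Metric.isOpen_ball.prod isOpen_Ioi)
    exact ⟨Metric.mem_ball_self hδpos, by norm_num⟩
  have hnot : (((0:↥L), (0:ℝ)) : ↥L × ℝ) ∉ E₁ := by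
    rintro ⟨x, hx⟩
    simp only [Submodule.coe_zero, add_zero] at hx
    exact absurd hx (not_lt.2 (by simpa using hkey x))
  obtain ⟨f, hf⟩ := geometric_hahn_banach_open_point (hE₁conv.interior) isOpen_interior
    (fun h => hnot (interior_subset h))
  have hf0 : f (((0:↥L), (0:ℝ)) : ↥L × ℝ) = 0 := by
    have he : (((0:↥L), (0:ℝ)) : ↥L × ℝ) = (0 : ↥L × ℝ) := rfl
    rw [he, map_zero]
  have hfu : ∀ z ∈ interior E₁, f z < 0 := by
    intro z hz
    have := hf z hz
    rwa [hf0] at this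
  have hfle : ∀ z ∈ E₁, f z ≤ 0 := le_on_of_lt_on_interior hE₁conv hzstar f 0 hfu
  set ℓ : ↥L →L[ℝ] ℝ := f.comp (ContinuousLinearMap.inl ℝ ↥L ℝ) with hℓ
  set c : ℝ := f (0, 1) with hcc
  have hfdec : ∀ (v : ↥L) (r : ℝ), f (v, r) = ℓ v + c * r := by
    intro v r
    have he : ((v, r) : ↥L × ℝ) = (v, (0:ℝ)) + r • ((0:↥L), (1:ℝ)) := by
      simp [Prod.ext_iff]
    rw [he, map_add, map_smul]
    simp only [smul_eq_mul, hℓ, ContinuousLinearMap.comp_apply, ContinuousLinearMap.inl_apply]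
    ring
  have hJ1 : ∀ (x : X) (v : ↥L) (s : ℝ),
      g (A xb + A x + ↑v) ≤ ((γ + p x + s : ℝ) : EReal) → ℓ v + c * s ≤ 0 := by
    intro x v s h
    apply affine_limit
    intro r hr
    have hmem : ((v, r) : ↥L × ℝ) ∈ E₁ := by
      refine ⟨x, lt_of_le_of_lt h ?_⟩
      rw [EReal.coe_lt_coe_iff]
      linarith
    have := hfle _ hmem
    rwa [hfdec] at this
  have hclt : c < 0 := by
    have h1 := hfu _ hzstar
    rw [hfdec] at h1
    rw [map_zero] at h1
    linarith
  have hcpos : (0:ℝ) < -c := by linarith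
  set q₀ : ↥L →L[ℝ] ℝ := (-c)⁻¹ • ℓ with hq₀
  have hK : ∀ (x : X) (v : ↥L) (s : ℝ),
      g (A xb + A x + ↑v) ≤ ((γ + p x + s : ℝ) : EReal) → q₀ v ≤ s := by
    intro x v s h
    have h1 := hJ1 x v s h
    have h2 : q₀ v = (-c)⁻¹ * ℓ v := by
      simp [hq₀]
    rw [h2, inv_mul_le_iff₀ hcpos]
    linarith
  obtain ⟨q, hq, -⟩ := exists_extension_norm_eq L q₀
  have hK' : ∀ (x : X) (wy : Y) (s : ℝ),
      g (A xb + A x + wy) ≤ ((γ + p x + s : ℝ) : EReal) → q wy ≤ s := by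
    intro x wy s h
    have hne : g (A xb + A x + wy) ≠ ⊤ := by
      intro htop
      rw [htop, top_le_iff] at h
      exact EReal.coe_ne_top _ h
    have hwL : wy ∈ L := by
      have h1 := hdomL _ hne
      have h2 := L.sub_mem h1 (L.add_mem hAxbL (hAL x))
      rw [add_sub_cancel_left] at h2
      exact h2
    have h3 := hK x ⟨wy, hwL⟩ s h
    rw [← hq ⟨wy, hwL⟩] at h3
    exact h3
  refine ⟨q, ?_, ?_⟩
  · intro y
    rw [hgA, coe_le_sub_iff]
    by_cases hgy : g y = ⊤
    · rw [hgy]; exact le_top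
    · have hgys : g y = ((g y).toReal : EReal) := (EReal.coe_toReal hgy (hgbot _)).symm
      set s : ℝ := (g y).toReal with hs
      have happ : g (A xb + A 0 + (y - A xb)) ≤ ((γ + p 0 + (s - γ) : ℝ) : EReal) := by
        rw [map_zero, add_zero, map_zero]
        rw [show A xb + (y - A xb) = y from add_sub_cancel _ _]
        rw [show γ + 0 + (s - γ) = s by ring]
        exact le_of_eq hgys
      have h1 := hK' 0 (y - A xb) (s - γ) happ
      rw [hgys, EReal.coe_le_coe_iff]
      linarith
  · refine ContinuousLinearMap.ext fun w => ?_
    simp only [ContinuousLinearMap.comp_apply]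
    have h1 : q (A w) ≤ p w := by
      apply hK' (-w) (A w) (p w)
      rw [map_neg, map_neg]
      rw [show A xb + -(A w) + A w = A xb by abel]
      rw [show γ + -(p w) + p w = γ by ring, hgA]
    have h2 : p w ≤ q (A w) := by
      have h3 : g (A xb + A w + (-(A w))) ≤ ((γ + p w + (-(p w)) : ℝ) : EReal) := by
        rw [show A xb + A w + -(A w) = A xb by abel]
        rw [show γ + p w + -(p w) = γ by ring, hgA]
      have h4 := hK' w (-(A w)) (-(p w)) h3
      rw [map_neg] at h4
      linarith
    exact le_antisymm h1 h2


/-- Build a `NormedAddCommGroup` structure compatible with a pre-existing topology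
from the data of `IsBanach`. -/
@[reducible]
noncomputable def normedOfIsBanach {E : Type*} [AddCommGroup E] [Module ℝ E]
    [TopologicalSpace E] (nm : E → ℝ)
    (h1 : ∀ x, nm x = 0 ↔ x = 0) (h2 : ∀ x y, nm (x + y) ≤ nm x + nm y)
    (h3 : ∀ (c : ℝ) (x : E), nm (c • x) = |c| * nm x)
    (h4 : ∀ s : Set E, IsOpen s ↔ ∀ x ∈ s, ∃ ε > 0, ∀ y, nm (y - x) < ε → y ∈ s) :
    NormedAddCommGroup E := by
  have nm0 : nm 0 = 0 := (h1 0).2 rfl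
  have nmneg : ∀ x, nm (-x) = nm x := by
    intro x
    have := h3 (-1) x
    simpa using this
  have nmsub : ∀ x y : E, nm (x - y) = nm (y - x) := by
    intro x y
    rw [← nmneg (x - y), neg_sub]
  refine
    { toMetricSpace := MetricSpace.ofDistTopology (fun a b => nm (a - b)) ?_ ?_ ?_ ?_ ?_
      norm := nm
      dist_eq := fun a b => by show nm (a - b) = nm (-a + b); rw [neg_add_eq_sub]; exact nmsub a b }
  · intro x
    show nm (x - x) = 0
    rw [sub_self]
    exact nm0
  · intro x y
    exact nmsub x y
  · intro x y z
    show nm (x - z) ≤ nm (x - y) + nm (y - z)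
    have he : x - z = (x - y) + (y - z) := by abel
    rw [he]
    exact h2 _ _
  · intro s
    rw [h4 s]
    constructor
    · intro h x hx
      obtain ⟨ε, hε, hy⟩ := h x hx
      refine ⟨ε, hε, fun y hxy => hy y ?_⟩
      have hxy' : nm (x - y) < ε := hxy
      rwa [nmsub] at hxy'
    · intro h x hx
      obtain ⟨ε, hε, hy⟩ := h x hx
      refine ⟨ε, hε, fun y hxy => hy y ?_⟩
      have hxy' : nm (y - x) < ε := hxy
      rwa [nmsub] at hxy'
  · intro x y hxy
    have : x - y = 0 := (h1 _).1 hxy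
    exact sub_eq_zero.1 this


end ChainAux

set_option maxHeartbeats 4000000 in
/-- the subdifferential chain rule
`∂(g ∘ A)(x̄) = A* ∂g(A x̄)` for all `x̄ ∈ dom (g ∘ A)`, under either (i) continuity of
`g` at a point of `AX`, or (ii) `X, Y` Banach, `g` l.s.c. and `ℝ⁺(AX - dom g)` a
closed linear subspace of `Y`. -/
theorem subdifferential_chain_rule
    {X Y : Type*} [AddCommGroup X] [Module ℝ X] [TopologicalSpace X]
    [IsTopologicalAddGroup X] [ContinuousSMul ℝ X] [LocallyConvexSpace ℝ X] [T2Space X]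
    [AddCommGroup Y] [Module ℝ Y] [TopologicalSpace Y]
    [IsTopologicalAddGroup Y] [ContinuousSMul ℝ Y] [LocallyConvexSpace ℝ Y] [T2Space Y]
    (A : X →L[ℝ] Y) (g : Y → EReal)
    (hgbot : ∀ y, g y ≠ ⊥) (hgdom : (domE g).Nonempty) (hg : ConvexE g)
    (hcase :
      (∃ x : X, g (A x) ≠ ⊤ ∧ ContinuousAt g (A x)) ∨
      (IsBanach X ∧ IsBanach Y ∧ LowerSemicontinuous g ∧
        ∃ L : Submodule ℝ Y, IsClosed (L : Set Y) ∧
          posSpan (Set.range A - domE g) = (L : Set Y))) :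
    ∀ xb : X, g (A xb) ≠ ⊤ →
      subdiffE (fun x => g (A x)) xb
        = (fun q : Y →L[ℝ] ℝ => q.comp A) '' subdiffE g (A xb) := by
  intro xb hxb
  apply Set.Subset.antisymm
  · intro p hp
    rcases hcase with ⟨x₀, hx₀, hcont⟩ | ⟨hBX, hBY, hlsc, L, hLc, hL⟩
    · obtain ⟨q, hq1, hq2⟩ := ChainAux.case_i A g hgbot hg x₀ hx₀ hcont xb hxb p hp
      exact ⟨q, hq1, hq2⟩
    · obtain ⟨nx, hx1, hx2, hx3, hx4, hx5⟩ := hBX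
      obtain ⟨ny, hy1, hy2, hy3, hy4, hy5⟩ := hBY
      letI : NormedAddCommGroup X := ChainAux.normedOfIsBanach nx hx1 hx2 hx3 hx4
      letI : NormedAddCommGroup Y := ChainAux.normedOfIsBanach ny hy1 hy2 hy3 hy4
      letI : NormedSpace ℝ X := ⟨fun c x => by
        rw [Real.norm_eq_abs]
        exact le_of_eq (hx3 c x)⟩
      letI : NormedSpace ℝ Y := ⟨fun c y => by
        rw [Real.norm_eq_abs]
        exact le_of_eq (hy3 c y)⟩
      letI : CompleteSpace X := Metric.complete_of_cauchySeq_tendsto (fun u hu =>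
        hx5 u (Metric.cauchySeq_iff.1 hu))
      letI : CompleteSpace Y := Metric.complete_of_cauchySeq_tendsto (fun u hu =>
        hy5 u (Metric.cauchySeq_iff.1 hu))
      obtain ⟨q, hq1, hq2⟩ := ChainAux.case_ii A g hgbot hg hlsc L hLc hL xb hxb p hp
      exact ⟨q, hq1, hq2⟩
  · rintro q' ⟨q, hq, rfl⟩
    intro x
    show ((q.comp A) (x - xb) : EReal) ≤ g (A x) - g (A xb)
    have he : (q.comp A) (x - xb) = q (A x - A xb) := by
      simp [map_sub]
    rw [he]
    exact hq (A x)
end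

section
/- Let X and Y be separated locally convex topological vector spaces over the reals, let φ : X × Y → (−∞,∞] be a convex function, let F : X ⇉ Y be a set-valued mapping with convex graph, define μ(x) := inf{φ(x,y) : y ∈ F(x)} (assumed finite-valued from below, μ(x) > −∞ for all x), and let M(x̄) := {y ∈ F(x̄) : μ(x̄) = φ(x̄,y)}. Assume that (i) φ is finite and continuous at some point of gph F, or (ii) X and Y are Banach spaces, φ is lower semicontinuous, gph F is closed, and ℝ⁺(dom φ − gph F) is a closed linear subspace of X × Y. Then for any x̄ ∈ X and ȳ ∈ M(x̄): ∂μ(x̄) = ⋃_{(x*,y*) ∈ ∂φ(x̄,ȳ)} [x* + D*F(x̄,ȳ)(y*)]. -/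
open Pointwise

/-- Subdifferential of a function on `X × Y`, expressed via pairs of functionals. -/
def subdiff2E {X Y : Type*} [AddCommGroup X] [Module ℝ X] [TopologicalSpace X]
    [AddCommGroup Y] [Module ℝ Y] [TopologicalSpace Y]
    (φ : X × Y → EReal) (zb : X × Y) : Set ((X →L[ℝ] ℝ) × (Y →L[ℝ] ℝ)) :=
  {pq | ∀ z : X × Y,
    ((pq.1 (z.1 - zb.1) + pq.2 (z.2 - zb.2) : ℝ) : EReal) ≤ φ z - φ zb}

/-- Graph of a set-valued mapping. -/
def gphF {X Y : Type*} (F : X → Set Y) : Set (X × Y) := {p | p.2 ∈ F p.1}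

/-- Coderivative of a convex-graph set-valued mapping `F` at `(xb, yb) ∈ gph F`. -/
def coderivF {X Y : Type*} [AddCommGroup X] [Module ℝ X] [TopologicalSpace X]
    [AddCommGroup Y] [Module ℝ Y] [TopologicalSpace Y]
    (F : X → Set Y) (xb : X) (yb : Y) (q : Y →L[ℝ] ℝ) : Set (X →L[ℝ] ℝ) :=
  {p | ∀ x : X, ∀ y ∈ F x, p (x - xb) - q (y - yb) ≤ 0}

structure BD (Z : Type*) [AddCommGroup Z] [Module ℝ Z] [TopologicalSpace Z] where
  nm : Z → ℝ
  eq_zero : ∀ x, nm x = 0 ↔ x = 0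
  tri : ∀ x y, nm (x + y) ≤ nm x + nm y
  hsmul : ∀ (c : ℝ) (x : Z), nm (c • x) = |c| * nm x
  open_iff : ∀ s : Set Z, IsOpen s ↔ ∀ x ∈ s, ∃ ε > 0, ∀ y, nm (y - x) < ε → y ∈ s
  complete : ∀ u : ℕ → Z, (∀ ε : ℝ, 0 < ε → ∃ N, ∀ m ≥ N, ∀ n ≥ N, nm (u m - u n) < ε) →
      ∃ x, Filter.Tendsto u Filter.atTop (nhds x)

namespace BD

variable {Z : Type*} [AddCommGroup Z] [Module ℝ Z] [TopologicalSpace Z] (nd : BD Z)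

lemma nm_zero : nd.nm 0 = 0 := (nd.eq_zero 0).2 rfl

lemma nm_neg (x : Z) : nd.nm (-x) = nd.nm x := by
  have := nd.hsmul (-1) x
  simpa using this

lemma nm_nonneg (x : Z) : 0 ≤ nd.nm x := by
  have h := nd.tri x (-x)
  rw [add_neg_cancel, nd.nm_zero, nd.nm_neg] at h
  linarith

lemma nm_sub_rev (x y : Z) : nd.nm (x - y) = nd.nm (y - x) := by
  rw [← nd.nm_neg (x - y), neg_sub]

lemma nm_sub_le (x y z : Z) : nd.nm (x - z) ≤ nd.nm (x - y) + nd.nm (y - z) := by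
  have := nd.tri (x - y) (y - z)
  simpa using this

lemma nm_le_add (x y : Z) : nd.nm x ≤ nd.nm y + nd.nm (x - y) := by
  have := nd.tri y (x - y); simpa using this

lemma ball_open (x : Z) (ε : ℝ) : IsOpen {y : Z | nd.nm (y - x) < ε} := by
  rw [nd.open_iff]
  intro y hy
  refine ⟨ε - nd.nm (y - x), by simpa using hy, fun z hz => ?_⟩
  have := nd.nm_sub_le z y x
  simp only [Set.mem_setOf_eq] at *
  linarith

lemma mem_closure_iff_nm (S : Set Z) (z : Z) :
    z ∈ closure S ↔ ∀ ε : ℝ, 0 < ε → ∃ s ∈ S, nd.nm (s - z) < ε := by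
  rw [mem_closure_iff]
  constructor
  · intro h ε hε
    obtain ⟨s, hs1, hs2⟩ := h {y | nd.nm (y - z) < ε} (nd.ball_open z ε)
      (by simp [nd.nm_zero, hε])
    exact ⟨s, hs2, hs1⟩
  · intro h o ho hzo
    obtain ⟨ε, hε, hb⟩ := (nd.open_iff o).1 ho z hzo
    obtain ⟨s, hs, hss⟩ := h ε hε
    exact ⟨s, hb s hss, hs⟩

lemma tendsto_iff (u : ℕ → Z) (x : Z) :
    Filter.Tendsto u Filter.atTop (nhds x) ↔
      ∀ ε : ℝ, 0 < ε → ∃ N, ∀ n ≥ N, nd.nm (u n - x) < ε := by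
  constructor
  · intro h ε hε
    have hb : {y : Z | nd.nm (y - x) < ε} ∈ nhds x :=
      (nd.ball_open x ε).mem_nhds (by simp [nd.nm_zero, hε])
    have h2 : ∀ᶠ n in Filter.atTop, nd.nm (u n - x) < ε := h hb
    obtain ⟨N, hN⟩ := Filter.eventually_atTop.1 h2
    exact ⟨N, hN⟩
  · intro h s hs
    rw [Filter.mem_map]
    obtain ⟨o, hosub, hoopen, hxo⟩ := mem_nhds_iff.1 hs
    obtain ⟨ε, hε, hb⟩ := (nd.open_iff o).1 hoopen x hxo
    obtain ⟨N, hN⟩ := h ε hε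
    exact Filter.mem_atTop_sets.2 ⟨N, fun n hn => hosub (hb _ (hN n hn))⟩


/-- Baire category lemma for a closed subset, relative balls. -/
lemma baire (L : Set Z) (hLc : IsClosed L) (hne : L.Nonempty)
    (T : ℕ → Set Z) (hcov : L ⊆ ⋃ n, T n) :
    ∃ (n : ℕ) (v : Z) (ρ : ℝ), v ∈ L ∧ 0 < ρ ∧
      ∀ w ∈ L, nd.nm (w - v) < ρ → w ∈ closure (T n) := by
  classical
  let md : MetricSpace Z :=
    { dist := fun x y => nd.nm (x - y)
      dist_self := fun x => by simp [nd.nm_zero]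
      dist_comm := fun x y => nd.nm_sub_rev x y
      dist_triangle := fun x y z => nd.nm_sub_le x y z
      eq_of_dist_eq_zero := fun h => by
        have := (nd.eq_zero _).1 h
        exact sub_eq_zero.1 this }
  have htop : ‹TopologicalSpace Z› = md.toUniformSpace.toTopologicalSpace := by
    apply TopologicalSpace.ext_iff.2
    intro s
    rw [nd.open_iff s, @Metric.isOpen_iff Z md.toPseudoMetricSpace s]
    rfl
  letI md' : MetricSpace Z := md.replaceTopology htop
  have hdist : ∀ x y : Z, dist x y = nd.nm (x - y) := fun x y => rfl
  haveI : CompleteSpace Z := Metric.complete_of_cauchySeq_tendsto (by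
    intro u hu
    apply nd.complete u
    intro ε hε
    obtain ⟨N, hN⟩ := Metric.cauchySeq_iff.1 hu ε hε
    exact ⟨N, fun m hm n hn => hN m hm n hn⟩)
  haveI hne' : Nonempty L := hne.to_subtype
  haveI : CompleteSpace L := hLc.completeSpace_coe
  set C : ℕ → Set L := fun n => closure (Subtype.val ⁻¹' T n) with hC
  have hCclosed : ∀ n, IsClosed (C n) := fun n => isClosed_closure
  have hCcov : ⋃ n, C n = Set.univ := by
    apply Set.eq_univ_of_forall
    intro x
    obtain ⟨n, hn⟩ := Set.mem_iUnion.1 (hcov x.2)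
    exact Set.mem_iUnion.2 ⟨n, subset_closure hn⟩
  obtain ⟨n, ⟨x, hx⟩⟩ := nonempty_interior_of_iUnion_of_closed hCclosed hCcov
  obtain ⟨ρ, hρ, hball⟩ := Metric.isOpen_iff.1 isOpen_interior x hx
  refine ⟨n, x.1, ρ, x.2, hρ, ?_⟩
  intro w hw hwd
  have hmem : (⟨w, hw⟩ : L) ∈ Metric.ball x ρ := by
    rw [Metric.mem_ball, Subtype.dist_eq, hdist]
    exact hwd
  have h2 : (⟨w, hw⟩ : L) ∈ C n := interior_subset (hball hmem)
  have h3 := (continuous_subtype_val.closure_preimage_subset (T n)) h2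
  exact h3

end BD

/-- Product of two norm data structures. -/
def BD.prod {X Y : Type*} [AddCommGroup X] [Module ℝ X] [TopologicalSpace X]
    [AddCommGroup Y] [Module ℝ Y] [TopologicalSpace Y]
    (ndX : BD X) (ndY : BD Y) : BD (X × Y) where
  nm := fun p => ndX.nm p.1 + ndY.nm p.2
  eq_zero := fun p => by
    constructor
    · intro h
      have h1 := ndX.nm_nonneg p.1
      have h2 := ndY.nm_nonneg p.2
      have hx : ndX.nm p.1 = 0 := by linarith
      have hy : ndY.nm p.2 = 0 := by linarith
      exact Prod.ext ((ndX.eq_zero _).1 hx) ((ndY.eq_zero _).1 hy)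
    · rintro rfl
      simp [ndX.nm_zero, ndY.nm_zero]
  tri := fun p q => by
    have := ndX.tri p.1 q.1
    have := ndY.tri p.2 q.2
    simp only [Prod.fst_add, Prod.snd_add]
    linarith
  hsmul := fun c p => by
    simp only [Prod.smul_fst, Prod.smul_snd, ndX.hsmul, ndY.hsmul]
    ring
  open_iff := fun s => by
    constructor
    · intro hs p hp
      obtain ⟨u, v, hu, hv, hpu, hpv, huv⟩ := isOpen_prod_iff.1 hs p.1 p.2 hp
      obtain ⟨ε₁, hε₁, hb1⟩ := (ndX.open_iff u).1 hu p.1 hpu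
      obtain ⟨ε₂, hε₂, hb2⟩ := (ndY.open_iff v).1 hv p.2 hpv
      refine ⟨min ε₁ ε₂, lt_min hε₁ hε₂, fun q hq => ?_⟩
      have hq1 : ndX.nm (q.1 - p.1) < ε₁ := by
        have h1 := ndY.nm_nonneg (q.2 - p.2)
        have := min_le_left ε₁ ε₂
        simp only [Prod.fst_sub, Prod.snd_sub] at hq ⊢
        linarith
      have hq2 : ndY.nm (q.2 - p.2) < ε₂ := by
        have h1 := ndX.nm_nonneg (q.1 - p.1)
        have := min_le_right ε₁ ε₂
        simp only [Prod.fst_sub, Prod.snd_sub] at hq ⊢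
        linarith
      exact huv ⟨hb1 q.1 hq1, hb2 q.2 hq2⟩
    · intro h
      rw [isOpen_iff_forall_mem_open]
      intro p hp
      obtain ⟨ε, hε, hb⟩ := h p hp
      refine ⟨{q : X × Y | ndX.nm (q.1 - p.1) < ε/2} ∩ {q | ndY.nm (q.2 - p.2) < ε/2},
        ?_, ?_, ?_⟩
      · rintro q ⟨h1, h2⟩
        apply hb
        simp only [Set.mem_setOf_eq, Prod.fst_sub, Prod.snd_sub] at *
        linarith
      · apply IsOpen.inter
        · have : IsOpen {x : X | ndX.nm (x - p.1) < ε/2} := ndX.ball_open p.1 (ε/2)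
          exact this.preimage continuous_fst
        · have : IsOpen {y : Y | ndY.nm (y - p.2) < ε/2} := ndY.ball_open p.2 (ε/2)
          exact this.preimage continuous_snd
      · constructor <;> simp [ndX.nm_zero, ndY.nm_zero, hε, half_pos hε]
  complete := fun u hu => by
    have hu1 : ∀ ε : ℝ, 0 < ε → ∃ N, ∀ m ≥ N, ∀ n ≥ N, ndX.nm ((fun k => (u k).1) m - (fun k => (u k).1) n) < ε := by
      intro ε hε
      obtain ⟨N, hN⟩ := hu ε hε
      refine ⟨N, fun m hm n hn => ?_⟩
      have h2 := ndY.nm_nonneg ((u m).2 - (u n).2)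
      have := hN m hm n hn
      simp only [Prod.fst_sub, Prod.snd_sub] at *
      linarith
    have hu2 : ∀ ε : ℝ, 0 < ε → ∃ N, ∀ m ≥ N, ∀ n ≥ N, ndY.nm ((fun k => (u k).2) m - (fun k => (u k).2) n) < ε := by
      intro ε hε
      obtain ⟨N, hN⟩ := hu ε hε
      refine ⟨N, fun m hm n hn => ?_⟩
      have h2 := ndX.nm_nonneg ((u m).1 - (u n).1)
      have := hN m hm n hn
      simp only [Prod.fst_sub, Prod.snd_sub] at *
      linarith
    obtain ⟨x, hx⟩ := ndX.complete _ hu1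
    obtain ⟨y, hy⟩ := ndY.complete _ hu2
    exact ⟨(x, y), hx.prodMk_nhds hy⟩


open Pointwise


lemma lt_coe_exists_eps {a : EReal} {t : ℝ} (h : a < (t : EReal)) :
    ∃ ε : ℝ, 0 < ε ∧ a ≤ ((t - ε : ℝ) : EReal) := by
  rcases EReal.exists_between_coe_real h with ⟨r, har, hrt⟩
  refine ⟨t - r, ?_, ?_⟩
  · have := EReal.coe_lt_coe_iff.1 hrt; linarith
  · have : (t - (t - r) : ℝ) = r := by ring
    rw [this]; exact har.le

lemma strictEpi_convex {Z : Type*} [AddCommGroup Z] [Module ℝ Z]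
    {ψ : Z → EReal} (hψ : ConvexE ψ) :
    Convex ℝ {p : Z × ℝ | ψ p.1 < (p.2 : EReal)} := by
  intro p hp q hq a b ha hb hab
  obtain ⟨ε₁, hε₁, hp1⟩ := lt_coe_exists_eps hp
  obtain ⟨ε₂, hε₂, hq1⟩ := lt_coe_exists_eps hq
  set ε := min ε₁ ε₂ with hε
  have hεpos : 0 < ε := lt_min hε₁ hε₂
  have hP : ((p.1, p.2 - ε) : Z × ℝ) ∈ {p : Z × ℝ | ψ p.1 ≤ (p.2 : EReal)} := by
    refine le_trans hp1 (EReal.coe_le_coe_iff.2 ?_)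
    have := min_le_left ε₁ ε₂; dsimp only; linarith
  have hQ : ((q.1, q.2 - ε) : Z × ℝ) ∈ {p : Z × ℝ | ψ p.1 ≤ (p.2 : EReal)} := by
    refine le_trans hq1 (EReal.coe_le_coe_iff.2 ?_)
    have := min_le_right ε₁ ε₂; dsimp only; linarith
  have hc := hψ hP hQ ha hb hab
  simp only [Prod.smul_mk, Prod.mk_add_mk, Set.mem_setOf_eq, smul_eq_mul] at hc ⊢
  calc ψ (a • p.1 + b • q.1) ≤ ((a * (p.2 - ε) + b * (q.2 - ε) : ℝ) : EReal) := hc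
    _ < ((a * p.2 + b * q.2 : ℝ) : EReal) := by
        rw [EReal.coe_lt_coe_iff]; nlinarith

lemma sep_core {Z : Type*} [AddCommGroup Z] [Module ℝ Z] [TopologicalSpace Z]
    [IsTopologicalAddGroup Z] [ContinuousSMul ℝ Z]
    (ψ : Z → EReal) (hψ : ConvexE ψ) (Ω : Set Z) (hΩ : Convex ℝ Ω)
    (zb : Z) (hzb : zb ∈ Ω) (hψzb : ψ zb = 0)
    (hpos : ∀ w ∈ Ω, 0 ≤ ψ w)
    (z0 : Z) (hz0 : z0 ∈ Ω) (U : Set Z) (hUo : IsOpen U) (hz0U : z0 ∈ U)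
    (m : ℝ) (hbdd : ∀ z ∈ U, ψ z ≤ (m : EReal)) :
    ∃ ζ : Z →L[ℝ] ℝ, (∀ z : Z, ((ζ (z - zb) : ℝ) : EReal) ≤ ψ z) ∧
      ∀ w ∈ Ω, 0 ≤ ζ (w - zb) := by
  classical
  set A : Set (Z × ℝ) := {p | ψ p.1 < (p.2 : EReal)} with hA
  have hAconv : Convex ℝ A := strictEpi_convex hψ
  set B : Set (Z × ℝ) := Ω ×ˢ Set.Iic (0 : ℝ) with hB
  have hBconv : Convex ℝ B := hΩ.prod (convex_Iic 0)
  have hUA : U ×ˢ Set.Ioi m ⊆ A := by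
    rintro ⟨z, t⟩ ⟨hz, ht⟩
    exact lt_of_le_of_lt (hbdd z hz) (EReal.coe_lt_coe_iff.2 ht)
  have ha0 : ((z0, m + 1) : Z × ℝ) ∈ interior A :=
    interior_maximal hUA (hUo.prod isOpen_Ioi) ⟨hz0U, by exact lt_add_one m⟩
  have hdisj : Disjoint (interior A) B := by
    rw [Set.disjoint_left]
    rintro ⟨z, t⟩ hzA ⟨hzΩ, ht⟩
    have h0 : ((z, t) : Z × ℝ) ∈ A := interior_subset hzA
    simp only [hA, Set.mem_setOf_eq] at h0
    have h1 : (0 : EReal) < (t : EReal) := lt_of_le_of_lt (hpos z hzΩ) h0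
    have h2 : (t : EReal) ≤ (0 : EReal) := by exact_mod_cast ht
    exact absurd (lt_of_lt_of_le h1 h2) (lt_irrefl _)
  obtain ⟨f, u, hfA, hfB⟩ :=
    geometric_hahn_banach_open (hAconv.interior) isOpen_interior hBconv hdisj
  have hfA' : ∀ p ∈ A, f p ≤ u := by
    intro p hp
    have key : ∀ θ : ℝ, 0 < θ → θ < 1 → θ * f (z0, m+1) + (1 - θ) * f p < u := by
      intro θ hθ hθ1
      have hmem : θ • ((z0, m+1) : Z × ℝ) + (1 - θ) • p ∈ interior A :=
        Convex.combo_interior_self_mem_interior hAconv ha0 hp hθ (by linarith) (by ring)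
      have := hfA _ hmem
      rwa [map_add, map_smul, map_smul, smul_eq_mul, smul_eq_mul] at this
    by_contra hlt
    push_neg at hlt
    set fp := f p
    set f0 := f (z0, m+1)
    set d := |f0 - fp| with hd
    set θ := min (1/2 : ℝ) ((fp - u) / (2 * (d + 1))) with hθdef
    have hfpu : u < fp := hlt
    have hdnn : 0 ≤ d := abs_nonneg _
    have hθpos : 0 < θ := lt_min (by norm_num) (div_pos (by linarith) (by positivity))
    have hθlt : θ < 1 := lt_of_le_of_lt (min_le_left _ _) (by norm_num)
    have hk := key θ hθpos hθlt
    -- θ * (f0 - fp) ≥ -(fp-u)/2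
    have h1 : θ ≤ (fp - u) / (2 * (d + 1)) := min_le_right _ _
    have h2 : θ * d ≤ (fp - u) / 2 := by
      have h3 : θ * (d + 1) ≤ (fp - u) / 2 := by
        calc θ * (d+1) ≤ (fp - u) / (2 * (d + 1)) * (d+1) :=
              mul_le_mul_of_nonneg_right h1 (by positivity)
          _ = (fp - u) / 2 := by field_simp
      nlinarith
    have h4 : -(θ * d) ≤ θ * (f0 - fp) := by
      have := neg_abs_le (f0 - fp)
      nlinarith
    nlinarith
  set ζ₀ : Z →L[ℝ] ℝ := f.comp (ContinuousLinearMap.inl ℝ Z ℝ) with hζ₀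
  set s : ℝ := f (0, 1) with hs
  have hdec : ∀ (z : Z) (t : ℝ), f (z, t) = ζ₀ z + t * s := by
    intro z t
    have h1 : ((z, t) : Z × ℝ) = (z, 0) + t • ((0 : Z), (1 : ℝ)) := by
      simp [Prod.ext_iff]
    rw [h1, map_add, map_smul, smul_eq_mul]
    rfl
  have hAmem : ∀ t : ℝ, m < t → ((z0, t) : Z × ℝ) ∈ A :=
    fun t ht => lt_of_le_of_lt (hbdd z0 hz0U) (EReal.coe_lt_coe_iff.2 ht)
  have hz0B : ((z0, (0:ℝ)) : Z × ℝ) ∈ B := ⟨hz0, Set.mem_Iic.2 le_rfl⟩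
  have hz0f : u ≤ ζ₀ z0 := by
    have := hfB _ hz0B
    rwa [hdec, zero_mul, add_zero] at this
  have hs_neg : s < 0 := by
    rcases lt_trichotomy s 0 with h | h | h
    · exact h
    · exfalso
      have ht := hfA' _ (hAmem (m+1) (lt_add_one m))
      rw [hdec, h, mul_zero, add_zero] at ht
      have := hfA _ ha0
      rw [hdec, h, mul_zero, add_zero] at this
      linarith
    · exfalso
      set T := max (m+1) ((u - ζ₀ z0 + 1)/s) with hT
      have ht := hfA' _ (hAmem T (lt_of_lt_of_le (lt_add_one m) (le_max_left _ _)))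
      rw [hdec] at ht
      have h2 : (u - ζ₀ z0 + 1)/s ≤ T := le_max_right _ _
      have h3 : u - ζ₀ z0 + 1 ≤ T * s := by
        rw [div_le_iff₀ h] at h2; linarith
      linarith
  -- key bounds
  have hkey : ∀ z : Z, ∀ t : ℝ, ψ z < (t:EReal) → ζ₀ z + t * s ≤ u := by
    intro z t hzt
    have := hfA' (z, t) hzt
    rwa [hdec] at this
  have hc_le : ζ₀ zb ≤ u := by
    by_contra h
    push_neg at h
    set t := (ζ₀ zb - u) / (2 * (-s)) with ht
    have htpos : 0 < t := by
      apply div_pos (by linarith) (by linarith)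
    have := hkey zb t (by rw [hψzb]; exact_mod_cast htpos)
    have h5 : t * s = -(ζ₀ zb - u)/2 := by
      rw [ht]; field_simp [ne_of_lt hs_neg]
    rw [h5] at this; linarith
  have hc_eq : ζ₀ zb = u := le_antisymm hc_le (by
    have := hfB (zb, (0:ℝ)) ⟨hzb, Set.mem_Iic.2 le_rfl⟩
    rwa [hdec, zero_mul, add_zero] at this)
  refine ⟨(-s)⁻¹ • ζ₀, ?_, ?_⟩
  · intro z
    by_cases htop : ψ z = ⊤
    · rw [htop]; exact le_top
    · by_contra hcon
      push_neg at hcon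
      have hlt : ψ z < (((-s)⁻¹ • ζ₀) (z - zb) : ℝ) := hcon
      obtain ⟨t, h1, h2⟩ := EReal.exists_between_coe_real hlt
      have h3 := hkey z t h1
      have h4 : ζ₀ z - ζ₀ zb ≤ t * (-s) := by
        rw [hc_eq] at *; linarith
      have h5 : ((-s)⁻¹ • ζ₀) (z - zb) ≤ t := by
        rw [ContinuousLinearMap.smul_apply, smul_eq_mul, map_sub]
        rw [inv_mul_le_iff₀ (by linarith : (0:ℝ) < -s)]
        nlinarith
      have := EReal.coe_lt_coe_iff.1 h2
      linarith
  · intro w hw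
    have := hfB (w, (0:ℝ)) ⟨hw, Set.mem_Iic.2 le_rfl⟩
    rw [hdec, zero_mul, add_zero, ← hc_eq] at this
    rw [ContinuousLinearMap.smul_apply, smul_eq_mul, map_sub]
    have h6 : (0:ℝ) ≤ (-s)⁻¹ := inv_nonneg.2 (by linarith)
    exact mul_nonneg h6 (by linarith)




open Pointwise

lemma exists_real_ge (a : EReal) (h : a ≠ ⊤) : ∃ t : ℝ, 0 ≤ t ∧ a ≤ (t : EReal) := by
  refine ⟨max 0 a.toReal, le_max_left _ _, ?_⟩
  by_cases hb : a = ⊥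
  · rw [hb]; exact bot_le
  · conv_lhs => rw [← EReal.coe_toReal h hb]
    exact EReal.coe_le_coe_iff.2 (le_max_right _ _)

lemma ereal_le_coe_of_forall_eps {x : EReal} {c : ℝ}
    (hx : ∀ ε : ℝ, 0 < ε → x ≤ ((c + ε : ℝ) : EReal)) : x ≤ (c : EReal) := by
  by_contra hcon
  push_neg at hcon
  obtain ⟨y, h1, h2⟩ := EReal.exists_between_coe_real hcon
  have h3 : c < y := EReal.coe_lt_coe_iff.1 h1
  have := hx (y - c) (by linarith)
  have h4 : (c + (y - c) : ℝ) = y := by ring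
  rw [h4] at this
  exact absurd this (not_le.2 h2)


namespace BD
variable {Z : Type*} [AddCommGroup Z] [Module ℝ Z] [TopologicalSpace Z] (nd : BD Z)

lemma nm_sum_le {ι : Type*} (s : Finset ι) (f : ι → Z) :
    nd.nm (∑ i ∈ s, f i) ≤ ∑ i ∈ s, nd.nm (f i) := by
  classical
  induction s using Finset.induction with
  | empty => simp [nd.nm_zero]
  | @insert _ _ h ih =>
    rw [Finset.sum_insert h, Finset.sum_insert h]
    exact le_trans (nd.tri _ _) (by linarith)

end BD

lemma myGeomSumRange (M : ℕ) :
    ∑ k ∈ Finset.range M, ((2:ℝ)⁻¹)^(k+1) = 1 - ((2:ℝ)⁻¹)^M := by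
  induction M with
  | zero => simp
  | succ M ih => rw [Finset.sum_range_succ, ih, pow_succ]; ring

lemma myGeomSumIco {M M' : ℕ} (h : M ≤ M') :
    ∑ k ∈ Finset.Ico M M', ((2:ℝ)⁻¹)^(k+1) ≤ ((2:ℝ)⁻¹)^M := by
  have h1 : ∑ k ∈ Finset.Ico M M', ((2:ℝ)⁻¹)^(k+1)
      = (1 - ((2:ℝ)⁻¹)^M') - (1 - ((2:ℝ)⁻¹)^M) := by
    rw [← myGeomSumRange M, ← myGeomSumRange M', Finset.sum_Ico_eq_sub _ h]
  rw [h1]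
  have := pow_pos (by norm_num : (0:ℝ) < 2⁻¹) M'
  linarith

lemma BD.sum_tendsto {Z : Type*} [AddCommGroup Z] [Module ℝ Z] [TopologicalSpace Z]
    (nd : BD Z) (g : ℕ → Z) (C : ℝ) (hC : 0 ≤ C)
    (hg : ∀ k, nd.nm (g k) ≤ C * ((2:ℝ)⁻¹)^(k+1)) :
    ∃ x : Z, Filter.Tendsto (fun K => ∑ k ∈ Finset.range K, g k) Filter.atTop (nhds x) := by
  apply nd.complete
  intro ε hε
  have hC1 : (0:ℝ) < C + 1 := by linarith
  obtain ⟨N, hN⟩ := exists_pow_lt_of_lt_one (div_pos hε hC1) (by norm_num : (2:ℝ)⁻¹ < 1)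
  refine ⟨N, ?_⟩
  have main : ∀ m n, N ≤ m → N ≤ n → n ≤ m →
      nd.nm ((∑ k ∈ Finset.range m, g k) - ∑ k ∈ Finset.range n, g k) < ε := by
    intro m n _ hn hmn
    rw [← Finset.sum_Ico_eq_sub _ hmn]
    have h2 : ((2:ℝ)⁻¹)^n ≤ ((2:ℝ)⁻¹)^N :=
      pow_le_pow_of_le_one (by norm_num) (by norm_num) hn
    have h3 : ((2:ℝ)⁻¹)^N < ε / (C+1) := hN
    have h4 : (0:ℝ) < ((2:ℝ)⁻¹)^n := pow_pos (by norm_num) n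
    calc nd.nm (∑ k ∈ Finset.Ico n m, g k) ≤ ∑ k ∈ Finset.Ico n m, nd.nm (g k) :=
          nd.nm_sum_le _ _
      _ ≤ ∑ k ∈ Finset.Ico n m, C * ((2:ℝ)⁻¹)^(k+1) :=
          Finset.sum_le_sum (fun k _ => hg k)
      _ = C * ∑ k ∈ Finset.Ico n m, ((2:ℝ)⁻¹)^(k+1) := by rw [Finset.mul_sum]
      _ ≤ C * ((2:ℝ)⁻¹)^n := mul_le_mul_of_nonneg_left (myGeomSumIco hmn) hC
      _ < ε := by
          have h6 := (lt_div_iff₀ hC1).1 h3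
          nlinarith [mul_le_mul_of_nonneg_left h2 hC,
            pow_pos (show (0:ℝ) < 2⁻¹ by norm_num) N]
  intro m hm n hn
  rcases le_total n m with hmn | hmn
  · exact main m n hm hn hmn
  · rw [nd.nm_sub_rev]; exact main n m hn hm hmn

set_option maxHeartbeats 3200000 in
lemma case2_split {Z : Type*} [AddCommGroup Z] [Module ℝ Z] [TopologicalSpace Z]
    [IsTopologicalAddGroup Z] [ContinuousSMul ℝ Z]
    (nd : BD Z)
    (ψ : Z → EReal) (hψ : ConvexE ψ) (hlsc : LowerSemicontinuous ψ)
    (Ω : Set Z) (hΩ : Convex ℝ Ω) (hΩc : IsClosed Ω)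
    (zb : Z) (hzb : zb ∈ Ω) (hψzb : ψ zb = 0) (hpos : ∀ w ∈ Ω, 0 ≤ ψ w)
    (L : Submodule ℝ Z) (hLc : IsClosed (L : Set Z))
    (hL : posSpan (domE ψ - Ω) = (L : Set Z)) :
    ∃ ζ : Z →L[ℝ] ℝ, (∀ z, ((ζ (z - zb) : ℝ) : EReal) ≤ ψ z) ∧
      ∀ w ∈ Ω, 0 ≤ ζ (w - zb) := by
  classical
  have hψzb_ne : ψ zb ≠ ⊤ := by rw [hψzb]; exact (by simp : (0:EReal) ≠ ⊤)
  have hdiffL : (domE ψ - Ω : Set Z) ⊆ (L : Set Z) := by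
    intro v hv
    rw [← hL]
    exact ⟨1, one_pos, v, hv, (one_smul ℝ v).symm⟩
  set h : Z → EReal := fun u => ⨅ w ∈ Ω, ψ (w + u) with hh_def
  have hh_le : ∀ (u w : Z), w ∈ Ω → h u ≤ ψ (w + u) := fun u w hw => iInf₂_le w hw
  have hh0 : h 0 = 0 := by
    apply le_antisymm
    · have := hh_le 0 zb hzb; rwa [add_zero, hψzb] at this
    · exact le_iInf₂ fun w hw => by rw [add_zero]; exact hpos w hw
  have hh_lt : ∀ (u : Z) (c : EReal), h u < c → ∃ w ∈ Ω, ψ (w + u) < c := by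
    intro u c hc
    rw [hh_def] at hc
    obtain ⟨w, hw⟩ := iInf_lt_iff.1 hc
    obtain ⟨hwΩ, hlt⟩ := iInf_lt_iff.1 hw
    exact ⟨w, hwΩ, hlt⟩
  have hmemdiff : ∀ (d w : Z), ψ d ≠ ⊤ → w ∈ Ω → d - w ∈ (domE ψ - Ω : Set Z) :=
    fun d w hd hw => Set.sub_mem_sub hd hw
  have hh_domL : ∀ u : Z, h u ≠ ⊤ → u ∈ (L : Set Z) := by
    intro u hu
    obtain ⟨w, hw, hlt⟩ := hh_lt u ⊤ (lt_top_iff_ne_top.2 hu)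
    have := hdiffL (hmemdiff (w + u) w (ne_top_of_lt hlt) hw)
    rwa [add_sub_cancel_left] at this
  -- convexity inequality for h
  have hJ : ∀ (u₁ u₂ : Z) (t₁ t₂ a b : ℝ), h u₁ ≤ (t₁ : EReal) → h u₂ ≤ (t₂ : EReal) →
      0 ≤ a → 0 ≤ b → a + b = 1 →
      h (a • u₁ + b • u₂) ≤ ((a * t₁ + b * t₂ : ℝ) : EReal) := by
    intro u₁ u₂ t₁ t₂ a b h1 h2 ha hb hab
    apply ereal_le_coe_of_forall_eps
    intro ε hε
    obtain ⟨w₁, hw₁, hl1⟩ := hh_lt u₁ ((t₁ + ε : ℝ) : EReal)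
      (lt_of_le_of_lt h1 (EReal.coe_lt_coe_iff.2 (by linarith)))
    obtain ⟨w₂, hw₂, hl2⟩ := hh_lt u₂ ((t₂ + ε : ℝ) : EReal)
      (lt_of_le_of_lt h2 (EReal.coe_lt_coe_iff.2 (by linarith)))
    have hm1 : ((w₁ + u₁, t₁ + ε) : Z × ℝ) ∈ {p : Z × ℝ | ψ p.1 ≤ (p.2 : EReal)} := hl1.le
    have hm2 : ((w₂ + u₂, t₂ + ε) : Z × ℝ) ∈ {p : Z × ℝ | ψ p.1 ≤ (p.2 : EReal)} := hl2.le
    have hc := hψ hm1 hm2 ha hb hab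
    simp only [Prod.smul_mk, Prod.mk_add_mk, Set.mem_setOf_eq, smul_eq_mul] at hc
    have hpt : a • (w₁ + u₁) + b • (w₂ + u₂) = (a • w₁ + b • w₂) + (a • u₁ + b • u₂) := by
      rw [smul_add, smul_add]; abel
    rw [hpt] at hc
    have hwm : a • w₁ + b • w₂ ∈ Ω := hΩ hw₁ hw₂ ha hb hab
    refine le_trans (hh_le _ _ hwm) (le_trans hc (EReal.coe_le_coe_iff.2 ?_))
    linear_combination ε * hab
  -- the sets S c and their properties
  set S : ℝ → Set Z := fun c =>
    {u | ∃ w ∈ Ω, nd.nm w ≤ c ∧ nd.nm (w + u) ≤ c ∧ ψ (w + u) ≤ (c : EReal)} with hS_def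
  have hS_L : ∀ c : ℝ, S c ⊆ (L : Set Z) := by
    rintro c u ⟨w, hw, _, _, hψc⟩
    have := hdiffL (hmemdiff (w + u) w (by
      intro htop; rw [htop] at hψc; exact absurd (top_le_iff.1 hψc) (EReal.coe_ne_top c)) hw)
    rwa [add_sub_cancel_left] at this
  have hS_h : ∀ (c : ℝ) (u : Z), u ∈ S c → h u ≤ (c : EReal) := by
    rintro c u ⟨w, hw, _, _, hψc⟩
    exact le_trans (hh_le u w hw) hψc
  -- scaling lemma
  have hscale : ∀ v ∈ (domE ψ - Ω : Set Z), ∃ c0 : ℝ, 0 ≤ c0 ∧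
      ∀ κ : ℝ, 0 < κ → κ ≤ 1 → ∀ c : ℝ, c0 ≤ c → κ • v ∈ S c := by
    rintro v ⟨d, hd, w0, hw0, hdw⟩
    obtain ⟨td, htd0, htd⟩ := exists_real_ge (ψ d) hd
    refine ⟨max (nd.nm w0 + nd.nm zb) (max (nd.nm d + nd.nm zb) td), le_trans htd0
      (le_trans (le_max_right _ _) (le_max_right _ _)), ?_⟩
    intro κ hκ hκ1 c hc
    have hκ0 : (0:ℝ) ≤ κ := hκ.le
    have h1κ : (0:ℝ) ≤ 1 - κ := by linarith
    refine ⟨κ • w0 + (1 - κ) • zb, hΩ hw0 hzb hκ0 h1κ (by ring), ?_, ?_, ?_⟩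
    · calc nd.nm (κ • w0 + (1 - κ) • zb) ≤ nd.nm (κ • w0) + nd.nm ((1-κ) • zb) := nd.tri _ _
        _ = |κ| * nd.nm w0 + |1-κ| * nd.nm zb := by rw [nd.hsmul, nd.hsmul]
        _ ≤ nd.nm w0 + nd.nm zb := by
            rw [abs_of_nonneg hκ0, abs_of_nonneg h1κ]
            nlinarith [nd.nm_nonneg w0, nd.nm_nonneg zb]
        _ ≤ c := le_trans (le_max_left _ _) hc
    · have hpt : κ • w0 + (1 - κ) • zb + κ • v = κ • d + (1 - κ) • zb := by
        rw [← hdw]; module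
      rw [hpt]
      calc nd.nm (κ • d + (1 - κ) • zb) ≤ |κ| * nd.nm d + |1-κ| * nd.nm zb := by
            refine le_trans (nd.tri _ _) ?_; rw [nd.hsmul, nd.hsmul]
        _ ≤ nd.nm d + nd.nm zb := by
            rw [abs_of_nonneg hκ0, abs_of_nonneg h1κ]
            nlinarith [nd.nm_nonneg d, nd.nm_nonneg zb]
        _ ≤ c := le_trans (le_trans (le_max_left _ _) (le_max_right _ _)) hc
    · have hpt : κ • w0 + (1 - κ) • zb + κ • v = κ • d + (1 - κ) • zb := by
        rw [← hdw]; module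
      rw [hpt]
      have hm1 : ((d, td) : Z × ℝ) ∈ {p : Z × ℝ | ψ p.1 ≤ (p.2 : EReal)} := htd
      have hm2 : ((zb, 0) : Z × ℝ) ∈ {p : Z × ℝ | ψ p.1 ≤ (p.2 : EReal)} := hψzb.le
      have hc2 := hψ hm1 hm2 hκ0 h1κ (by ring)
      simp only [Prod.smul_mk, Prod.mk_add_mk, Set.mem_setOf_eq, smul_eq_mul] at hc2
      refine le_trans hc2 (EReal.coe_le_coe_iff.2 ?_)
      have : td ≤ c := le_trans (le_trans (le_max_right _ _) (le_max_right _ _)) hc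
      nlinarith
  -- coverage and Baire
  set T : ℕ → Set Z := fun n => {u | (((n : ℝ) + 1)⁻¹) • u ∈ S ((n : ℝ) + 1)} with hT_def
  have hT_cov : (L : Set Z) ⊆ ⋃ n, T n := by
    intro u hu
    rw [← hL] at hu
    obtain ⟨t, ht, v, hv, hu_eq⟩ := hu
    obtain ⟨c0, hc00, hc0⟩ := hscale v hv
    obtain ⟨n, hn⟩ := exists_nat_ge (max t c0)
    have hn1 : (0:ℝ) < (n:ℝ) + 1 := by positivity
    have htn : t ≤ (n:ℝ) + 1 := by
      have := le_max_left t c0; linarith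
    have hics : (((n:ℝ) + 1)⁻¹) • u = (t / ((n:ℝ)+1)) • v := by
      rw [hu_eq, smul_smul, div_eq_inv_mul]
    refine Set.mem_iUnion.2 ⟨n, ?_⟩
    show (((n : ℝ) + 1)⁻¹) • u ∈ S ((n : ℝ) + 1)
    rw [hics]
    exact hc0 (t / ((n:ℝ)+1)) (div_pos ht hn1) (by rw [div_le_one hn1]; exact htn)
      ((n:ℝ)+1) (by have := le_max_right t c0; linarith)
  obtain ⟨n, v0, ρ0, hv0L, hρ0, hcl⟩ := nd.baire (L : Set Z) hLc ⟨0, L.zero_mem⟩ T hT_cov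
  set cR : ℝ := (n : ℝ) + 1 with hcR_def
  have hcRpos : 0 < cR := by positivity
  set v : Z := cR⁻¹ • v0 with hv_def
  have hvL : v ∈ (L : Set Z) := L.smul_mem _ hv0L
  set ρ : ℝ := ρ0 / cR with hρ_def
  have hρpos : 0 < ρ := div_pos hρ0 hcRpos
  have hballS : ∀ w : Z, w ∈ (L : Set Z) → nd.nm (w - v) < ρ → w ∈ closure (S cR) := by
    intro w hwL hwv
    rw [nd.mem_closure_iff_nm]
    intro ε hε
    have hcv : cR • v = v0 := by rw [hv_def, smul_smul, mul_inv_cancel₀ (ne_of_gt hcRpos), one_smul]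
    have h1 : nd.nm (cR • w - v0) < ρ0 := by
      rw [← hcv, ← smul_sub, nd.hsmul, abs_of_pos hcRpos]
      rw [hρ_def] at hwv
      calc cR * nd.nm (w - v) < cR * (ρ0 / cR) := by
            exact (mul_lt_mul_iff_right₀ hcRpos).2 hwv
        _ = ρ0 := by field_simp
    have h2 : cR • w ∈ closure (T n) := hcl _ (L.smul_mem _ hwL) h1
    obtain ⟨s, hsT, hsd⟩ := (nd.mem_closure_iff_nm _ _).1 h2 (cR * ε) (by positivity)
    refine ⟨cR⁻¹ • s, hsT, ?_⟩
    have h3 : cR⁻¹ • s - w = cR⁻¹ • (s - cR • w) := by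
      rw [smul_sub, smul_smul, inv_mul_cancel₀ (ne_of_gt hcRpos), one_smul]
    rw [h3, nd.hsmul, abs_of_pos (by positivity : (0:ℝ) < cR⁻¹)]
    calc cR⁻¹ * nd.nm (s - cR • w) < cR⁻¹ * (cR * ε) := by
          exact (mul_lt_mul_iff_right₀ (by positivity)).2 hsd
      _ = ε := by field_simp

  -- ====== series / cs-closure argument: h is bounded above on a relative half ball ======
  have hcRnn : (0:ℝ) ≤ cR := hcRpos.le
  have hpow_pos : ∀ k : ℕ, (0:ℝ) < ((2:ℝ)⁻¹)^k := fun k => pow_pos (by norm_num) k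
  have hh_bound : ∀ w : Z, w ∈ (L : Set Z) → nd.nm (w - v) < ρ/2 → h w ≤ (cR : EReal) := by
    intro w hwL hwv
    have key : ∀ (k : ℕ) (wk : Z), wk ∈ (L : Set Z) →
        nd.nm (wk - v) < ρ * (1 - ((2:ℝ)⁻¹)^(k+1)) →
        ∃ s : Z, s ∈ S cR ∧ nd.nm (wk - s) < ρ * ((2:ℝ)⁻¹)^(k+2) := by
      intro k wk hkL hkv
      have h1 : nd.nm (wk - v) < ρ :=
        lt_of_lt_of_le hkv (by nlinarith [hpow_pos (k+1), hρpos.le])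
      obtain ⟨s, hs, hsd⟩ := (nd.mem_closure_iff_nm _ _).1 (hballS wk hkL h1)
        (ρ * ((2:ℝ)⁻¹)^(k+2)) (by positivity)
      exact ⟨s, hs, by rwa [nd.nm_sub_rev]⟩
    choose! sf hsf using key
    set wseq : ℕ → Z := fun k => Nat.rec w (fun k acc => (2:ℝ) • acc - sf k acc) k
      with hwseq_def
    have hwseq0 : wseq 0 = w := rfl
    have hwseqS : ∀ k, wseq (k+1) = (2:ℝ) • wseq k - sf k (wseq k) := fun k => rfl
    have hinv : ∀ k, wseq k ∈ (L : Set Z) ∧ nd.nm (wseq k - v) < ρ * (1 - ((2:ℝ)⁻¹)^(k+1)) := by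
      intro k
      induction k with
      | zero =>
        refine ⟨hwL, ?_⟩
        rw [hwseq0]
        norm_num
        linarith
      | succ k ih =>
        obtain ⟨h1, h2⟩ := ih
        have hk := hsf k (wseq k) h1 h2
        constructor
        · rw [hwseqS]
          exact (Submodule.sub_mem L (L.smul_mem _ h1) (hS_L cR hk.1))
        · rw [hwseqS]
          have he : (2:ℝ) • wseq k - sf k (wseq k) - v
              = (wseq k - v) + (wseq k - sf k (wseq k)) := by module
          rw [he]
          have htr := nd.tri (wseq k - v) (wseq k - sf k (wseq k))
          have hq : ((2:ℝ)⁻¹)^(k+1+1) = ((2:ℝ)⁻¹)^(k+1) * 2⁻¹ := pow_succ _ _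
          have := hk.2
          nlinarith [hpow_pos (k+1)]
    set sseq : ℕ → Z := fun k => sf k (wseq k) with hsseq_def
    have hsS2 : ∀ k, sseq k ∈ S cR := fun k => (hsf k _ (hinv k).1 (hinv k).2).1
    have hsd2 : ∀ k, nd.nm (wseq k - sseq k) < ρ * ((2:ℝ)⁻¹)^(k+2) :=
      fun k => (hsf k _ (hinv k).1 (hinv k).2).2
    choose ω hωΩ hω1 hω2 hω3 using hsS2
    -- telescoping
    have htel : ∀ K, (∑ k ∈ Finset.range K, (((2:ℝ)⁻¹)^(k+1)) • sseq k)
        + ((2:ℝ)⁻¹)^K • wseq K = w := by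
      intro K
      induction K with
      | zero => simp [hwseq0]
      | succ K ih =>
        rw [Finset.sum_range_succ, hwseqS]
        have he : (((2:ℝ)⁻¹)^(K+1)) • ((2:ℝ) • wseq K - sseq K)
            = ((2:ℝ)⁻¹)^K • wseq K - (((2:ℝ)⁻¹)^(K+1)) • sseq K := by
          rw [smul_sub, smul_smul]
          congr 2
          rw [pow_succ]
          ring
        rw [he, ← ih]
        abel
    -- limit of the ω-series
    set aseq : ℕ → Z := fun M => ∑ k ∈ Finset.range M, (((2:ℝ)⁻¹)^(k+1)) • ω k with haseq_def
    obtain ⟨ωlim, hωlimT⟩ := nd.sum_tendsto (fun k => (((2:ℝ)⁻¹)^(k+1)) • ω k) cR hcRnn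
      (fun k => by
        rw [nd.hsmul, abs_of_pos (hpow_pos (k+1))]
        calc ((2:ℝ)⁻¹)^(k+1) * nd.nm (ω k) ≤ ((2:ℝ)⁻¹)^(k+1) * cR :=
              mul_le_mul_of_nonneg_left (hω1 k) (hpow_pos (k+1)).le
          _ = cR * ((2:ℝ)⁻¹)^(k+1) := mul_comm _ _)
    have hωa := (nd.tendsto_iff _ _).1 hωlimT
    -- bounds on partial sums
    have hanorm : ∀ M, nd.nm (aseq M) ≤ cR := by
      intro M
      calc nd.nm (aseq M) ≤ ∑ k ∈ Finset.range M, nd.nm ((((2:ℝ)⁻¹)^(k+1)) • ω k) :=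
            nd.nm_sum_le _ _
        _ ≤ ∑ k ∈ Finset.range M, cR * ((2:ℝ)⁻¹)^(k+1) := by
            refine Finset.sum_le_sum (fun k _ => ?_)
            rw [nd.hsmul, abs_of_pos (hpow_pos (k+1))]
            nlinarith [hω1 k, hpow_pos (k+1)]
        _ = cR * (1 - ((2:ℝ)⁻¹)^M) := by rw [← Finset.mul_sum, myGeomSumRange]
        _ ≤ cR := by nlinarith [hpow_pos M]
    set bseq : ℕ → Z := fun M => ∑ k ∈ Finset.range M, (((2:ℝ)⁻¹)^(k+1)) • (ω k + sseq k)
      with hbseq_def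
    have hbnorm : ∀ M, nd.nm (bseq M) ≤ cR := by
      intro M
      calc nd.nm (bseq M) ≤ ∑ k ∈ Finset.range M, nd.nm ((((2:ℝ)⁻¹)^(k+1)) • (ω k + sseq k)) :=
            nd.nm_sum_le _ _
        _ ≤ ∑ k ∈ Finset.range M, cR * ((2:ℝ)⁻¹)^(k+1) := by
            refine Finset.sum_le_sum (fun k _ => ?_)
            rw [nd.hsmul, abs_of_pos (hpow_pos (k+1))]
            nlinarith [hω2 k, hpow_pos (k+1)]
        _ = cR * (1 - ((2:ℝ)⁻¹)^M) := by rw [← Finset.mul_sum, myGeomSumRange]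
        _ ≤ cR := by nlinarith [hpow_pos M]
    have hbsplit : ∀ M, bseq M = aseq M
        + ∑ k ∈ Finset.range M, (((2:ℝ)⁻¹)^(k+1)) • sseq k := by
      intro M
      rw [hbseq_def, haseq_def]
      simp only [smul_add]
      rw [Finset.sum_add_distrib]
    have hsw : ∀ M, nd.nm ((∑ k ∈ Finset.range M, (((2:ℝ)⁻¹)^(k+1)) • sseq k) - w)
        ≤ ((2:ℝ)⁻¹)^M * (nd.nm v + ρ) := by
      intro M
      have := htel M
      have he : (∑ k ∈ Finset.range M, (((2:ℝ)⁻¹)^(k+1)) • sseq k) - w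
          = -(((2:ℝ)⁻¹)^M • wseq M) := by
        rw [← this]; abel
      rw [he, nd.nm_neg, nd.hsmul, abs_of_pos (hpow_pos M)]
      have h1 : nd.nm (wseq M) ≤ nd.nm v + nd.nm (wseq M - v) := nd.nm_le_add _ _
      have h2 := (hinv M).2
      have h3 : nd.nm (wseq M - v) ≤ ρ := by nlinarith [hpow_pos (M+1)]
      nlinarith [hpow_pos M]
    -- the normalized sequences
    set DK : ℕ → ℝ := fun K => 1 - ((2:ℝ)⁻¹)^(K+1) with hDK_def
    have hDKpos : ∀ K, (0:ℝ) < DK K := by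
      intro K
      have : ((2:ℝ)⁻¹)^(K+1) ≤ 2⁻¹ := by
        calc ((2:ℝ)⁻¹)^(K+1) ≤ ((2:ℝ)⁻¹)^1 :=
              pow_le_pow_of_le_one (by norm_num) (by norm_num) (by omega)
          _ = 2⁻¹ := pow_one _
      simp only [hDK_def]
      linarith
    have hDKhalf : ∀ K, (2:ℝ)⁻¹ ≤ DK K := by
      intro K
      have : ((2:ℝ)⁻¹)^(K+1) ≤ 2⁻¹ := by
        calc ((2:ℝ)⁻¹)^(K+1) ≤ ((2:ℝ)⁻¹)^1 :=
              pow_le_pow_of_le_one (by norm_num) (by norm_num) (by omega)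
          _ = 2⁻¹ := pow_one _
      simp only [hDK_def]; linarith
    have hDKsum : ∀ K, ∑ k ∈ Finset.range (K+1), ((2:ℝ)⁻¹)^(k+1) = DK K :=
      fun K => myGeomSumRange (K+1)
    have hinvdiff : ∀ K, |(DK K)⁻¹ - 1| ≤ ((2:ℝ)⁻¹)^K := by
      intro K
      have h1 := hDKpos K
      have h2 := hDKhalf K
      have h3 : (DK K)⁻¹ - 1 = (1 - DK K) / DK K := by
        rw [eq_div_iff (ne_of_gt h1), sub_mul, one_mul, inv_mul_cancel₀ (ne_of_gt h1)]
      have h4 : (1 : ℝ) - DK K = ((2:ℝ)⁻¹)^(K+1) := by simp [hDK_def]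
      rw [abs_of_nonneg (by
        rw [h3]
        exact div_nonneg (by rw [h4]; exact (hpow_pos (K+1)).le) h1.le)]
      rw [h3, div_le_iff₀ h1, h4, pow_succ]
      nlinarith [hpow_pos K]
    -- W K ∈ Ω and ψ (Q K) ≤ cR
    have hWmem : ∀ K, (DK K)⁻¹ • aseq (K+1) ∈ Ω := by
      intro K
      have hrw : (DK K)⁻¹ • aseq (K+1)
          = ∑ k ∈ Finset.range (K+1), ((DK K)⁻¹ * ((2:ℝ)⁻¹)^(k+1)) • ω k := by
        rw [haseq_def, Finset.smul_sum]
        simp only [smul_smul]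
      rw [hrw]
      refine hΩ.sum_mem
        (fun k _ => mul_nonneg (inv_nonneg.2 (hDKpos K).le) (hpow_pos (k+1)).le)
        ?_ (fun k _ => hωΩ k)
      rw [← Finset.mul_sum, hDKsum, inv_mul_cancel₀ (ne_of_gt (hDKpos K))]
    have hQψ : ∀ K, ψ ((DK K)⁻¹ • bseq (K+1)) ≤ (cR : EReal) := by
      intro K
      have hmem := Convex.sum_mem (t := Finset.range (K+1))
        (w := fun k => (DK K)⁻¹ * ((2:ℝ)⁻¹)^(k+1))
        (z := fun k => ((ω k + sseq k, cR) : Z × ℝ)) hψ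
        (fun k _ => mul_nonneg (inv_nonneg.2 (hDKpos K).le) (hpow_pos (k+1)).le)
        (by rw [← Finset.mul_sum, hDKsum, inv_mul_cancel₀ (ne_of_gt (hDKpos K))])
        (fun k _ => hω3 k)
      have hfst : (∑ k ∈ Finset.range (K+1),
          ((DK K)⁻¹ * ((2:ℝ)⁻¹)^(k+1)) • ((ω k + sseq k, cR) : Z × ℝ)).1
          = (DK K)⁻¹ • bseq (K+1) := by
        rw [Prod.fst_sum, hbseq_def, Finset.smul_sum]
        simp only [Prod.smul_mk, smul_smul]
      have hsnd : (∑ k ∈ Finset.range (K+1),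
          ((DK K)⁻¹ * ((2:ℝ)⁻¹)^(k+1)) • ((ω k + sseq k, cR) : Z × ℝ)).2 = cR := by
        rw [Prod.snd_sum]
        simp only [Prod.smul_mk, smul_eq_mul]
        rw [← Finset.sum_mul, ← Finset.mul_sum, hDKsum,
          inv_mul_cancel₀ (ne_of_gt (hDKpos K)), one_mul]
      have := hmem
      rw [Set.mem_setOf_eq, hfst, hsnd] at this
      exact this
    -- limits
    have hWlim : Filter.Tendsto (fun K => (DK K)⁻¹ • aseq (K+1)) Filter.atTop (nhds ωlim) := by
      rw [nd.tendsto_iff]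
      intro ε hε
      obtain ⟨N₁, hN₁⟩ := hωa (ε/2) (by linarith)
      obtain ⟨N₂, hN₂⟩ := exists_pow_lt_of_lt_one
        (div_pos (by linarith : (0:ℝ) < ε/2) (by linarith : (0:ℝ) < cR + 1))
        (by norm_num : (2:ℝ)⁻¹ < 1)
      refine ⟨max N₁ N₂, fun K hK => ?_⟩
      have hK1 : N₁ ≤ K + 1 := le_trans (le_max_left _ _) (le_trans hK (by omega))
      have hK2 : N₂ ≤ K := le_trans (le_max_right _ _) hK
      have hdiff : (DK K)⁻¹ • aseq (K+1) - ωlim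
          = ((DK K)⁻¹ - 1) • aseq (K+1) + (aseq (K+1) - ωlim) := by
        rw [sub_smul, one_smul]; abel
      rw [hdiff]
      have ht1 : nd.nm (((DK K)⁻¹ - 1) • aseq (K+1)) ≤ ((2:ℝ)⁻¹)^K * cR := by
        rw [nd.hsmul]
        have := mul_le_mul (hinvdiff K) (hanorm (K+1)) (nd.nm_nonneg _) (hpow_pos K).le
        exact this
      have ht2 : nd.nm (aseq (K+1) - ωlim) < ε/2 := by
        simp only [haseq_def]
        exact hN₁ (K+1) hK1
      have ht3 : ((2:ℝ)⁻¹)^K * cR < ε/2 := by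
        have h4 : ((2:ℝ)⁻¹)^K ≤ ((2:ℝ)⁻¹)^N₂ :=
          pow_le_pow_of_le_one (by norm_num) (by norm_num) hK2
        have h6 := (lt_div_iff₀ (by linarith : (0:ℝ) < cR + 1)).1 hN₂
        nlinarith [mul_le_mul_of_nonneg_right h4 hcRnn, hpow_pos N₂]
      refine lt_of_le_of_lt (nd.tri _ _) ?_
      linarith
    have hωlimΩ : ωlim ∈ Ω := hΩc.mem_of_tendsto hWlim
      (Filter.Eventually.of_forall (fun K => hWmem K))
    have hQlim : Filter.Tendsto (fun K => (DK K)⁻¹ • bseq (K+1)) Filter.atTop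
        (nhds (ωlim + w)) := by
      rw [nd.tendsto_iff]
      intro ε hε
      obtain ⟨N₁, hN₁⟩ := hωa (ε/3) (by linarith)
      obtain ⟨N₂, hN₂⟩ := exists_pow_lt_of_lt_one
        (div_pos (by linarith : (0:ℝ) < ε/3) (by nlinarith [nd.nm_nonneg v] : (0:ℝ) < cR + nd.nm v + ρ + 1))
        (by norm_num : (2:ℝ)⁻¹ < 1)
      refine ⟨max N₁ N₂, fun K hK => ?_⟩
      have hK1 : N₁ ≤ K + 1 := le_trans (le_max_left _ _) (le_trans hK (by omega))
      have hK2 : N₂ ≤ K := le_trans (le_max_right _ _) hK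
      have hpw : ((2:ℝ)⁻¹)^K < (ε/3) / (cR + nd.nm v + ρ + 1) := by
        have h4 : ((2:ℝ)⁻¹)^K ≤ ((2:ℝ)⁻¹)^N₂ :=
          pow_le_pow_of_le_one (by norm_num) (by norm_num) hK2
        linarith
      have hdiff : (DK K)⁻¹ • bseq (K+1) - (ωlim + w)
          = ((DK K)⁻¹ - 1) • bseq (K+1) + (aseq (K+1) - ωlim)
            + ((∑ k ∈ Finset.range (K+1), (((2:ℝ)⁻¹)^(k+1)) • sseq k) - w) := by
        rw [sub_smul, one_smul, hbsplit (K+1)]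
        abel
      rw [hdiff]
      have ht1 : nd.nm (((DK K)⁻¹ - 1) • bseq (K+1)) ≤ ((2:ℝ)⁻¹)^K * cR := by
        rw [nd.hsmul]
        exact mul_le_mul (hinvdiff K) (hbnorm (K+1)) (nd.nm_nonneg _) (hpow_pos K).le
      have ht2 : nd.nm (aseq (K+1) - ωlim) < ε/3 := by
        simp only [haseq_def]; exact hN₁ (K+1) hK1
      have ht3 := hsw (K+1)
      have hvnn := nd.nm_nonneg v
      have ht4 : ((2:ℝ)⁻¹)^(K+1) * (nd.nm v + ρ) ≤ ((2:ℝ)⁻¹)^K * (nd.nm v + ρ) := by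
        have : ((2:ℝ)⁻¹)^(K+1) ≤ ((2:ℝ)⁻¹)^K :=
          pow_le_pow_of_le_one (by norm_num) (by norm_num) (by omega)
        nlinarith
      have hKb : ((2:ℝ)⁻¹)^K * cR + ((2:ℝ)⁻¹)^K * (nd.nm v + ρ) < 2*ε/3 := by
        have h6 := (lt_div_iff₀ (by nlinarith [nd.nm_nonneg v] :
          (0:ℝ) < cR + nd.nm v + ρ + 1)).1 hpw
        nlinarith [hpow_pos K]
      refine lt_of_le_of_lt (nd.tri _ _) ?_
      have htr2 := nd.tri (((DK K)⁻¹ - 1) • bseq (K+1)) (aseq (K+1) - ωlim)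
      linarith
    -- lower semicontinuity
    have hψlim : ψ (ωlim + w) ≤ (cR : EReal) := by
      by_contra hgt
      push_neg at hgt
      have hev := hlsc (ωlim + w) (cR : EReal) hgt
      obtain ⟨K, hK⟩ := (hQlim.eventually hev).exists
      exact absurd (hQψ K) (not_le.2 hK)
    exact le_trans (hh_le w ωlim hωlimΩ) hψlim
  -- ====== transfer bound to a neighborhood of 0 ======
  have hnegvP : -v ∈ posSpan (domE ψ - Ω) := by
    rw [hL]
    exact Submodule.neg_mem L hvL
  obtain ⟨t, ht, v₁, hv₁, hveq⟩ := hnegvP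
  have hv₁eq : v₁ = t⁻¹ • (-v) := by
    rw [hveq, smul_smul, inv_mul_cancel₀ (ne_of_gt ht), one_smul]
  obtain ⟨d, hd, w1, hw1, hdw⟩ := hv₁
  have hhv₁ : h v₁ ≤ ψ d := by
    have he : w1 + v₁ = d := by rw [← hdw]; module
    have := hh_le v₁ w1 hw1
    rwa [he] at this
  obtain ⟨t₀, ht₀0, ht₀⟩ := exists_real_ge (ψ d) hd
  have hv₁t₀ : h v₁ ≤ (t₀ : EReal) := le_trans hhv₁ ht₀
  set σ : ℝ := t⁻¹ with hσ_def
  have hσ : 0 < σ := inv_pos.2 ht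
  have hσ1 : (0:ℝ) < σ + 1 := by linarith
  set δ : ℝ := (ρ/2) * (σ/(σ+1)) with hδ_def
  have hδpos : 0 < δ := by
    rw [hδ_def]; exact mul_pos (by linarith) (div_pos hσ hσ1)
  set Kb : ℝ := (σ/(σ+1)) * cR + (1/(σ+1)) * t₀ with hKb_def
  have hbound0 : ∀ u : Z, u ∈ (L : Set Z) → nd.nm u < δ → h u ≤ (Kb : EReal) := by
    intro u huL hu
    set p₁ : Z := v + ((σ+1)/σ) • u with hp₁_def
    have hp₁L : p₁ ∈ (L : Set Z) := L.add_mem hvL (L.smul_mem _ huL)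
    have hp₁v : nd.nm (p₁ - v) < ρ/2 := by
      have he : p₁ - v = ((σ+1)/σ) • u := by rw [hp₁_def]; abel
      rw [he, nd.hsmul, abs_of_pos (div_pos hσ1 hσ)]
      have h2 : ((σ+1)/σ) * nd.nm u < ((σ+1)/σ) * δ :=
        (mul_lt_mul_iff_right₀ (div_pos hσ1 hσ)).2 hu
      have h3 : ((σ+1)/σ) * δ = ρ/2 := by
        rw [hδ_def]; field_simp
      linarith
    have h1 := hh_bound p₁ hp₁L hp₁v
    have hcombo := hJ p₁ v₁ cR t₀ (σ/(σ+1)) (1/(σ+1)) h1 hv₁t₀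
      (div_pos hσ hσ1).le (one_div_pos.2 hσ1).le (by field_simp)
    have hueq : (σ/(σ+1)) • p₁ + (1/(σ+1)) • v₁ = u := by
      rw [hp₁_def, hv₁eq]
      have hσne : σ ≠ 0 := ne_of_gt hσ
      have hσ1ne : σ + 1 ≠ 0 := ne_of_gt hσ1
      match_scalars <;> field_simp <;> ring
    rwa [hueq] at hcombo
  -- ====== separation on the subspace L ======
  have hconvL : ConvexE (fun u : ↥L => h (u : Z)) := by
    intro p hp q hq a b ha hb hab
    simp only [Set.mem_setOf_eq] at hp hq ⊢
    have hmain := hJ (p.1 : Z) (q.1 : Z) p.2 q.2 a b hp hq ha hb hab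
    have hval : (((a • p + b • q).1 : ↥L) : Z) = a • (p.1 : Z) + b • (q.1 : Z) := by
      simp [Prod.fst_add, Prod.smul_fst]
    have hsnd : ((a • p + b • q).2 : ℝ) = a * p.2 + b * q.2 := by
      simp [Prod.snd_add, Prod.smul_snd, smul_eq_mul]
    rw [hval, hsnd]
    exact hmain
  have hU'open : IsOpen {u : ↥L | nd.nm (u : Z) < δ} := by
    have h1 : IsOpen {z : Z | nd.nm (z - 0) < δ} := nd.ball_open 0 δ
    have h2 : IsOpen (Subtype.val ⁻¹' {z : Z | nd.nm (z - 0) < δ} : Set ↥L) :=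
      h1.preimage continuous_subtype_val
    convert h2 using 1
    ext u
    simp
  obtain ⟨ζL, hζL1, _⟩ := sep_core (fun u : ↥L => h (u : Z)) hconvL
    ({0} : Set ↥L) (convex_singleton 0)
    0 rfl (by simp only [ZeroMemClass.coe_zero]; exact hh0)
    (by
      rintro w hw
      rw [Set.mem_singleton_iff] at hw
      subst hw
      simp only [ZeroMemClass.coe_zero]
      exact hh0.ge)
    0 rfl {u : ↥L | nd.nm (u : Z) < δ} hU'open
    (by simp [nd.nm_zero, hδpos])
    Kb (fun u hu => hbound0 (u : Z) u.2 hu)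
  have hζLle : ∀ u : ↥L, ((ζL u : ℝ) : EReal) ≤ h (u : Z) := by
    intro u
    have := hζL1 u
    rwa [sub_zero] at this
  -- ====== operator bound for ζL ======
  obtain ⟨C, hC, hCb⟩ : ∃ C : ℝ, 0 < C ∧ ∀ u : ↥L, |ζL u| ≤ C * nd.nm (u : Z) := by
    have hcont : ContinuousAt ζL 0 := ζL.continuous.continuousAt
    have hnb : Metric.ball (0:ℝ) 1 ∈ nhds (ζL 0) := by
      rw [map_zero]; exact Metric.ball_mem_nhds _ one_pos
    have hpre := hcont.preimage_mem_nhds hnb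
    obtain ⟨Vo, hVsub, hVopen, hV0⟩ := mem_nhds_iff.1 hpre
    obtain ⟨W, hWopen, hWeq⟩ := isOpen_induced_iff.1 hVopen
    have h0W : (0:Z) ∈ W := by
      have h1 : (0 : ↥L) ∈ Subtype.val ⁻¹' W := by rw [hWeq]; exact hV0
      simpa using h1
    obtain ⟨ε, hε, hball⟩ := (nd.open_iff W).1 hWopen 0 h0W
    refine ⟨2/ε, div_pos (by norm_num) hε, ?_⟩
    intro u
    by_cases h0 : (u : Z) = 0
    · have hu0 : u = 0 := Subtype.ext h0
      rw [hu0, map_zero]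
      simp [nd.nm_zero]
    · have hnm0 : 0 < nd.nm (u : Z) := by
        rcases lt_or_eq_of_le (nd.nm_nonneg (u : Z)) with hlt | heq
        · exact hlt
        · exact absurd ((nd.eq_zero _).1 heq.symm) h0
      set τ : ℝ := ε / (2 * nd.nm (u : Z)) with hτ_def
      have hτpos : 0 < τ := div_pos hε (by linarith)
      have hmemW : ((τ • u : ↥L) : Z) ∈ W := by
        apply hball
        rw [sub_zero]
        have hcs : ((τ • u : ↥L) : Z) = τ • (u : Z) := rfl
        rw [hcs, nd.hsmul, abs_of_pos hτpos, hτ_def]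
        have he : ε / (2 * nd.nm (u : Z)) * nd.nm (u : Z) = ε / 2 := by
          field_simp
        rw [he]
        linarith
      have hmemV : (τ • u) ∈ Vo := by
        rw [← hWeq]
        exact hmemW
      have h3 := hVsub hmemV
      rw [Set.mem_preimage, map_smul, smul_eq_mul, Metric.mem_ball, dist_zero_right,
        Real.norm_eq_abs, abs_mul, abs_of_pos hτpos] at h3
      rw [hτ_def, div_mul_eq_mul_div, div_lt_one (by linarith)] at h3
      have h4 : |ζL u| < 2 * nd.nm (u : Z) / ε := by
        rw [lt_div_iff₀ hε]
        linarith
      have h5 : 2 * nd.nm (u : Z) / ε = 2/ε * nd.nm (u : Z) := by ring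
      linarith [h4, h5.le]
  -- ====== Hahn-Banach extension ======
  obtain ⟨g, hg1, hg2⟩ := exists_extension_of_le_sublinear ⟨L, ζL.toLinearMap⟩
    (fun z => C * nd.nm z)
    (fun c hc x => by
      rw [nd.hsmul, abs_of_pos hc]; ring)
    (fun x y => by
      have h1 := mul_le_mul_of_nonneg_left (nd.tri x y) hC.le
      rw [mul_add] at h1
      linarith)
    (fun x => le_trans (le_abs_self _) (hCb x))
  have hgabs : ∀ z : Z, |g z| ≤ C * nd.nm z := by
    intro z
    rw [abs_le]
    constructor
    · have := hg2 (-z)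
      rw [map_neg, nd.nm_neg] at this
      linarith
    · exact hg2 z
  have hgcont : Continuous g := by
    rw [continuous_def]
    intro s hs
    rw [nd.open_iff]
    intro z hz
    obtain ⟨ε, hε, hball⟩ := Metric.isOpen_iff.1 hs (g z) hz
    refine ⟨ε / C, div_pos hε hC, fun y hy => ?_⟩
    apply hball
    rw [Metric.mem_ball, Real.dist_eq]
    have h1 : g y - g z = g (y - z) := by rw [map_sub]
    rw [h1]
    calc |g (y - z)| ≤ C * nd.nm (y - z) := hgabs _
      _ < C * (ε / C) := (mul_lt_mul_iff_right₀ hC).2 hy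
      _ = ε := by field_simp
  set ζ : Z →L[ℝ] ℝ := ⟨g, hgcont⟩ with hζ_def
  have hζh : ∀ u : Z, ((ζ u : ℝ) : EReal) ≤ h u := by
    intro u
    by_cases huL : u ∈ L
    · have he : g u = ζL ⟨u, huL⟩ := hg1 ⟨u, huL⟩
      show ((g u : ℝ) : EReal) ≤ h u
      rw [he]
      exact hζLle ⟨u, huL⟩
    · have he : h u = ⊤ := by
        by_contra hne
        exact huL (hh_domL u hne)
      rw [he]
      exact le_top
  refine ⟨ζ, ?_, ?_⟩
  · intro z
    refine le_trans (hζh (z - zb)) ?_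
    have := hh_le (z - zb) zb hzb
    have he : zb + (z - zb) = z := by abel
    rwa [he] at this
  · intro w hw
    have h1 := hζh (zb - w)
    have h2 : h (zb - w) ≤ ψ zb := by
      have := hh_le (zb - w) w hw
      have he : w + (zb - w) = zb := by abel
      rwa [he] at this
    rw [hψzb] at h2
    have h3 : ((ζ (zb - w) : ℝ) : EReal) ≤ ((0:ℝ) : EReal) := by
      rw [EReal.coe_zero]
      exact le_trans h1 h2
    have h4 : ζ (zb - w) ≤ 0 := EReal.coe_le_coe_iff.1 h3
    have h5 : ζ (w - zb) = - ζ (zb - w) := by rw [← map_neg, neg_sub]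
    rw [h5]
    linarith




-- ================= EReal helpers for affine shifts =================

lemma ereal_add_coe_le_coe_iff (a : EReal) (c t : ℝ) :
    a + (c : EReal) ≤ (t : EReal) ↔ a ≤ ((t - c : ℝ) : EReal) := by
  rw [EReal.coe_sub]
  exact (EReal.le_sub_iff_add_le (Or.inl (EReal.coe_ne_bot _))
    (Or.inl (EReal.coe_ne_top _))).symm

lemma ereal_coe_le_add_coe_iff (a : EReal) (c t : ℝ) :
    (t : EReal) ≤ a + (c : EReal) ↔ ((t - c : ℝ) : EReal) ≤ a := by
  rw [EReal.coe_sub]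
  exact (EReal.sub_le_iff_le_add (Or.inl (EReal.coe_ne_bot _))
    (Or.inl (EReal.coe_ne_top _))).symm

lemma ereal_coe_le_sub_coe_iff (a : EReal) (c t : ℝ) :
    (t : EReal) ≤ a - (c : EReal) ↔ ((t + c : ℝ) : EReal) ≤ a := by
  rw [EReal.coe_add]
  exact EReal.le_sub_iff_add_le (Or.inl (EReal.coe_ne_bot _)) (Or.inl (EReal.coe_ne_top _))

lemma ereal_add_coe_eq_top_iff (a : EReal) (c : ℝ) : a + (c : EReal) = ⊤ ↔ a = ⊤ := by
  induction a using EReal.rec with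
  | bot => simp
  | coe r => simp [← EReal.coe_add]
  | top => simp

lemma lsc_add_cont {Z : Type*} [TopologicalSpace Z] (f : Z → EReal)
    (hf : LowerSemicontinuous f) (g : Z → ℝ) (hg : Continuous g) :
    LowerSemicontinuous (fun z => f z + (g z : EReal)) := by
  intro x b hb
  obtain ⟨y, hy1, hy2⟩ := EReal.exists_between_coe_real hb
  have h1 : ((y - g x : ℝ) : EReal) < f x := by
    by_contra hcon
    push_neg at hcon
    have h2 : f x + (g x : EReal) ≤ ((y - g x : ℝ) : EReal) + (g x : EReal) :=
      add_le_add_left hcon _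
    rw [← EReal.coe_add] at h2
    have h3 : (y - g x + g x : ℝ) = y := by ring
    rw [h3] at h2
    exact absurd (lt_of_lt_of_le hy2 h2) (lt_irrefl _)
  obtain ⟨γ, hγ1, hγ2⟩ := EReal.exists_between_coe_real h1
  have hγy : y - g x < γ := EReal.coe_lt_coe_iff.1 hγ1
  set η : ℝ := γ - (y - g x) with hη_def
  have hηpos : 0 < η := by rw [hη_def]; linarith
  have hev1 : ∀ᶠ z in nhds x, (γ : EReal) < f z := hf x (γ : EReal) hγ2
  have hev2 : ∀ᶠ z in nhds x, g x - η < g z :=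
    (hg.tendsto x).eventually (eventually_gt_nhds (by linarith : g x - η < g x))
  filter_upwards [hev1, hev2] with z h1z h2z
  have hkey : ((γ + (g x - η) : ℝ) : EReal) < f z + (g z : EReal) := by
    rw [EReal.coe_add]
    calc (γ : EReal) + ((g x - η : ℝ) : EReal)
        < f z + ((g x - η : ℝ) : EReal) := EReal.add_lt_add_right_coe h1z _
      _ ≤ f z + (g z : EReal) := add_le_add_right (EReal.coe_le_coe_iff.2 h2z.le) _
  have hyγ : (γ + (g x - η) : ℝ) = y := by rw [hη_def]; ring
  rw [hyγ] at hkey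
  exact lt_trans hy1 hkey

-- ================= the combined splitting lemma =================

lemma main_split {Z : Type*} [AddCommGroup Z] [Module ℝ Z] [TopologicalSpace Z]
    [IsTopologicalAddGroup Z] [ContinuousSMul ℝ Z]
    (f : Z → EReal) (hf : ConvexE f) (Ω : Set Z) (hΩ : Convex ℝ Ω)
    (zb : Z) (hzb : zb ∈ Ω) (rb : ℝ) (hfzb : f zb = (rb : EReal))
    (ℓ0 : Z →L[ℝ] ℝ) (hℓ0 : ∀ z ∈ Ω, ((ℓ0 (z - zb) : ℝ) : EReal) ≤ f z - f zb)
    (hcase : (∃ z0 ∈ Ω, f z0 ≠ ⊤ ∧ ContinuousAt f z0) ∨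
      (∃ _nd : BD Z, LowerSemicontinuous f ∧ IsClosed Ω ∧
        ∃ L : Submodule ℝ Z, IsClosed (L : Set Z) ∧
          posSpan (domE f - Ω) = (L : Set Z))) :
    ∃ ζ : Z →L[ℝ] ℝ, (∀ z, ((ζ (z - zb) : ℝ) : EReal) ≤ f z - f zb) ∧
      ∀ w ∈ Ω, ℓ0 (w - zb) ≤ ζ (w - zb) := by
  classical
  set ψ : Z → EReal := fun z => f z + ((- rb - ℓ0 (z - zb) : ℝ) : EReal) with hψ_def
  have hmem : ∀ (z : Z) (t : ℝ),
      ψ z ≤ (t : EReal) ↔ f z ≤ ((t + rb + ℓ0 (z - zb) : ℝ) : EReal) := by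
    intro z t
    rw [hψ_def]
    simp only
    rw [ereal_add_coe_le_coe_iff]
    have he : (t - (- rb - ℓ0 (z - zb)) : ℝ) = t + rb + ℓ0 (z - zb) := by ring
    rw [he]
  have hmemg : ∀ (z : Z) (t : ℝ),
      (t : EReal) ≤ ψ z ↔ ((t + rb + ℓ0 (z - zb) : ℝ) : EReal) ≤ f z := by
    intro z t
    rw [hψ_def]
    simp only
    rw [ereal_coe_le_add_coe_iff]
    have he : (t - (- rb - ℓ0 (z - zb)) : ℝ) = t + rb + ℓ0 (z - zb) := by ring
    rw [he]
  have hψconv : ConvexE ψ := by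
    intro p hp q hq a b ha hb hab
    simp only [Set.mem_setOf_eq] at hp hq ⊢
    rw [hmem _ _] at hp hq
    have hp' : ((p.1, p.2 + rb + ℓ0 (p.1 - zb)) : Z × ℝ)
        ∈ {r : Z × ℝ | f r.1 ≤ (r.2 : EReal)} := hp
    have hq' : ((q.1, q.2 + rb + ℓ0 (q.1 - zb)) : Z × ℝ)
        ∈ {r : Z × ℝ | f r.1 ≤ (r.2 : EReal)} := hq
    have hcomb := hf hp' hq' ha hb hab
    simp only [Prod.smul_mk, Prod.mk_add_mk, Set.mem_setOf_eq, smul_eq_mul] at hcomb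
    have hgoal := (hmem (a • p + b • q).1 (a • p + b • q).2).2
    simp only [Prod.fst_add, Prod.smul_fst, Prod.snd_add, Prod.smul_snd, smul_eq_mul]
      at hgoal ⊢
    apply hgoal
    have hvec : (a • p.1 + b • q.1 : Z) - zb = a • (p.1 - zb) + b • (q.1 - zb) := by
      match_scalars <;> linarith
    have hlin : ℓ0 (a • p.1 + b • q.1 - zb) = a * ℓ0 (p.1 - zb) + b * ℓ0 (q.1 - zb) := by
      rw [hvec, map_add, map_smul, map_smul, smul_eq_mul, smul_eq_mul]
    have heq : a * (p.2 + rb + ℓ0 (p.1 - zb)) + b * (q.2 + rb + ℓ0 (q.1 - zb))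
        = a * p.2 + b * q.2 + rb + ℓ0 (a • p.1 + b • q.1 - zb) := by
      rw [hlin]
      linear_combination rb * hab
    refine le_trans hcomb (le_of_eq ?_)
    exact_mod_cast congrArg (fun r : ℝ => (r : EReal)) heq
  have hψzb0 : ψ zb = 0 := by
    rw [hψ_def]
    simp only [sub_self, map_zero, hfzb]
    rw [← EReal.coe_add]
    norm_num
  have hψpos : ∀ w ∈ Ω, (0 : EReal) ≤ ψ w := by
    intro w hw
    have h1 := hℓ0 w hw
    rw [hfzb] at h1
    rw [ereal_coe_le_sub_coe_iff] at h1
    have h2 := (hmemg w 0).2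
    rw [EReal.coe_zero] at h2
    apply h2
    have he : (0 + rb + ℓ0 (w - zb) : ℝ) = ℓ0 (w - zb) + rb := by ring
    rw [he]
    exact h1
  have hζ' : ∃ ζ' : Z →L[ℝ] ℝ, (∀ z : Z, ((ζ' (z - zb) : ℝ) : EReal) ≤ ψ z) ∧
      ∀ w ∈ Ω, 0 ≤ ζ' (w - zb) := by
    rcases hcase with ⟨z0, hz0, hz0top, hz0cont⟩ | ⟨nd, hlscf, hΩc, L, hLc, hLeq⟩
    · obtain ⟨c, hc1, _⟩ := EReal.exists_between_coe_real (lt_top_iff_ne_top.2 hz0top)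
      have hU1 : f ⁻¹' (Set.Iio (c : EReal)) ∈ nhds z0 :=
        hz0cont.preimage_mem_nhds (isOpen_Iio.mem_nhds hc1)
      have hgcont : Continuous (fun z : Z => ℓ0 (z - zb)) :=
        ℓ0.continuous.comp (continuous_id.sub continuous_const)
      have hU2 : (fun z : Z => ℓ0 (z - zb)) ⁻¹'
          (Set.Ioo (ℓ0 (z0 - zb) - 1) (ℓ0 (z0 - zb) + 1)) ∈ nhds z0 :=
        hgcont.continuousAt.preimage_mem_nhds (isOpen_Ioo.mem_nhds (by
          constructor <;> simp <;> norm_num))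
      obtain ⟨O, hOsub, hOopen, hz0O⟩ := mem_nhds_iff.1 (Filter.inter_mem hU1 hU2)
      set m : ℝ := c - rb - ℓ0 (z0 - zb) + 1 with hm_def
      have hbdd : ∀ z ∈ O, ψ z ≤ (m : EReal) := by
        intro z hz
        obtain ⟨hz1, hz2⟩ := hOsub hz
        rw [hmem z m]
        have h1 : f z < (c : EReal) := hz1
        have h2 : ℓ0 (z0 - zb) - 1 < ℓ0 (z - zb) := hz2.1
        refine le_trans h1.le (EReal.coe_le_coe_iff.2 ?_)
        rw [hm_def]
        linarith
      exact sep_core ψ hψconv Ω hΩ zb hzb hψzb0 hψpos z0 hz0 O hOopen hz0O m hbdd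
    · have hlscψ : LowerSemicontinuous ψ := by
        rw [hψ_def]
        exact lsc_add_cont f hlscf _
          (continuous_const.sub (ℓ0.continuous.comp (continuous_id.sub continuous_const)))
      have hdom : domE ψ = domE f := by
        ext z
        simp only [domE, Set.mem_setOf_eq, hψ_def]
        rw [not_iff_not]
        exact ereal_add_coe_eq_top_iff _ _
      refine case2_split nd ψ hψconv hlscψ Ω hΩ hΩc zb hzb hψzb0 hψpos L hLc ?_
      rw [hdom]
      exact hLeq
  obtain ⟨ζ', hζ'1, hζ'2⟩ := hζ'
  refine ⟨ζ' + ℓ0, ?_, ?_⟩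
  · intro z
    have h1 := hζ'1 z
    rw [hψ_def] at h1
    simp only at h1
    rw [ereal_coe_le_add_coe_iff] at h1
    rw [hfzb, ereal_coe_le_sub_coe_iff]
    have he : (ζ' (z - zb) - (- rb - ℓ0 (z - zb)) : ℝ)
        = (ζ' + ℓ0) (z - zb) + rb := by
      simp only [ContinuousLinearMap.add_apply]
      ring
    rw [← he]
    exact h1
  · intro w hw
    have := hζ'2 w hw
    simp only [ContinuousLinearMap.add_apply]
    linarith


-- ================= the main theorem =================

noncomputable def IsBanach.toBD {X : Type*} [AddCommGroup X] [Module ℝ X]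
    [TopologicalSpace X] (h : IsBanach X) : BD X :=
  ⟨h.choose, h.choose_spec.1, h.choose_spec.2.1, h.choose_spec.2.2.1,
    h.choose_spec.2.2.2.1, h.choose_spec.2.2.2.2⟩

/-- precise subdifferential calculation for the optimal value function
`μ(x) = inf{φ(x,y) : y ∈ F(x)}`: for `ȳ ∈ M(x̄)`,
`∂μ(x̄) = ⋃_{(x*,y*) ∈ ∂φ(x̄,ȳ)} [x* + D*F(x̄,ȳ)(y*)]`, under a continuity or
Banach/closedness qualification condition. -/
theorem subdifferential_optimal_value_function
    {X Y : Type*} [AddCommGroup X] [Module ℝ X] [TopologicalSpace X]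
    [IsTopologicalAddGroup X] [ContinuousSMul ℝ X] [LocallyConvexSpace ℝ X] [T2Space X]
    [AddCommGroup Y] [Module ℝ Y] [TopologicalSpace Y]
    [IsTopologicalAddGroup Y] [ContinuousSMul ℝ Y] [LocallyConvexSpace ℝ Y] [T2Space Y]
    (φ : X × Y → EReal) (hφ : ConvexE φ)
    (F : X → Set Y) (hF : Convex ℝ (gphF F))
    (μ : X → EReal) (hμ : ∀ x, μ x = ⨅ y ∈ F x, φ (x, y))
    (hμbot : ∀ x, μ x > ⊥)
    (hcase :
      (∃ zb ∈ gphF F, φ zb ≠ ⊤ ∧ ContinuousAt φ zb) ∨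
      (IsBanach X ∧ IsBanach Y ∧ LowerSemicontinuous φ ∧ IsClosed (gphF F) ∧
        ∃ L : Submodule ℝ (X × Y), IsClosed (L : Set (X × Y)) ∧
          posSpan (domE φ - gphF F) = (L : Set (X × Y)))) :
    ∀ (xb : X) (yb : Y), yb ∈ F xb → μ xb = φ (xb, yb) →
      subdiffE μ xb
        = ⋃ pq ∈ subdiff2E φ (xb, yb),
            (fun r => pq.1 + r) '' coderivF F xb yb pq.2 := by
  intro xb yb hyF hmu_eq
  set zb : X × Y := (xb, yb) with hzb_def
  by_cases htop : φ zb = ⊤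
  · -- degenerate case : both sides are empty
    apply Set.eq_of_subset_of_subset
    · intro p hp
      exfalso
      have h1 := hp xb
      rw [hmu_eq, htop] at h1
      have hb : (⊤ : EReal) - ⊤ = ⊥ := by simp
      rw [hb] at h1
      exact EReal.coe_ne_bot _ (le_bot_iff.1 h1)
    · intro p hp
      exfalso
      simp only [Set.mem_iUnion] at hp
      obtain ⟨pq, hpq, _⟩ := hp
      have h1 := hpq zb
      rw [htop] at h1
      have hb : (⊤ : EReal) - ⊤ = ⊥ := by simp
      rw [hb] at h1
      exact EReal.coe_ne_bot _ (le_bot_iff.1 h1)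
  · -- nondegenerate case
    have hbot : φ zb ≠ ⊥ := by
      intro hb
      have h1 := hμbot xb
      rw [hmu_eq, hb] at h1
      exact absurd h1 (lt_irrefl _)
    set rb : ℝ := (φ zb).toReal with hrb_def
    have hrb : φ zb = (rb : EReal) := (EReal.coe_toReal htop hbot).symm
    apply Set.eq_of_subset_of_subset
    · -- ⊆ : the hard inclusion
      intro p hp
      set ℓ0 : (X × Y) →L[ℝ] ℝ := p.comp (ContinuousLinearMap.fst ℝ X Y) with hℓ0_def
      have hℓ0app : ∀ z : X × Y, ℓ0 (z - zb) = p (z.1 - xb) := fun z => rfl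
      have hℓ0cond : ∀ z ∈ gphF F, ((ℓ0 (z - zb) : ℝ) : EReal) ≤ φ z - φ zb := by
        intro z hz
        rw [hℓ0app]
        have h1 := hp z.1
        have h2 : μ z.1 ≤ φ z := by
          rw [hμ z.1]
          have h3 := iInf₂_le (f := fun y (_ : y ∈ F z.1) => φ (z.1, y)) z.2 hz
          simpa using h3
        refine le_trans h1 ?_
        rw [hmu_eq]
        exact EReal.sub_le_sub h2 le_rfl
      have hcase' : (∃ z0 ∈ gphF F, φ z0 ≠ ⊤ ∧ ContinuousAt φ z0) ∨
          (∃ _nd : BD (X × Y), LowerSemicontinuous φ ∧ IsClosed (gphF F) ∧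
            ∃ L : Submodule ℝ (X × Y), IsClosed (L : Set (X × Y)) ∧
              posSpan (domE φ - gphF F) = (L : Set (X × Y))) := by
        rcases hcase with h | ⟨hX, hY, hlsc, hclosed, L, hLc, hLeq⟩
        · exact Or.inl h
        · exact Or.inr ⟨BD.prod hX.toBD hY.toBD, hlsc, hclosed, L, hLc, hLeq⟩
      obtain ⟨ζ, hζ1, hζ2⟩ := main_split φ hφ (gphF F) hF zb hyF rb hrb ℓ0 hℓ0cond hcase'
      set pq : ((X →L[ℝ] ℝ) × (Y →L[ℝ] ℝ)) :=
        (ζ.comp (ContinuousLinearMap.inl ℝ X Y), ζ.comp (ContinuousLinearMap.inr ℝ X Y))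
        with hpq_def
      have hζsplit : ∀ z : X × Y, pq.1 (z.1 - xb) + pq.2 (z.2 - yb) = ζ (z - zb) := by
        intro z
        have h1 : ((z.1 - xb, (0:Y)) : X × Y) + (((0:X), z.2 - yb) : X × Y) = z - zb := by
          rw [Prod.mk_add_mk, add_zero, zero_add]
          rfl
        calc pq.1 (z.1 - xb) + pq.2 (z.2 - yb)
            = ζ (z.1 - xb, (0:Y)) + ζ ((0:X), z.2 - yb) := rfl
          _ = ζ (((z.1 - xb, (0:Y)) : X × Y) + (((0:X), z.2 - yb) : X × Y)) :=
              (map_add ζ _ _).symm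
          _ = ζ (z - zb) := by rw [h1]
      have hpqmem : pq ∈ subdiff2E φ zb := by
        intro z
        have h1 : pq.1 (z.1 - zb.1) + pq.2 (z.2 - zb.2) = ζ (z - zb) := hζsplit z
        rw [h1]
        exact hζ1 z
      set u : X →L[ℝ] ℝ := p - pq.1 with hu_def
      have humem : u ∈ coderivF F xb yb pq.2 := by
        intro x y hy
        have h2 := hζ2 (x, y) hy
        rw [hℓ0app (x,y)] at h2
        have h3 : ζ ((x,y) - zb) = pq.1 (x - xb) + pq.2 (y - yb) := (hζsplit (x,y)).symm
        rw [h3] at h2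
        simp only [hu_def, ContinuousLinearMap.sub_apply]
        linarith
      simp only [Set.mem_iUnion]
      refine ⟨pq, hpqmem, u, humem, ?_⟩
      show pq.1 + (p - pq.1) = p
      abel
    · -- ⊇ : the easy inclusion
      intro P hP
      simp only [Set.mem_iUnion] at hP
      obtain ⟨pq, hpq, u, hu, hPu⟩ := hP
      have hPeq : pq.1 + u = P := hPu
      intro x
      rw [hmu_eq, hrb]
      by_cases hμx : μ x = ⊤
      · rw [hμx, EReal.top_sub_coe]
        exact le_top
      · rw [← hPeq]
        rw [ereal_coe_le_sub_coe_iff, hμ x]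
        refine le_iInf fun y => le_iInf fun hy => ?_
        have h1 := hpq (x, y)
        rw [hrb, ereal_coe_le_sub_coe_iff] at h1
        have h2 := hu x y hy
        refine le_trans (EReal.coe_le_coe_iff.2 ?_) h1
        simp only [ContinuousLinearMap.add_apply]
        linarith
end

section
/- Let X and Y be separated locally convex topological vector spaces over the reals, let Y₊ ⊂ Y be a convex cone defining the order y₁ ≺ y₂ iff y₂ − y₁ ∈ Y₊, let f : X → Y be Y₊-convex, and let φ : Y → (−∞,∞] be convex and Y₊-nondecreasing. If there exist x ∈ X and y ∈ Y with f(x) ≺ y such that φ is finite and continuous at y, then for every x̄ ∈ dom(φ ∘ f): ∂(φ ∘ f)(x̄) = ⋃_{y* ∈ ∂φ(f(x̄))} ∂(y* ∘ f)(x̄). -/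
open Pointwise

set_option maxHeartbeats 2000000 in
/-- chain rule for nondecreasing compositions in ordered spaces: if
`Y₊ ⊂ Y` is a convex cone, `f : X → Y` is `Y₊`-convex, `φ : Y → (-∞,∞]` is convex and
`Y₊`-nondecreasing, and `φ` is finite and continuous at some `y` with `f(x) ≺ y`, then
`∂(φ ∘ f)(x̄) = ⋃_{y* ∈ ∂φ(f(x̄))} ∂(y* ∘ f)(x̄)` for all `x̄ ∈ dom (φ ∘ f)`. -/
theorem chain_rule_ordered_composition
    {X Y : Type*} [AddCommGroup X] [Module ℝ X] [TopologicalSpace X]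
    [IsTopologicalAddGroup X] [ContinuousSMul ℝ X] [LocallyConvexSpace ℝ X] [T2Space X]
    [AddCommGroup Y] [Module ℝ Y] [TopologicalSpace Y]
    [IsTopologicalAddGroup Y] [ContinuousSMul ℝ Y] [LocallyConvexSpace ℝ Y] [T2Space Y]
    (Yp : Set Y) (hYpconv : Convex ℝ Yp)
    (hYpcone : ∀ (c : ℝ), 0 < c → ∀ y ∈ Yp, c • y ∈ Yp)
    (f : X → Y)
    (hfconv : ∀ x u : X, ∀ l : ℝ, l ∈ Set.Ioo (0 : ℝ) 1 →
      (l • f x + (1 - l) • f u) - f (l • x + (1 - l) • u) ∈ Yp)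
    (φ : Y → EReal) (hφconv : ConvexE φ) (hφbot : ∀ y, φ y ≠ ⊥)
    (hφmono : ∀ y₁ y₂ : Y, y₂ - y₁ ∈ Yp → φ y₁ ≤ φ y₂)
    (hcont : ∃ (x : X) (y : Y), y - f x ∈ Yp ∧ φ y ≠ ⊤ ∧ ContinuousAt φ y) :
    ∀ xb : X, φ (f xb) ≠ ⊤ →
      subdiffE (fun x => φ (f x)) xb
        = ⋃ q ∈ subdiffE φ (f xb),
            subdiffE (fun x => ((q (f x) : ℝ) : EReal)) xb := by
  -- Preliminaries about the cone
  have hzero : (0 : Y) ∈ Yp := by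
    have h := hfconv 0 0 (1/2) (by constructor <;> norm_num)
    have e : ((1/2 : ℝ) • f 0 + (1 - 1/2 : ℝ) • f 0) - f ((1/2 : ℝ) • (0:X) + (1 - 1/2 : ℝ) • (0:X))
        = 0 := by
      rw [← add_smul]
      norm_num
    rwa [e] at h
  have hadd : ∀ u v : Y, u ∈ Yp → v ∈ Yp → u + v ∈ Yp := by
    intro u v hu hv
    have hmid : (1/2 : ℝ) • u + (1/2 : ℝ) • v ∈ Yp :=
      hYpconv hu hv (by norm_num) (by norm_num) (by norm_num)
    have h2 := hYpcone 2 (by norm_num) _ hmid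
    rwa [smul_add, smul_smul, smul_smul, show (2:ℝ)*(1/2) = 1 by norm_num, one_smul, one_smul] at h2
  obtain ⟨xs, ys, hys, hysT, hysC⟩ := hcont
  intro xb hbT
  have hbB : φ (f xb) ≠ ⊥ := hφbot _
  set a := (φ (f xb)).toReal with ha
  have haeq : ((a : ℝ) : EReal) = φ (f xb) := EReal.coe_toReal hbT hbB
  ext p
  simp only [Set.mem_iUnion]
  constructor
  · -- hard direction
    intro hp
    have hp' : ∀ x : X, ((p (x - xb) : ℝ) : EReal) ≤ φ (f x) - φ (f xb) := hp
    set cy := (φ ys).toReal with hcy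
    have hcyeq : ((cy : ℝ) : EReal) = φ ys := EReal.coe_toReal hysT (hφbot _)
    set E₁ : Set (Y × ℝ) := {z | φ z.1 < (z.2 : EReal)} with hE₁def
    set E₂ : Set (Y × ℝ) := {z | ∃ x : X, z.1 - f x ∈ Yp ∧ z.2 ≤ a + p (x - xb)} with hE₂def
    -- convexity of E₁
    have hE₁conv : Convex ℝ E₁ := by
      rintro ⟨y₁, r₁⟩ h₁ ⟨y₂, r₂⟩ h₂ l m hl hm hlm
      simp only [hE₁def, Set.mem_setOf_eq] at h₁ h₂
      rcases eq_or_lt_of_le hl with rfl | hl'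
      · have hm1 : m = 1 := by linarith
        simpa [hE₁def, hm1, Prod.smul_mk, Prod.mk_add_mk] using h₂
      rcases eq_or_lt_of_le hm with rfl | hm'
      · have hl1 : l = 1 := by linarith
        simpa [hE₁def, hl1, Prod.smul_mk, Prod.mk_add_mk] using h₁
      -- both positive
      have hT₁ : φ y₁ ≠ ⊤ := ne_top_of_lt h₁
      have hT₂ : φ y₂ ≠ ⊤ := ne_top_of_lt h₂
      set t₁ := (φ y₁).toReal
      set t₂ := (φ y₂).toReal
      have ht₁ : ((t₁ : ℝ) : EReal) = φ y₁ := EReal.coe_toReal hT₁ (hφbot _)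
      have ht₂ : ((t₂ : ℝ) : EReal) = φ y₂ := EReal.coe_toReal hT₂ (hφbot _)
      have ht₁r : t₁ < r₁ := by
        have := h₁; rw [← ht₁] at this; exact_mod_cast this
      have ht₂r : t₂ < r₂ := by
        have := h₂; rw [← ht₂] at this; exact_mod_cast this
      have hmem₁ : ((y₁, t₁) : Y × ℝ) ∈ {p : Y × ℝ | φ p.1 ≤ (p.2 : EReal)} := by
        simp only [Set.mem_setOf_eq]; rw [ht₁]
      have hmem₂ : ((y₂, t₂) : Y × ℝ) ∈ {p : Y × ℝ | φ p.1 ≤ (p.2 : EReal)} := by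
        simp only [Set.mem_setOf_eq]; rw [ht₂]
      have hcomb := hφconv hmem₁ hmem₂ hl hm hlm
      simp only [Set.mem_setOf_eq, Prod.smul_mk, Prod.mk_add_mk, smul_eq_mul] at hcomb
      simp only [hE₁def, Set.mem_setOf_eq, Prod.smul_mk, Prod.mk_add_mk, smul_eq_mul]
      refine lt_of_le_of_lt hcomb ?_
      have : l * t₁ + m * t₂ < l * r₁ + m * r₂ := by nlinarith
      exact_mod_cast this
    -- convexity of E₂
    have hE₂conv : Convex ℝ E₂ := by
      rintro ⟨y₁, r₁⟩ ⟨x₁, hx₁, hr₁⟩ ⟨y₂, r₂⟩ ⟨x₂, hx₂, hr₂⟩ l m hl hm hlm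
      rcases eq_or_lt_of_le hl with rfl | hl'
      · have hm1 : m = 1 := by linarith
        exact ⟨x₂, by simpa [hm1, Prod.smul_mk, Prod.mk_add_mk] using hx₂,
          by simpa [hm1, Prod.smul_mk, Prod.mk_add_mk] using hr₂⟩
      rcases eq_or_lt_of_le hm with rfl | hm'
      · have hl1 : l = 1 := by linarith
        exact ⟨x₁, by simpa [hl1, Prod.smul_mk, Prod.mk_add_mk] using hx₁,
          by simpa [hl1, Prod.smul_mk, Prod.mk_add_mk] using hr₁⟩
      refine ⟨l • x₁ + m • x₂, ?_, ?_⟩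
      · have hfc := hfconv x₁ x₂ l ⟨hl', by linarith⟩
        have hm'' : (1 : ℝ) - l = m := by linarith
        rw [hm''] at hfc
        have h1 : l • (y₁ - f x₁) ∈ Yp := hYpcone l hl' _ hx₁
        have h2 : m • (y₂ - f x₂) ∈ Yp := hYpcone m hm' _ hx₂
        have h3 := hadd _ _ (hadd _ _ h1 h2) hfc
        have e : l • (y₁ - f x₁) + m • (y₂ - f x₂) +
            ((l • f x₁ + m • f x₂) - f (l • x₁ + m • x₂))
            = (l • ((y₁, r₁) : Y × ℝ) + m • ((y₂, r₂) : Y × ℝ)).1 - f (l • x₁ + m • x₂) := by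
          simp only [Prod.smul_mk, Prod.mk_add_mk, smul_sub]
          abel
        rwa [e] at h3
      · have hxbeq : (l • x₁ + m • x₂) - xb = l • (x₁ - xb) + m • (x₂ - xb) := by
          have e : l • (x₁ - xb) + m • (x₂ - xb) = (l • x₁ + m • x₂) - (l + m) • xb := by
            rw [smul_sub, smul_sub, add_smul]; abel
          rw [e, hlm, one_smul]
        have hpval : p ((l • x₁ + m • x₂) - xb) = l * p (x₁ - xb) + m * p (x₂ - xb) := by
          rw [hxbeq, map_add, map_smul, map_smul, smul_eq_mul, smul_eq_mul]
        simp only [Prod.smul_mk, Prod.mk_add_mk, smul_eq_mul]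
        rw [hpval]
        have e1 : l * r₁ ≤ l * (a + p (x₁ - xb)) := mul_le_mul_of_nonneg_left hr₁ hl
        have e2 : m * r₂ ≤ m * (a + p (x₂ - xb)) := mul_le_mul_of_nonneg_left hr₂ hm
        have e3 : l * a + m * a = a := by rw [← add_mul, hlm, one_mul]
        nlinarith
    -- interior point of E₁
    have hV : φ ⁻¹' (Set.Iio (((cy + 1 : ℝ) : EReal))) ∈ nhds ys := by
      refine hysC.preimage_mem_nhds (Iio_mem_nhds ?_)
      rw [← hcyeq]; exact_mod_cast lt_add_one cy
    have hsub : interior (φ ⁻¹' (Set.Iio (((cy + 1 : ℝ) : EReal)))) ×ˢ Set.Ioi (cy + 1) ⊆ E₁ := by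
      rintro ⟨y, r⟩ ⟨hy, hr⟩
      have h1 : φ y < ((cy + 1 : ℝ) : EReal) := by
        have h := interior_subset hy; exact h
      exact h1.trans (by exact_mod_cast hr)
    have hline : ∀ r : ℝ, cy + 1 < r → ((ys, r) : Y × ℝ) ∈ interior E₁ := by
      intro r hr
      exact interior_maximal hsub (isOpen_interior.prod isOpen_Ioi)
        ⟨mem_interior_iff_mem_nhds.mpr hV, hr⟩
    have hz₀ : ((ys, cy + 2) : Y × ℝ) ∈ interior E₁ := hline _ (by linarith)
    -- disjointness
    have hdisj : Disjoint (interior E₁) E₂ := by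
      rw [Set.disjoint_left]
      rintro ⟨y, r⟩ hz1 ⟨x, hx, hr⟩
      have h1 : φ y < (r : EReal) := by
        have h := interior_subset hz1; exact h
      have h2 : φ (f x) ≤ φ y := hφmono _ _ hx
      have hfxT : φ (f x) ≠ ⊤ := ne_top_of_lt (lt_of_le_of_lt h2 h1)
      set t := (φ (f x)).toReal
      have hteq : ((t : ℝ) : EReal) = φ (f x) := EReal.coe_toReal hfxT (hφbot _)
      have h3 := hp' x
      rw [← hteq, ← haeq, ← EReal.coe_sub] at h3
      have h3' : p (x - xb) ≤ t - a := by exact_mod_cast h3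
      have h4 : ((t : ℝ) : EReal) < ((r : ℝ) : EReal) := by
        rw [hteq]; exact lt_of_le_of_lt h2 h1
      have h5 : t < r := by exact_mod_cast h4
      simp only at hr
      linarith
    -- separation
    obtain ⟨g, c, hgc1, hgc2⟩ :=
      geometric_hahn_banach_open hE₁conv.interior isOpen_interior hE₂conv hdisj
    set β := g (0, 1) with hβdef
    have hgsplit : ∀ (y : Y) (r : ℝ), g (y, r) = g (y, 0) + r * β := by
      intro y r
      have e : ((y, r) : Y × ℝ) = (y, 0) + r • ((0 : Y), (1 : ℝ)) := by
        simp [Prod.ext_iff]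
      rw [e, map_add, map_smul, smul_eq_mul]
    -- β < 0
    have hβle : β ≤ 0 := by
      by_contra h
      push_neg at h
      set r := max (cy + 2) ((c - g (ys, 0)) / β + 1) with hrdef
      have h1 : g (ys, r) < c := hgc1 _ (hline r ((by linarith : cy + 1 < cy + 2).trans_le (le_max_left _ _)))
      rw [hgsplit] at h1
      have h3 : (c - g (ys, 0)) / β + 1 ≤ r := le_max_right _ _
      have h4 : ((c - g (ys, 0)) / β) * β = c - g (ys, 0) := div_mul_cancel₀ _ (ne_of_gt h)
      have h5 : ((c - g (ys, 0)) / β + 1) * β ≤ r * β := mul_le_mul_of_nonneg_right h3 h.le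
      nlinarith
    have hβneg : β < 0 := by
      rcases lt_or_eq_of_le hβle with h | h
      · exact h
      · exfalso
        have h1 : g (ys, cy + 2) < c := hgc1 _ hz₀
        have h2 : c ≤ g (ys, a + p (xs - xb)) := hgc2 _ ⟨xs, hys, le_rfl⟩
        rw [hgsplit, h] at h1
        rw [hgsplit, h] at h2
        simp at h1 h2
        linarith
    -- g ≤ c on all of E₁
    have hA : ∀ z ∈ E₁, g z ≤ c := by
      intro z hz
      set G := g (ys, cy + 2) with hGdef
      set w := g z with hwdef
      have key : ∀ t : ℝ, 0 < t → t ≤ 1 → t * G + (1 - t) * w < c := by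
        intro t ht ht1
        have hmem : t • ((ys, cy + 2) : Y × ℝ) + (1 - t) • z ∈ interior E₁ :=
          hE₁conv.combo_interior_self_mem_interior hz₀ hz ht (by linarith) (by ring)
        have hgm := hgc1 _ hmem
        rwa [map_add, map_smul, map_smul, smul_eq_mul, smul_eq_mul] at hgm
      by_contra hcon
      push_neg at hcon
      have hGc : G < c := by
        have := key 1 one_pos le_rfl
        simpa using this
      have hwG : 0 < w - G := by linarith
      set t := (w - c) / (2 * (w - G)) with htdef
      have ht0 : 0 < t := div_pos (by linarith) (by linarith)
      have ht1 : t ≤ 1 := by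
        rw [htdef, div_le_one (by linarith)]
        linarith
      have hk := key t ht0 ht1
      have ht2 : t * (w - G) = (w - c) / 2 := by
        rw [htdef]; field_simp
      nlinarith
    -- g ≤ c on the closed epigraph points
    have hB : ∀ (y : Y) (t : ℝ), φ y = (t : EReal) → g (y, t) ≤ c := by
      intro y t hyt
      have hbpos : 0 < -β := by linarith
      have h : ∀ ε : ℝ, 0 < ε → g (y, t) ≤ c + ε := by
        intro ε hε
        have hmem : ((y, t + ε / (-β)) : Y × ℝ) ∈ E₁ := by
          show φ y < _
          rw [hyt]
          exact_mod_cast lt_add_of_pos_right t (div_pos hε hbpos)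
        have h2 := hA _ hmem
        rw [hgsplit] at h2
        rw [hgsplit]
        have e : (t + ε / (-β)) * β = t * β - ε := by
          field_simp
          rw [mul_add, mul_neg, mul_div_assoc', mul_comm β ε, mul_div_assoc, div_self hβneg.ne, mul_one]; ring
        linarith
      by_contra hcon
      push_neg at hcon
      have := h ((g (y, t) - c) / 2) (by linarith)
      linarith
    -- the multiplier q
    set q₀ : Y →L[ℝ] ℝ := g.comp (ContinuousLinearMap.inl ℝ Y ℝ) with hq₀def
    have hq₀app : ∀ y : Y, q₀ y = g (y, 0) := by
      intro y; simp [hq₀def]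
    set q : Y →L[ℝ] ℝ := (-β)⁻¹ • q₀ with hqdef
    have hqapp : ∀ y : Y, q y = (-β)⁻¹ * q₀ y := by
      intro y; simp [hqdef]
    have hbpos : 0 < -β := by linarith
    have hβne : β ≠ 0 := ne_of_lt hβneg
    -- c = g (f xb, a)
    have hc1 : g (f xb, a) ≤ c := hB _ _ haeq.symm
    have hc2 : c ≤ g (f xb, a) := by
      refine hgc2 _ ⟨xb, ?_, ?_⟩
      · show f xb - f xb ∈ Yp
        simpa using hzero
      · show a ≤ a + p (xb - xb)
        simp
    have hceq : c = g (f xb, a) := le_antisymm hc2 hc1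
    refine ⟨q, ?_, ?_⟩
    · -- q ∈ ∂φ(f xb)
      intro y
      rcases eq_or_ne (φ y) ⊤ with hT | hT
      · rw [hT, ← haeq, EReal.top_sub_coe]; exact le_top
      · set t := (φ y).toReal with htdef
        have hteq : ((t : ℝ) : EReal) = φ y := EReal.coe_toReal hT (hφbot _)
        have h1 := hB y t hteq.symm
        rw [hceq, hgsplit y t, hgsplit (f xb) a] at h1
        -- h1 : g(y,0) + t*β ≤ g(f xb,0) + a*β
        have hkey : q₀ y - q₀ (f xb) ≤ (t - a) * (-β) := by
          rw [hq₀app, hq₀app]; nlinarith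
        have h6 : (-β)⁻¹ * (q₀ y - q₀ (f xb)) ≤ t - a := by
          have h7 := mul_le_mul_of_nonneg_left hkey (inv_nonneg.mpr hbpos.le)
          have h8 : (-β)⁻¹ * ((t - a) * (-β)) = t - a := by
            field_simp
          linarith
        have h9 : q (y - f xb) ≤ t - a := by
          rw [hqapp, map_sub]; exact h6
        calc ((q (y - f xb) : ℝ) : EReal) ≤ ((t - a : ℝ) : EReal) := by exact_mod_cast h9
          _ = φ y - φ (f xb) := by rw [EReal.coe_sub, hteq, haeq]
    · -- p ∈ ∂(q ∘ f)(xb)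
      intro x
      have h2 := hgc2 (f x, a + p (x - xb)) ⟨x, by simpa using hzero, le_rfl⟩
      rw [hceq, hgsplit (f xb) a, hgsplit (f x) (a + p (x - xb))] at h2
      -- h2 : g(f xb,0) + a*β ≤ g(f x,0) + (a + p(x-xb))*β
      have hkey : p (x - xb) * (-β) ≤ q₀ (f x) - q₀ (f xb) := by
        rw [hq₀app, hq₀app]; nlinarith
      have h6 : p (x - xb) ≤ (-β)⁻¹ * (q₀ (f x) - q₀ (f xb)) := by
        have h7 := mul_le_mul_of_nonneg_left hkey (inv_nonneg.mpr hbpos.le)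
        have h8 : (-β)⁻¹ * (p (x - xb) * (-β)) = p (x - xb) := by
          field_simp
        linarith
      have h9 : p (x - xb) ≤ q (f x) - q (f xb) := by
        rw [hqapp, hqapp]; linarith [h6]
      calc ((p (x - xb) : ℝ) : EReal) ≤ ((q (f x) - q (f xb) : ℝ) : EReal) := by exact_mod_cast h9
        _ = ((q (f x) : ℝ) : EReal) - ((q (f xb) : ℝ) : EReal) := by rw [EReal.coe_sub]
  · -- easy direction
    rintro ⟨q, hq, hpq⟩ x
    have h1 : ((p (x - xb) : ℝ) : EReal) ≤ ((q (f x) : ℝ) : EReal) - ((q (f xb) : ℝ) : EReal) :=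
      hpq x
    have h2 : ((q (f x - f xb) : ℝ) : EReal) ≤ φ (f x) - φ (f xb) := hq (f x)
    rw [map_sub, EReal.coe_sub] at h2
    exact le_trans h1 h2
end
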